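/- arXiv:2106.01888 — 5 statements merged into one kernel-verified Lean document; each statement's English description precedes it below -/
import Mathlib

section
/- Let b : G × Ξ → ℂ be an almost periodic symbol with countable frequency set Θ (symmetric under inversion and containing the identity), and define for γ ∈ ℝ, l ≥ 0 the norm ⦀b⦀_l^{(γ)} := Σ_{θ∈Θ} ⟨θ⟩^l sup_{ξ∈Ξ} ⟨ξ⟩^{−γ} |b_θ(ξ)|. Then the operator B = Op(b), defined by B e_ξ = Σ_{θ∈Θ} b_θ(ξ) e_{θ▷ξ}, extends uniquely to a bounded linear operator H^β(Ξ) → H^{β−γ}(Ξ) with operator norm at most ⦀b⦀_{|β−γ|}^{(γ)}. -/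
noncomputable section

open scoped Classical

variable {G Ξ : Type*}

/-- The symbol norm `⦀b⦀_l^{(γ)} = Σ_θ ⟨θ⟩^l sup_ξ ⟨ξ⟩^{−γ} |b_θ(ξ)|`. -/
def snorm (w : Ξ → ℝ) (wG : G → ℝ) (b : G → Ξ → ℂ) (γ l : ℝ) : ℝ :=
  ∑' θ : G, wG θ ^ l * ⨆ ξ : Ξ, w ξ ^ (-γ) * ‖b θ ξ‖

/-- `b` is a symbol of order `γ`: all symbol norms `⦀b⦀_l^{(γ)}`, `l ≥ 0`, are finite. -/
def HasOrder (w : Ξ → ℝ) (wG : G → ℝ) (b : G → Ξ → ℂ) (γ : ℝ) : Prop :=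
  (∀ θ : G, BddAbove (Set.range fun ξ : Ξ => w ξ ^ (-γ) * ‖b θ ξ‖)) ∧
    ∀ l : ℝ, 0 ≤ l → Summable fun θ : G => wG θ ^ l * ⨆ ξ : Ξ, w ξ ^ (-γ) * ‖b θ ξ‖

/-- An almost periodic symbol with (countable, symmetric, unital) frequency set `Θ`. -/
def IsAPSymbol [Group G] (b : G → Ξ → ℂ) (Θ : Set G) : Prop :=
  Θ.Countable ∧ (1 : G) ∈ Θ ∧ (∀ θ ∈ Θ, θ⁻¹ ∈ Θ) ∧ ∀ g ∉ Θ, ∀ ξ : Ξ, b g ξ = 0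

/-- The action of the almost periodic operator `Op(b)`, `B e_ξ = Σ_θ b_θ(ξ) e_{θ▷ξ}`,
on a vector `x`, written out in coordinates. -/
def opApply [Group G] [MulAction G Ξ] (b : G → Ξ → ℂ) (x : Ξ → ℂ) : Ξ → ℂ :=
  fun η => ∑' θ : G, b θ (θ⁻¹ • η) * x (θ⁻¹ • η)

/-- The composed symbol `(a∘b)_θ(ξ) = Σ_{θ_a θ_b = θ} a_{θ_a}(θ_b ▷ ξ) b_{θ_b}(ξ)`. -/
def compSymb [Group G] [MulAction G Ξ] (a b : G → Ξ → ℂ) : G → Ξ → ℂ :=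
  fun θ ξ => ∑' h : G, a (θ * h⁻¹) (h • ξ) * b h ξ

/-- The commutator symbol `ad(A,B) = i(AB − BA)`. -/
def adSymb [Group G] [MulAction G Ξ] (a b : G → Ξ → ℂ) : G → Ξ → ℂ :=
  fun θ ξ => Complex.I * (compSymb a b θ ξ - compSymb b a θ ξ)

section Aux

lemma cs_aux {ι : Type*} (u v : ι → ℝ) (hu : ∀ i, 0 ≤ u i) (hv : ∀ i, 0 ≤ v i)
    (hsu : Summable u) (hsv : Summable fun i => u i * v i ^ 2)
    (hs : Summable fun i => u i * v i) :
    (∑' i, u i * v i) ^ 2 ≤ (∑' i, u i) * ∑' i, u i * v i ^ 2 := by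
  set A := ∑' i, u i with hA
  set B := ∑' i, u i * v i ^ 2 with hB
  have hA0 : 0 ≤ A := tsum_nonneg hu
  have hB0 : 0 ≤ B := tsum_nonneg fun i => mul_nonneg (hu i) (sq_nonneg _)
  have key : ∑' i, u i * v i ≤ Real.sqrt (A * B) := by
    refine Summable.tsum_le_of_sum_le hs fun s => ?_
    have h1 : (∑ i ∈ s, u i * v i) ^ 2 ≤ (∑ i ∈ s, u i) * ∑ i ∈ s, u i * v i ^ 2 := by
      have := Finset.sum_mul_sq_le_sq_mul_sq s (fun i => Real.sqrt (u i))
        (fun i => Real.sqrt (u i) * v i)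
      calc (∑ i ∈ s, u i * v i) ^ 2
          = (∑ i ∈ s, Real.sqrt (u i) * (Real.sqrt (u i) * v i)) ^ 2 := by
            congr 1; refine Finset.sum_congr rfl fun i _ => ?_
            rw [← mul_assoc, Real.mul_self_sqrt (hu i)]
        _ ≤ (∑ i ∈ s, Real.sqrt (u i) ^ 2) * ∑ i ∈ s, (Real.sqrt (u i) * v i) ^ 2 := this
        _ = (∑ i ∈ s, u i) * ∑ i ∈ s, u i * v i ^ 2 := by
            congr 1
            · exact Finset.sum_congr rfl fun i _ => Real.sq_sqrt (hu i)
            · refine Finset.sum_congr rfl fun i _ => ?_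
              rw [mul_pow, Real.sq_sqrt (hu i)]
    have h2 : (∑ i ∈ s, u i) * ∑ i ∈ s, u i * v i ^ 2 ≤ A * B := by
      have hsA : ∑ i ∈ s, u i ≤ A := Summable.sum_le_tsum s (fun i _ => hu i) hsu
      have hsB : ∑ i ∈ s, u i * v i ^ 2 ≤ B :=
        Summable.sum_le_tsum s (fun i _ => mul_nonneg (hu i) (sq_nonneg _)) hsv
      exact mul_le_mul hsA hsB (Finset.sum_nonneg fun i _ => mul_nonneg (hu i) (sq_nonneg _)) hA0
    exact Real.le_sqrt_of_sq_le (h1.trans h2)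
  calc (∑' i, u i * v i) ^ 2 ≤ Real.sqrt (A * B) ^ 2 := by
        refine pow_le_pow_left₀ (tsum_nonneg fun i => mul_nonneg (hu i) (hv i)) key 2
    _ = A * B := Real.sq_sqrt (by positivity)

lemma ratio_rpow {p q r : ℝ} (hp : 1 ≤ p) (hq : 1 ≤ q)
    (h1 : p ≤ q * r) (h2 : q ≤ p * r) (s : ℝ) : p ^ s ≤ r ^ |s| * q ^ s := by
  have hp0 : (0:ℝ) < p := lt_of_lt_of_le one_pos hp
  have hq0 : (0:ℝ) < q := lt_of_lt_of_le one_pos hq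
  have hr0 : (0:ℝ) < r := by nlinarith
  have key : ∀ {X Z : ℝ}, 0 < X → 0 < Z → X ≤ Z * r → ∀ t : ℝ, 0 ≤ t →
      X ^ t ≤ r ^ t * Z ^ t := by
    intro X Z hX hZ hXZ t ht
    calc X ^ t ≤ (Z * r) ^ t := Real.rpow_le_rpow hX.le hXZ ht
      _ = Z ^ t * r ^ t := Real.mul_rpow hZ.le hr0.le
      _ = r ^ t * Z ^ t := mul_comm _ _
  rcases le_or_gt 0 s with hs | hs
  · rw [abs_of_nonneg hs]; exact key hp0 hq0 h1 s hs
  · rw [abs_of_neg hs]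
    have h3 : q ^ (-s) ≤ r ^ (-s) * p ^ (-s) := key hq0 hp0 h2 (-s) (by linarith)
    have e1 : p ^ s * p ^ (-s) = 1 := by rw [← Real.rpow_add hp0]; simp
    have e2 : q ^ (-s) * q ^ s = 1 := by rw [← Real.rpow_add hq0]; simp
    have h4 : p ^ s * q ^ (-s) ≤ r ^ (-s) := by
      calc p ^ s * q ^ (-s) ≤ p ^ s * (r ^ (-s) * p ^ (-s)) :=
            mul_le_mul_of_nonneg_left h3 (Real.rpow_nonneg hp0.le _)
        _ = r ^ (-s) * (p ^ s * p ^ (-s)) := by ring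
        _ = r ^ (-s) := by rw [e1, mul_one]
    calc p ^ s = p ^ s * q ^ (-s) * q ^ s := by rw [mul_assoc, e2, mul_one]
      _ ≤ r ^ (-s) * q ^ s := mul_le_mul_of_nonneg_right h4 (Real.rpow_nonneg hq0.le _)

end Aux

/-- An almost periodic operator `B = Op(b)` with finite symbol norms
extends (uniquely, by density) to a bounded operator `H^β(Ξ) → H^{β−γ}(Ξ)` with
norm at most `⦀b⦀_{|β−γ|}^{(γ)}`: in coordinates, for every `x ∈ H^β(Ξ)` the image
`Bx` lies in `H^{β−γ}(Ξ)` with `‖Bx‖_{H^{β−γ}} ≤ ⦀b⦀_{|β−γ|}^{(γ)} ‖x‖_{H^β}`. -/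
theorem stmt4 [Nonempty Ξ] [Group G] [MulAction G Ξ]
    (w : Ξ → ℝ) (hw : ∀ ξ, 1 ≤ w ξ)
    (wG : G → ℝ) (hwG : ∀ g : G, wG g = 1 + ⨆ ξ : Ξ, |w (g • ξ) - w ξ|)
    (hbdd : ∀ g : G, BddAbove (Set.range fun ξ : Ξ => |w (g • ξ) - w ξ|))
    (hfree : ∀ (g : G) (ξ : Ξ), g • ξ = ξ → g = 1)
    (b : G → Ξ → ℂ) (Θ : Set G) (hb : IsAPSymbol b Θ)
    (γ β : ℝ) (hord : HasOrder w wG b γ)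
    (x : Ξ → ℂ) (hx : Summable fun ξ : Ξ => w ξ ^ (2 * β) * ‖x ξ‖ ^ 2) :
    Summable (fun η : Ξ => w η ^ (2 * (β - γ)) * ‖opApply b x η‖ ^ 2) ∧
      ∑' η : Ξ, w η ^ (2 * (β - γ)) * ‖opApply b x η‖ ^ 2 ≤
        snorm w wG b γ |β - γ| ^ 2 * ∑' ξ : Ξ, w ξ ^ (2 * β) * ‖x ξ‖ ^ 2 := by
  classical
  obtain ⟨hbddc, hsummc⟩ := hord
  have hw0 : ∀ ξ, (0:ℝ) < w ξ := fun ξ => lt_of_lt_of_le one_pos (hw ξ)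
  set c : G → ℝ := fun θ => ⨆ ξ : Ξ, w ξ ^ (-γ) * ‖b θ ξ‖ with hc
  have hc0 : ∀ θ, 0 ≤ c θ := by
    intro θ
    refine le_trans ?_ (le_ciSup (hbddc θ) (Classical.arbitrary Ξ))
    exact mul_nonneg (Real.rpow_nonneg (hw0 _).le _) (norm_nonneg _)
  have hcb : ∀ θ ξ, ‖b θ ξ‖ ≤ c θ * w ξ ^ γ := by
    intro θ ξ
    have h1 : w ξ ^ (-γ) * ‖b θ ξ‖ ≤ c θ := le_ciSup (hbddc θ) ξ
    have h2 : ‖b θ ξ‖ = w ξ ^ γ * (w ξ ^ (-γ) * ‖b θ ξ‖) := by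
      rw [← mul_assoc, ← Real.rpow_add (hw0 ξ)]; simp
    rw [h2, mul_comm (c θ) (w ξ ^ γ)]
    exact mul_le_mul_of_nonneg_left h1 (Real.rpow_nonneg (hw0 ξ).le _)
  have hwG1 : ∀ θ, 1 ≤ wG θ := by
    intro θ
    have : (0:ℝ) ≤ ⨆ ξ : Ξ, |w (θ • ξ) - w ξ| :=
      le_trans (abs_nonneg _) (le_ciSup (hbdd θ) (Classical.arbitrary Ξ))
    rw [hwG]; linarith
  set a : G → ℝ := fun θ => wG θ ^ |β - γ| * c θ with ha
  have ha0 : ∀ θ, 0 ≤ a θ := fun θ =>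
    mul_nonneg (Real.rpow_nonneg (le_trans zero_le_one (hwG1 θ)) _) (hc0 θ)
  have hsa : Summable a := hsummc |β - γ| (abs_nonneg _)
  set N : ℝ := ∑' θ, a θ with hN
  have hN0 : 0 ≤ N := tsum_nonneg ha0
  set y : Ξ → ℝ := fun ξ => w ξ ^ β * ‖x ξ‖ with hy
  have hy0 : ∀ ξ, 0 ≤ y ξ := fun ξ => mul_nonneg (Real.rpow_nonneg (hw0 ξ).le _) (norm_nonneg _)
  have hysq : ∀ ξ, y ξ ^ 2 = w ξ ^ (2 * β) * ‖x ξ‖ ^ 2 := by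
    intro ξ
    have : (w ξ ^ β) ^ 2 = w ξ ^ (2 * β) := by
      rw [sq, ← Real.rpow_add (hw0 ξ)]; ring_nf
    rw [hy, mul_pow, this]
  have hy2 : Summable fun ξ => y ξ ^ 2 := by
    simp_rw [hysq]; exact hx
  set T : ℝ := ∑' ξ, y ξ ^ 2 with hT
  have hT0 : 0 ≤ T := tsum_nonneg fun ξ => sq_nonneg _
  have hyle : ∀ ξ, y ξ ≤ Real.sqrt T := by
    intro ξ
    refine Real.le_sqrt_of_sq_le (Summable.le_tsum hy2 ξ fun j _ => sq_nonneg _)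
  -- key pointwise bound
  have key : ∀ (θ : G) (ξ : Ξ), w (θ • ξ) ^ (β - γ) * (‖b θ ξ‖ * ‖x ξ‖) ≤ a θ * y ξ := by
    intro θ ξ
    have hD : |w (θ • ξ) - w ξ| ≤ ⨆ ξ' : Ξ, |w (θ • ξ') - w ξ'| := le_ciSup (hbdd θ) ξ
    have hr1 : w (θ • ξ) ≤ w ξ * wG θ := by
      rw [hwG]
      have h := abs_le.1 hD
      nlinarith [hw ξ, h.2]
    have hr2 : w ξ ≤ w (θ • ξ) * wG θ := by
      rw [hwG]
      have h := abs_le.1 hD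
      nlinarith [hw (θ • ξ), h.1]
    have hratio : w (θ • ξ) ^ (β - γ) ≤ wG θ ^ |β - γ| * w ξ ^ (β - γ) :=
      ratio_rpow (hw _) (hw _) hr1 hr2 (β - γ)
    calc w (θ • ξ) ^ (β - γ) * (‖b θ ξ‖ * ‖x ξ‖)
        ≤ (wG θ ^ |β - γ| * w ξ ^ (β - γ)) * ((c θ * w ξ ^ γ) * ‖x ξ‖) := by
          refine mul_le_mul hratio ?_ (by positivity) ?_
          · exact mul_le_mul_of_nonneg_right (hcb θ ξ) (norm_nonneg _)
          · exact mul_nonneg (Real.rpow_nonneg (le_trans zero_le_one (hwG1 θ)) _)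
              (Real.rpow_nonneg (hw0 ξ).le _)
      _ = a θ * ((w ξ ^ (β - γ) * w ξ ^ γ) * ‖x ξ‖) := by rw [ha]; ring
      _ = a θ * y ξ := by
          rw [← Real.rpow_add (hw0 ξ)]
          ring_nf
          simp only [hy]; ring
  have hkey' : ∀ (θ : G) (η : Ξ),
      ‖b θ (θ⁻¹ • η) * x (θ⁻¹ • η)‖ ≤ w η ^ (γ - β) * (a θ * y (θ⁻¹ • η)) := by
    intro θ η
    have hsm : θ • (θ⁻¹ • η) = η := smul_inv_smul θ η
    have h := key θ (θ⁻¹ • η)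
    rw [hsm] at h
    have hinv : w η ^ (γ - β) * w η ^ (β - γ) = 1 := by
      rw [← Real.rpow_add (hw0 η)]; ring_nf; exact Real.rpow_zero _
    calc ‖b θ (θ⁻¹ • η) * x (θ⁻¹ • η)‖
        = w η ^ (γ - β) * (w η ^ (β - γ) * (‖b θ (θ⁻¹ • η)‖ * ‖x (θ⁻¹ • η)‖)) := by
          rw [← mul_assoc, hinv, one_mul, norm_mul]
      _ ≤ w η ^ (γ - β) * (a θ * y (θ⁻¹ • η)) :=
          mul_le_mul_of_nonneg_left h (Real.rpow_nonneg (hw0 η).le _)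
  have hsum_ay : ∀ η : Ξ, Summable fun θ => a θ * y (θ⁻¹ • η) := by
    intro η
    refine Summable.of_nonneg_of_le (fun θ => mul_nonneg (ha0 θ) (hy0 _))
      (fun θ => ?_) (hsa.mul_right (Real.sqrt T))
    exact mul_le_mul_of_nonneg_left (hyle _) (ha0 θ)
  have hsum_ay2 : ∀ η : Ξ, Summable fun θ => a θ * y (θ⁻¹ • η) ^ 2 := by
    intro η
    refine Summable.of_nonneg_of_le (fun θ => mul_nonneg (ha0 θ) (sq_nonneg _))
      (fun θ => ?_) (hsa.mul_right T)
    refine mul_le_mul_of_nonneg_left ?_ (ha0 θ)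
    exact Summable.le_tsum hy2 _ fun j _ => sq_nonneg _
  have hsumf : ∀ η : Ξ, Summable fun θ => ‖b θ (θ⁻¹ • η) * x (θ⁻¹ • η)‖ := by
    intro η
    exact Summable.of_nonneg_of_le (fun θ => norm_nonneg _) (hkey' · η)
      ((hsum_ay η).mul_left _)
  set S : Ξ → ℝ := fun η => ∑' θ, a θ * y (θ⁻¹ • η) with hS
  set S2 : Ξ → ℝ := fun η => ∑' θ, a θ * y (θ⁻¹ • η) ^ 2 with hS2
  have hS20 : ∀ η, 0 ≤ S2 η := fun η => tsum_nonneg fun θ => mul_nonneg (ha0 θ) (sq_nonneg _)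
  have hBle : ∀ η : Ξ, ‖opApply b x η‖ ≤ w η ^ (γ - β) * S η := by
    intro η
    calc ‖opApply b x η‖ ≤ ∑' θ, ‖b θ (θ⁻¹ • η) * x (θ⁻¹ • η)‖ :=
          norm_tsum_le_tsum_norm (hsumf η)
      _ ≤ ∑' θ, w η ^ (γ - β) * (a θ * y (θ⁻¹ • η)) :=
          Summable.tsum_le_tsum (hkey' · η) (hsumf η) ((hsum_ay η).mul_left _)
      _ = w η ^ (γ - β) * S η := tsum_mul_left
  have hCS : ∀ η : Ξ, S η ^ 2 ≤ N * S2 η := fun η =>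
    cs_aux a (fun θ => y (θ⁻¹ • η)) ha0 (fun θ => hy0 _) hsa (hsum_ay2 η) (hsum_ay η)
  have hmain : ∀ η : Ξ, w η ^ (2 * (β - γ)) * ‖opApply b x η‖ ^ 2 ≤ N * S2 η := by
    intro η
    have hsq : w η ^ (2 * (β - γ)) = (w η ^ (β - γ)) ^ 2 := by
      rw [sq, ← Real.rpow_add (hw0 η)]; ring_nf
    have hstep : w η ^ (β - γ) * ‖opApply b x η‖ ≤ S η := by
      have hinv : w η ^ (β - γ) * w η ^ (γ - β) = 1 := by
        rw [← Real.rpow_add (hw0 η)]; ring_nf; exact Real.rpow_zero _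
      calc w η ^ (β - γ) * ‖opApply b x η‖
          ≤ w η ^ (β - γ) * (w η ^ (γ - β) * S η) :=
            mul_le_mul_of_nonneg_left (hBle η) (Real.rpow_nonneg (hw0 η).le _)
        _ = (w η ^ (β - γ) * w η ^ (γ - β)) * S η := by ring
        _ = S η := by rw [hinv, one_mul]
    calc w η ^ (2 * (β - γ)) * ‖opApply b x η‖ ^ 2
        = (w η ^ (β - γ) * ‖opApply b x η‖) ^ 2 := by rw [hsq, mul_pow]
      _ ≤ S η ^ 2 := by
          refine pow_le_pow_left₀ (mul_nonneg (Real.rpow_nonneg (hw0 η).le _) (norm_nonneg _))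
            hstep 2
      _ ≤ N * S2 η := hCS η
  -- summability of the dominating function via Fubini
  have hF : Summable (fun p : G × Ξ => a p.1 * y (p.1⁻¹ • p.2) ^ 2) := by
    rw [summable_prod_of_nonneg (fun p => mul_nonneg (ha0 p.1) (sq_nonneg _))]
    constructor
    · intro θ
      have h0 : Summable ((fun ξ : Ξ => y ξ ^ 2) ∘ (MulAction.toPerm (θ⁻¹ : G) : Equiv.Perm Ξ)) :=
        (Equiv.summable_iff _).mpr hy2
      have h1 : Summable fun η : Ξ => y (θ⁻¹ • η) ^ 2 := by
        simpa [Function.comp_def, MulAction.toPerm_apply] using h0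
      exact h1.mul_left (a θ)
    · have heq : ∀ θ : G, ∑' η : Ξ, a θ * y (θ⁻¹ • η) ^ 2 = a θ * T := by
        intro θ
        rw [tsum_mul_left]
        congr 1
        have h0 := (MulAction.toPerm (θ⁻¹ : G) : Equiv.Perm Ξ).tsum_eq (fun ξ : Ξ => y ξ ^ 2)
        simpa [MulAction.toPerm_apply] using h0
      simp_rw [heq]
      exact hsa.mul_right T
  have hS2sum : Summable S2 := by
    have h1 : Summable (fun p : Ξ × G => a p.2 * y (p.2⁻¹ • p.1) ^ 2) := hF.prod_symm
    exact ((summable_prod_of_nonneg fun p => mul_nonneg (ha0 p.2) (sq_nonneg _)).mp h1).2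
  have hS2tsum : ∑' η, S2 η = N * T := by
    have h1 : Summable (fun p : Ξ × G => a p.2 * y (p.2⁻¹ • p.1) ^ 2) := hF.prod_symm
    have swap : ∑' (η : Ξ) (θ : G), a θ * y (θ⁻¹ • η) ^ 2
        = ∑' (θ : G) (η : Ξ), a θ * y (θ⁻¹ • η) ^ 2 :=
      Summable.tsum_comm' hF hF.prod_factor h1.prod_factor
    have heq : ∀ θ : G, ∑' η : Ξ, a θ * y (θ⁻¹ • η) ^ 2 = a θ * T := by
      intro θ
      rw [tsum_mul_left]
      congr 1
      have h0 := (MulAction.toPerm (θ⁻¹ : G) : Equiv.Perm Ξ).tsum_eq (fun ξ : Ξ => y ξ ^ 2)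
      simpa [MulAction.toPerm_apply] using h0
    calc ∑' η, S2 η = ∑' (θ : G) (η : Ξ), a θ * y (θ⁻¹ • η) ^ 2 := swap
      _ = ∑' θ, a θ * T := by simp_rw [heq]
      _ = N * T := tsum_mul_right
  have hsummable : Summable (fun η : Ξ => w η ^ (2 * (β - γ)) * ‖opApply b x η‖ ^ 2) := by
    refine Summable.of_nonneg_of_le
      (fun η => mul_nonneg (Real.rpow_nonneg (hw0 η).le _) (sq_nonneg _)) hmain
      (hS2sum.mul_left N)
  refine ⟨hsummable, ?_⟩
  have hNs : snorm w wG b γ |β - γ| = N := by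
    simp only [snorm, hN, ha, hc]
  have hTs : ∑' ξ : Ξ, w ξ ^ (2 * β) * ‖x ξ‖ ^ 2 = T := by
    rw [hT]; simp_rw [hysq]
  rw [hNs, hTs]
  calc ∑' η, w η ^ (2 * (β - γ)) * ‖opApply b x η‖ ^ 2
      ≤ ∑' η, N * S2 η := Summable.tsum_le_tsum hmain hsummable (hS2sum.mul_left N)
    _ = N * (N * T) := by rw [tsum_mul_left, hS2tsum]
    _ = N ^ 2 * T := by ring
end
end

section
/- Define the composed symbol (a∘b)_θ(ξ) := Σ_{θ_a θ_b = θ} a_{θ_a}(θ_b ▷ ξ) b_{θ_b}(ξ). If A = Op(a) has order α and B = Op(b) has order β, then AB = Op(a∘b) has order α+β, and for all l ≥ 0, ⦀a∘b⦀_l^{(α+β)} ≤ ⦀a⦀_l^{(α)} · ⦀b⦀_{l+|α|}^{(β)}. -/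
noncomputable section

open scoped Classical

variable {G Ξ : Type*}

/-- Peetre-type inequality for real powers. -/
private lemma peetre_rpow {x y c α : ℝ} (hx : 1 ≤ x) (hy : 1 ≤ y) (hc : 1 ≤ c)
    (h1 : x ≤ y * c) (h2 : y ≤ x * c) : x ^ α * y ^ (-α) ≤ c ^ |α| := by
  rcases le_or_gt 0 α with hα | hα
  · rw [abs_of_nonneg hα]
    have hx' : x ^ α ≤ y ^ α * c ^ α := by
      rw [← Real.mul_rpow (by linarith) (by linarith)]
      exact Real.rpow_le_rpow (by linarith) h1 hα
    have hyy : y ^ α * y ^ (-α) = 1 := by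
      rw [← Real.rpow_add (by linarith), add_neg_cancel, Real.rpow_zero]
    calc x ^ α * y ^ (-α) ≤ y ^ α * c ^ α * y ^ (-α) :=
          mul_le_mul_of_nonneg_right hx' (Real.rpow_nonneg (by linarith) _)
      _ = (y ^ α * y ^ (-α)) * c ^ α := by ring
      _ = c ^ α := by rw [hyy, one_mul]
  · rw [abs_of_neg hα]
    have hy' : y ^ (-α) ≤ x ^ (-α) * c ^ (-α) := by
      rw [← Real.mul_rpow (by linarith) (by linarith)]
      exact Real.rpow_le_rpow (by linarith) h2 (by linarith)
    have hxx : x ^ α * x ^ (-α) = 1 := by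
      rw [← Real.rpow_add (by linarith), add_neg_cancel, Real.rpow_zero]
    calc x ^ α * y ^ (-α) ≤ x ^ α * (x ^ (-α) * c ^ (-α)) :=
          mul_le_mul_of_nonneg_left hy' (Real.rpow_nonneg (by linarith) _)
      _ = (x ^ α * x ^ (-α)) * c ^ (-α) := by ring
      _ = c ^ (-α) := by rw [hxx, one_mul]

set_option maxHeartbeats 1000000 in
/-- for symbols `a` of order `α` and `b` of order `β`, the composed symbol
`a∘b` has order `α+β`, satisfies `AB = Op(a∘b)` (checked on the basis vectors `e_ξ`),
and `⦀a∘b⦀_l^{(α+β)} ≤ ⦀a⦀_l^{(α)} ⦀b⦀_{l+|α|}^{(β)}` for all `l ≥ 0`. -/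
theorem stmt7 [Nonempty Ξ] [Group G] [MulAction G Ξ]
    (w : Ξ → ℝ) (hw : ∀ ξ, 1 ≤ w ξ)
    (wG : G → ℝ) (hwG : ∀ g : G, wG g = 1 + ⨆ ξ : Ξ, |w (g • ξ) - w ξ|)
    (hbdd : ∀ g : G, BddAbove (Set.range fun ξ : Ξ => |w (g • ξ) - w ξ|))
    (hfree : ∀ (g : G) (ξ : Ξ), g • ξ = ξ → g = 1)
    (a b : G → Ξ → ℂ) (Θa Θb : Set G)
    (ha : IsAPSymbol a Θa) (hb : IsAPSymbol b Θb)
    (α β : ℝ) (horda : HasOrder w wG a α) (hordb : HasOrder w wG b β) :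
    HasOrder w wG (compSymb a b) (α + β) ∧
      (∀ l : ℝ, 0 ≤ l →
        snorm w wG (compSymb a b) (α + β) l ≤
          snorm w wG a α l * snorm w wG b β (l + |α|)) ∧
      ∀ ξ : Ξ,
        opApply (compSymb a b) (fun η => if η = ξ then 1 else 0) =
          opApply a (opApply b (fun η => if η = ξ then 1 else 0)) := by
  obtain ⟨ξ0⟩ := ‹Nonempty Ξ›
  have hw0 : ∀ ξ, (0:ℝ) < w ξ := fun ξ => lt_of_lt_of_le one_pos (hw ξ)
  have hwG1 : ∀ g, 1 ≤ wG g := by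
    intro g
    rw [hwG g]
    have : (0:ℝ) ≤ ⨆ ξ : Ξ, |w (g • ξ) - w ξ| :=
      le_trans (abs_nonneg _) (le_ciSup (hbdd g) ξ0)
    linarith
  have hwG0 : ∀ g, (0:ℝ) < wG g := fun g => lt_of_lt_of_le one_pos (hwG1 g)
  -- Peetre bounds for the weight
  have hpeetre : ∀ (h : G) (ξ : Ξ), w (h • ξ) ≤ w ξ * wG h ∧ w ξ ≤ w (h • ξ) * wG h := by
    intro h ξ
    have h1 : |w (h • ξ) - w ξ| ≤ wG h - 1 := by
      have := le_ciSup (hbdd h) ξ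
      rw [hwG h]; linarith
    have h2 := abs_le.mp h1
    constructor
    · nlinarith [hw ξ, hwG1 h, h2.2]
    · nlinarith [hw (h • ξ), hwG1 h, h2.1]
  -- submultiplicativity of wG
  have hsub : ∀ g1 g2 : G, wG (g1 * g2) ≤ wG g1 * wG g2 := by
    intro g1 g2
    have hsup : (⨆ ξ : Ξ, |w ((g1 * g2) • ξ) - w ξ|) ≤ (wG g1 - 1) + (wG g2 - 1) := by
      apply ciSup_le
      intro ξ
      have h1 : |w (g1 • (g2 • ξ)) - w (g2 • ξ)| ≤ wG g1 - 1 := by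
        have := le_ciSup (hbdd g1) (g2 • ξ); rw [hwG g1]; linarith
      have h2 : |w (g2 • ξ) - w ξ| ≤ wG g2 - 1 := by
        have := le_ciSup (hbdd g2) ξ; rw [hwG g2]; linarith
      calc |w ((g1*g2) • ξ) - w ξ|
          = |(w (g1 • (g2 • ξ)) - w (g2 • ξ)) + (w (g2 • ξ) - w ξ)| := by
            rw [mul_smul]; congr 1; ring
        _ ≤ |w (g1 • (g2 • ξ)) - w (g2 • ξ)| + |w (g2 • ξ) - w ξ| := abs_add_le _ _
        _ ≤ (wG g1 - 1) + (wG g2 - 1) := add_le_add h1 h2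
    rw [hwG (g1 * g2)]
    nlinarith [hwG1 g1, hwG1 g2]
  -- symbol sup bounds
  set A : G → ℝ := fun g => ⨆ ξ : Ξ, w ξ ^ (-α) * ‖a g ξ‖ with hAdef
  set B : G → ℝ := fun h => ⨆ ξ : Ξ, w ξ ^ (-β) * ‖b h ξ‖ with hBdef
  have hAnn : ∀ g, 0 ≤ A g := fun g =>
    le_trans (mul_nonneg (Real.rpow_nonneg (hw0 ξ0).le _) (norm_nonneg _))
      (le_ciSup (horda.1 g) ξ0)
  have hBnn : ∀ h, 0 ≤ B h := fun h =>
    le_trans (mul_nonneg (Real.rpow_nonneg (hw0 ξ0).le _) (norm_nonneg _))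
      (le_ciSup (hordb.1 h) ξ0)
  have hAle : ∀ (g : G) (ξ : Ξ), ‖a g ξ‖ ≤ A g * w ξ ^ α := by
    intro g ξ
    have h1 : w ξ ^ (-α) * ‖a g ξ‖ ≤ A g := le_ciSup (horda.1 g) ξ
    have h2 : w ξ ^ α * w ξ ^ (-α) = 1 := by
      rw [← Real.rpow_add (hw0 ξ), add_neg_cancel, Real.rpow_zero]
    calc ‖a g ξ‖ = w ξ ^ α * (w ξ ^ (-α) * ‖a g ξ‖) := by rw [← mul_assoc, h2, one_mul]
      _ ≤ w ξ ^ α * A g := mul_le_mul_of_nonneg_left h1 (Real.rpow_nonneg (hw0 ξ).le _)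
      _ = A g * w ξ ^ α := mul_comm _ _
  have hBle : ∀ (h : G) (ξ : Ξ), ‖b h ξ‖ ≤ B h * w ξ ^ β := by
    intro h ξ
    have h1 : w ξ ^ (-β) * ‖b h ξ‖ ≤ B h := le_ciSup (hordb.1 h) ξ
    have h2 : w ξ ^ β * w ξ ^ (-β) = 1 := by
      rw [← Real.rpow_add (hw0 ξ), add_neg_cancel, Real.rpow_zero]
    calc ‖b h ξ‖ = w ξ ^ β * (w ξ ^ (-β) * ‖b h ξ‖) := by rw [← mul_assoc, h2, one_mul]
      _ ≤ w ξ ^ β * B h := mul_le_mul_of_nonneg_left h1 (Real.rpow_nonneg (hw0 ξ).le _)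
      _ = B h * w ξ ^ β := mul_comm _ _
  -- the per-term estimate
  have hterm : ∀ (g h : G) (ξ : Ξ),
      w ξ ^ (-(α + β)) * ‖a g (h • ξ) * b h ξ‖ ≤ A g * (wG h ^ |α| * B h) := by
    intro g h ξ
    have hp := hpeetre h ξ
    have key : w (h • ξ) ^ α * w ξ ^ (-α) ≤ wG h ^ |α| :=
      peetre_rpow (hw (h • ξ)) (hw ξ) (hwG1 h) hp.1 hp.2
    have hmul : ‖a g (h • ξ) * b h ξ‖ ≤ (A g * w (h • ξ) ^ α) * (B h * w ξ ^ β) := by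
      rw [norm_mul]
      exact mul_le_mul (hAle g (h • ξ)) (hBle h ξ) (norm_nonneg _)
        (mul_nonneg (hAnn g) (Real.rpow_nonneg (hw0 (h • ξ)).le _))
    have e1 : w ξ ^ (-(α + β)) = w ξ ^ (-α) * w ξ ^ (-β) := by
      rw [← Real.rpow_add (hw0 ξ)]; ring_nf
    have e2 : w ξ ^ β * w ξ ^ (-β) = 1 := by
      rw [← Real.rpow_add (hw0 ξ), add_neg_cancel, Real.rpow_zero]
    calc w ξ ^ (-(α + β)) * ‖a g (h • ξ) * b h ξ‖
        ≤ w ξ ^ (-(α + β)) * ((A g * w (h • ξ) ^ α) * (B h * w ξ ^ β)) :=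
          mul_le_mul_of_nonneg_left hmul (Real.rpow_nonneg (hw0 ξ).le _)
      _ = (A g * B h) * ((w (h • ξ) ^ α * w ξ ^ (-α)) * (w ξ ^ β * w ξ ^ (-β))) := by
          rw [e1]; ring
      _ = (A g * B h) * (w (h • ξ) ^ α * w ξ ^ (-α)) := by rw [e2, mul_one]
      _ ≤ (A g * B h) * wG h ^ |α| :=
          mul_le_mul_of_nonneg_left key (mul_nonneg (hAnn g) (hBnn h))
      _ = A g * (wG h ^ |α| * B h) := by ring
  -- basic summability facts
  have hAsum : Summable A := by
    have := horda.2 0 le_rfl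
    simpa [Real.rpow_zero] using this
  have hBα : Summable (fun h : G => wG h ^ |α| * B h) := hordb.2 |α| (abs_nonneg α)
  have hBαnn : ∀ h, 0 ≤ wG h ^ |α| * B h := fun h =>
    mul_nonneg (Real.rpow_nonneg (hwG0 h).le _) (hBnn h)
  have hACa : ∀ g, A g ≤ ∑' g', A g' := fun g => Summable.le_tsum hAsum g (fun j _ => hAnn j)
  have hboundsum : ∀ θ : G, Summable (fun h : G => A (θ * h⁻¹) * (wG h ^ |α| * B h)) := by
    intro θ
    exact Summable.of_nonneg_of_le (fun h => mul_nonneg (hAnn _) (hBαnn h))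
      (fun h => mul_le_mul_of_nonneg_right (hACa _) (hBαnn h)) (hBα.mul_left _)
  -- the pointwise sup bound
  set S : G → ℝ := fun θ => ∑' h : G, A (θ * h⁻¹) * (wG h ^ |α| * B h) with hSdef
  have hsupS : ∀ (θ : G) (ξ : Ξ), w ξ ^ (-(α+β)) * ‖compSymb a b θ ξ‖ ≤ S θ := by
    intro θ ξ
    have e3 : w ξ ^ (α+β) * w ξ ^ (-(α+β)) = 1 := by
      rw [← Real.rpow_add (hw0 ξ), add_neg_cancel, Real.rpow_zero]
    have hfsum : Summable (fun h : G => ‖a (θ * h⁻¹) (h • ξ) * b h ξ‖) := by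
      apply Summable.of_nonneg_of_le (fun h => norm_nonneg _) (fun h => ?_)
        ((hboundsum θ).mul_left (w ξ ^ (α+β)))
      calc ‖a (θ * h⁻¹) (h • ξ) * b h ξ‖
          = w ξ ^ (α+β) * (w ξ ^ (-(α+β)) * ‖a (θ * h⁻¹) (h • ξ) * b h ξ‖) := by
            rw [← mul_assoc, e3, one_mul]
        _ ≤ w ξ ^ (α+β) * (A (θ * h⁻¹) * (wG h ^ |α| * B h)) :=
            mul_le_mul_of_nonneg_left (hterm _ h ξ) (Real.rpow_nonneg (hw0 ξ).le _)
    have hnorm : ‖compSymb a b θ ξ‖ ≤ ∑' h : G, ‖a (θ * h⁻¹) (h • ξ) * b h ξ‖ :=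
      norm_tsum_le_tsum_norm hfsum
    calc w ξ ^ (-(α+β)) * ‖compSymb a b θ ξ‖
        ≤ w ξ ^ (-(α+β)) * ∑' h : G, ‖a (θ * h⁻¹) (h • ξ) * b h ξ‖ :=
          mul_le_mul_of_nonneg_left hnorm (Real.rpow_nonneg (hw0 ξ).le _)
      _ = ∑' h : G, w ξ ^ (-(α+β)) * ‖a (θ * h⁻¹) (h • ξ) * b h ξ‖ := tsum_mul_left.symm
      _ ≤ S θ := by
          apply Summable.tsum_le_tsum (fun h => hterm _ h ξ) ?_ (hboundsum θ)
          exact Summable.of_nonneg_of_le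
            (fun h => mul_nonneg (Real.rpow_nonneg (hw0 ξ).le _) (norm_nonneg _))
            (fun h => hterm _ h ξ) (hboundsum θ)
  have hBddC : ∀ θ : G, BddAbove (Set.range fun ξ : Ξ => w ξ ^ (-(α+β)) * ‖compSymb a b θ ξ‖) := by
    intro θ
    refine ⟨S θ, ?_⟩
    rintro x ⟨ξ, rfl⟩
    exact hsupS θ ξ
  have hsupnn : ∀ θ : G, 0 ≤ ⨆ ξ : Ξ, w ξ ^ (-(α+β)) * ‖compSymb a b θ ξ‖ := fun θ =>
    le_trans (mul_nonneg (Real.rpow_nonneg (hw0 ξ0).le _) (norm_nonneg _))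
      (le_ciSup (hBddC θ) ξ0)
  -- the main estimate, for each l ≥ 0
  have hmain : ∀ l : ℝ, 0 ≤ l →
      Summable (fun θ : G => wG θ ^ l * ⨆ ξ : Ξ, w ξ ^ (-(α+β)) * ‖compSymb a b θ ξ‖) ∧
      snorm w wG (compSymb a b) (α+β) l ≤ snorm w wG a α l * snorm w wG b β (l + |α|) := by
    intro l hl
    set F : G → ℝ := fun g => wG g ^ l * A g with hFdef
    set H : G → ℝ := fun h => wG h ^ (l + |α|) * B h with hHdef
    have hFsum : Summable F := horda.2 l hl
    have hHsum : Summable H := hordb.2 (l + |α|) (by positivity)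
    have hFnn : ∀ g, 0 ≤ F g := fun g =>
      mul_nonneg (Real.rpow_nonneg (hwG0 g).le _) (hAnn g)
    have hHnn : ∀ h, 0 ≤ H h := fun h =>
      mul_nonneg (Real.rpow_nonneg (hwG0 h).le _) (hBnn h)
    have hFH : Summable (fun p : G × G => F p.1 * H p.2) :=
      hFsum.mul_of_nonneg hHsum hFnn hHnn
    let e : G × G ≃ G × G :=
      { toFun := fun p => (p.1 * p.2⁻¹, p.2)
        invFun := fun p => (p.1 * p.2, p.2)
        left_inv := by intro p; simp
        right_inv := by intro p; simp }
    have hK : Summable (fun p : G × G => F (p.1 * p.2⁻¹) * H p.2) :=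
      e.summable_iff.mpr hFH
    have hKnn : ∀ p : G × G, 0 ≤ F (p.1 * p.2⁻¹) * H p.2 := fun p =>
      mul_nonneg (hFnn _) (hHnn _)
    obtain ⟨hKfib, hKout⟩ := (summable_prod_of_nonneg hKnn).mp hK
    have hstep : ∀ θ : G, wG θ ^ l * (⨆ ξ : Ξ, w ξ ^ (-(α+β)) * ‖compSymb a b θ ξ‖)
        ≤ ∑' h : G, F (θ * h⁻¹) * H h := by
      intro θ
      have h1 : (⨆ ξ : Ξ, w ξ ^ (-(α+β)) * ‖compSymb a b θ ξ‖) ≤ S θ := ciSup_le (hsupS θ)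
      have hwl : 0 ≤ wG θ ^ l := Real.rpow_nonneg (hwG0 θ).le _
      have hterm2 : ∀ h : G,
          wG θ ^ l * (A (θ * h⁻¹) * (wG h ^ |α| * B h)) ≤ F (θ * h⁻¹) * H h := by
        intro h
        have h3 : wG θ ≤ wG (θ * h⁻¹) * wG h := by
          have := hsub (θ * h⁻¹) h
          simpa using this
        have hsm : wG θ ^ l ≤ wG (θ * h⁻¹) ^ l * wG h ^ l := by
          calc wG θ ^ l ≤ (wG (θ * h⁻¹) * wG h) ^ l :=
                Real.rpow_le_rpow (hwG0 θ).le h3 hl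
            _ = wG (θ * h⁻¹) ^ l * wG h ^ l := Real.mul_rpow (hwG0 _).le (hwG0 _).le
        have hre : wG h ^ l * wG h ^ |α| = wG h ^ (l + |α|) := by
          rw [← Real.rpow_add (hwG0 h)]
        have hnn : 0 ≤ A (θ * h⁻¹) * (wG h ^ |α| * B h) := mul_nonneg (hAnn _) (hBαnn h)
        calc wG θ ^ l * (A (θ * h⁻¹) * (wG h ^ |α| * B h))
            ≤ (wG (θ * h⁻¹) ^ l * wG h ^ l) * (A (θ * h⁻¹) * (wG h ^ |α| * B h)) :=
              mul_le_mul_of_nonneg_right hsm hnn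
          _ = (wG (θ * h⁻¹) ^ l * A (θ * h⁻¹)) * ((wG h ^ l * wG h ^ |α|) * B h) := by ring
          _ = F (θ * h⁻¹) * H h := by rw [hre]
      calc wG θ ^ l * (⨆ ξ : Ξ, w ξ ^ (-(α+β)) * ‖compSymb a b θ ξ‖)
          ≤ wG θ ^ l * S θ := mul_le_mul_of_nonneg_left h1 hwl
        _ = ∑' h : G, wG θ ^ l * (A (θ * h⁻¹) * (wG h ^ |α| * B h)) := tsum_mul_left.symm
        _ ≤ ∑' h : G, F (θ * h⁻¹) * H h := by
            apply Summable.tsum_le_tsum hterm2 ?_ (hKfib θ)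
            exact Summable.of_nonneg_of_le
              (fun h => mul_nonneg hwl (mul_nonneg (hAnn _) (hBαnn h))) hterm2 (hKfib θ)
    have hsummable : Summable
        (fun θ : G => wG θ ^ l * ⨆ ξ : Ξ, w ξ ^ (-(α+β)) * ‖compSymb a b θ ξ‖) :=
      Summable.of_nonneg_of_le
        (fun θ => mul_nonneg (Real.rpow_nonneg (hwG0 θ).le _) (hsupnn θ)) hstep hKout
    refine ⟨hsummable, ?_⟩
    have heq1 : ∑' p : G × G, F (p.1 * p.2⁻¹) * H p.2 = ∑' θ : G, ∑' h : G, F (θ * h⁻¹) * H h :=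
      Summable.tsum_prod' hK hKfib
    have heq2 : ∑' p : G × G, F (p.1 * p.2⁻¹) * H p.2 = ∑' p : G × G, F p.1 * H p.2 :=
      e.tsum_eq (fun p => F p.1 * H p.2)
    have heq3 : ∑' p : G × G, F p.1 * H p.2 = (∑' g : G, F g) * ∑' h : G, H h := by
      rw [Summable.tsum_prod' hFH (fun g => hHsum.mul_left (F g))]
      simp_rw [tsum_mul_left]
      rw [tsum_mul_right]
    calc snorm w wG (compSymb a b) (α+β) l
        = ∑' θ : G, wG θ ^ l * ⨆ ξ : Ξ, w ξ ^ (-(α+β)) * ‖compSymb a b θ ξ‖ := rfl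
      _ ≤ ∑' θ : G, ∑' h : G, F (θ * h⁻¹) * H h := Summable.tsum_le_tsum hstep hsummable hKout
      _ = (∑' g : G, F g) * ∑' h : G, H h := by rw [← heq1, heq2, heq3]
      _ = snorm w wG a α l * snorm w wG b β (l + |α|) := rfl
  refine ⟨⟨hBddC, fun l hl => (hmain l hl).1⟩, fun l hl => (hmain l hl).2, ?_⟩
  -- part 3: AB = Op(a∘b) on basis vectors
  intro ξ
  funext η
  by_cases hcase : ∃ g0 : G, g0 • ξ = η
  · obtain ⟨g0, hg0⟩ := hcase
    have huniq : ∀ θ : G, θ⁻¹ • η = ξ → θ = g0 := by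
      intro θ hθ
      have hθξ : θ • ξ = η := by rw [← hθ, smul_inv_smul]
      have h1 : (g0⁻¹ * θ) • ξ = ξ := by
        rw [mul_smul, hθξ, ← hg0, inv_smul_smul]
      exact (inv_mul_eq_one.mp (hfree _ ξ h1)).symm
    have hLHS : opApply (compSymb a b) (fun η' => if η' = ξ then 1 else 0) η
        = compSymb a b g0 ξ := by
      show (∑' θ : G, compSymb a b θ (θ⁻¹ • η) * if θ⁻¹ • η = ξ then 1 else 0)
          = compSymb a b g0 ξ
      rw [tsum_eq_single g0 (fun θ hθ => ?_)]
      · have hx : g0⁻¹ • η = ξ := by rw [← hg0, inv_smul_smul]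
        rw [hx, if_pos rfl, mul_one]
      · have : θ⁻¹ • η ≠ ξ := fun hc => hθ (huniq θ hc)
        rw [if_neg this, mul_zero]
    have hinner : ∀ θ : G,
        opApply b (fun η' => if η' = ξ then 1 else 0) (θ⁻¹ • η) = b (θ⁻¹ * g0) ξ := by
      intro θ
      show (∑' h : G, b h (h⁻¹ • (θ⁻¹ • η)) * if h⁻¹ • (θ⁻¹ • η) = ξ then 1 else 0)
          = b (θ⁻¹ * g0) ξ
      rw [tsum_eq_single (θ⁻¹ * g0) (fun h hne => ?_)]
      · have hx : (θ⁻¹ * g0)⁻¹ • (θ⁻¹ • η) = ξ := by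
          rw [smul_smul]
          have he : (θ⁻¹ * g0)⁻¹ * θ⁻¹ = g0⁻¹ := by group
          rw [he, ← hg0, inv_smul_smul]
        rw [hx, if_pos rfl, mul_one]
      · have hne2 : h⁻¹ • (θ⁻¹ • η) ≠ ξ := by
          intro hc
          apply hne
          have hhξ : h • ξ = θ⁻¹ • η := by rw [← hc, smul_inv_smul]
          have h1 : ((θ⁻¹ * g0)⁻¹ * h) • ξ = ξ := by
            rw [mul_smul, hhξ, smul_smul]
            have he : (θ⁻¹ * g0)⁻¹ * θ⁻¹ = g0⁻¹ := by group
            rw [he, ← hg0, inv_smul_smul]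
          exact (inv_mul_eq_one.mp (hfree _ ξ h1)).symm
        rw [if_neg hne2, mul_zero]
    have hRHS : opApply a (opApply b (fun η' => if η' = ξ then 1 else 0)) η
        = ∑' θ : G, a θ (θ⁻¹ • η) * b (θ⁻¹ * g0) ξ := by
      show (∑' θ : G, a θ (θ⁻¹ • η)
          * opApply b (fun η' => if η' = ξ then 1 else 0) (θ⁻¹ • η)) = _
      exact tsum_congr fun θ => by rw [hinner θ]
    have hre : (∑' θ : G, a θ (θ⁻¹ • η) * b (θ⁻¹ * g0) ξ) = compSymb a b g0 ξ := by
      let e3 : G ≃ G :=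
        { toFun := fun h => g0 * h⁻¹
          invFun := fun θ => θ⁻¹ * g0
          left_inv := by intro h; group
          right_inv := by intro θ; group }
      have key : ∀ h : G, a (g0 * h⁻¹) ((g0 * h⁻¹)⁻¹ • η) * b ((g0 * h⁻¹)⁻¹ * g0) ξ
          = a (g0 * h⁻¹) (h • ξ) * b h ξ := by
        intro h
        have e1 : (g0 * h⁻¹)⁻¹ • η = h • ξ := by
          rw [← hg0, smul_smul]
          congr 1
          group
        have e2 : (g0 * h⁻¹)⁻¹ * g0 = h := by group
        rw [e1, e2]
      exact (Equiv.tsum_eq e3 (fun θ => a θ (θ⁻¹ • η) * b (θ⁻¹ * g0) ξ)).symm.trans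
        (tsum_congr key)
    rw [hLHS, hRHS, hre]
  · push_neg at hcase
    have hL : opApply (compSymb a b) (fun η' => if η' = ξ then 1 else 0) η = 0 := by
      show (∑' θ : G, compSymb a b θ (θ⁻¹ • η) * if θ⁻¹ • η = ξ then 1 else 0) = 0
      have hz : ∀ θ : G,
          (compSymb a b θ (θ⁻¹ • η) * if θ⁻¹ • η = ξ then 1 else 0) = 0 := by
        intro θ
        have : θ⁻¹ • η ≠ ξ := by
          intro hc
          exact hcase θ (by rw [← hc, smul_inv_smul])
        rw [if_neg this, mul_zero]
      rw [tsum_congr hz, tsum_zero]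
    have hR : opApply a (opApply b (fun η' => if η' = ξ then 1 else 0)) η = 0 := by
      have hz0 : ∀ θ : G, opApply b (fun η' => if η' = ξ then 1 else 0) (θ⁻¹ • η) = 0 := by
        intro θ
        show (∑' h : G, b h (h⁻¹ • (θ⁻¹ • η)) * if h⁻¹ • (θ⁻¹ • η) = ξ then 1 else 0) = 0
        have hz : ∀ h : G,
            (b h (h⁻¹ • (θ⁻¹ • η)) * if h⁻¹ • (θ⁻¹ • η) = ξ then 1 else 0) = 0 := by
          intro h
          have hne : h⁻¹ • (θ⁻¹ • η) ≠ ξ := by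
            intro hc
            apply hcase (θ * h)
            have hhξ : h • ξ = θ⁻¹ • η := by rw [← hc, smul_inv_smul]
            rw [mul_smul, hhξ, smul_inv_smul]
          rw [if_neg hne, mul_zero]
        rw [tsum_congr hz, tsum_zero]
      show (∑' θ : G, a θ (θ⁻¹ • η)
          * opApply b (fun η' => if η' = ξ then 1 else 0) (θ⁻¹ • η)) = 0
      have : ∀ θ : G, a θ (θ⁻¹ • η)
          * opApply b (fun η' => if η' = ξ then 1 else 0) (θ⁻¹ • η) = 0 := by
        intro θ
        rw [hz0 θ, mul_zero]
      rw [tsum_congr this, tsum_zero]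
    rw [hL, hR]
end
end

section
/- Let A be a diagonal operator with symbol a : Ξ → ℂ satisfying the ellipticity condition |a(ξ)| ≥ κ ⟨ξ⟩^α whenever ⟨ξ⟩ ≥ r (with κ > 0, r ≥ 1, α > 0). Let P_r be the diagonal projection onto {ξ : ⟨ξ⟩ ≤ r} and define Ã := A P_r^c + κ r^α P_r, where P_r^c = Id − P_r. Then Ã is invertible with diagonal inverse of order −α, and for all l ≥ 0: ⦀Ã⁻¹⦀_l^{(γ)} ≤ κ⁻¹ r^{−α} if γ ≥ 0, and ⦀Ã⁻¹⦀_l^{(γ)} ≤ κ⁻¹ r^{−α−γ} if −α ≤ γ < 0. -/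
/-- for a diagonal elliptic symbol `a` with `|a(ξ)| ≥ κ⟨ξ⟩^α` for
`⟨ξ⟩ ≥ r`, the modified symbol `ã(ξ) = a(ξ)` for `⟨ξ⟩ > r` and `κ r^α` for `⟨ξ⟩ ≤ r`
is invertible, its inverse is diagonal of order `−α`, and the diagonal symbol norms
`⦀Ã⁻¹⦀_l^{(γ)} = sup_ξ ⟨ξ⟩^{−γ} |ã(ξ)⁻¹|` satisfy the stated bounds. -/
theorem stmt10 {Ξ : Type*} [Nonempty Ξ]
    (w : Ξ → ℝ) (hw : ∀ ξ, 1 ≤ w ξ)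
    (a : Ξ → ℂ) (α κ r : ℝ) (hα : 0 < α) (hκ : 0 < κ) (hr : 1 ≤ r)
    (hell : ∀ ξ, r ≤ w ξ → κ * w ξ ^ α ≤ ‖a ξ‖)
    (atil : Ξ → ℂ)
    (hatil : ∀ ξ, atil ξ = if w ξ ≤ r then ((κ * r ^ α : ℝ) : ℂ) else a ξ) :
    (∀ ξ, atil ξ ≠ 0) ∧
      (∀ γ : ℝ, 0 ≤ γ → ∀ ξ, w ξ ^ (-γ) * ‖(atil ξ)⁻¹‖ ≤ κ⁻¹ * r ^ (-α)) ∧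
      (∀ γ : ℝ, -α ≤ γ → γ < 0 → ∀ ξ, w ξ ^ (-γ) * ‖(atil ξ)⁻¹‖ ≤ κ⁻¹ * r ^ (-α - γ)) := by
  have hr0 : (0:ℝ) < r := lt_of_lt_of_le one_pos hr
  have hw0 : ∀ ξ, (0:ℝ) < w ξ := fun ξ => lt_of_lt_of_le one_pos (hw ξ)
  have hra : (0:ℝ) < κ * r ^ α := mul_pos hκ (Real.rpow_pos_of_pos hr0 α)
  have hne : ∀ ξ, atil ξ ≠ 0 := by
    intro ξ
    rw [hatil ξ]
    split_ifs with h
    · exact_mod_cast ne_of_gt hra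
    · intro h0
      have h1 := hell ξ (le_of_not_ge h)
      rw [h0, norm_zero] at h1
      exact absurd h1 (not_le.mpr (mul_pos hκ (Real.rpow_pos_of_pos (hw0 ξ) α)))
  have hinv : ∀ ξ, ‖(atil ξ)⁻¹‖ ≤ κ⁻¹ * (max r (w ξ)) ^ (-α) := by
    intro ξ
    rw [hatil ξ, norm_inv]
    split_ifs with h
    · rw [max_eq_left h, Complex.norm_real, Real.norm_of_nonneg hra.le,
        Real.rpow_neg hr0.le, mul_inv]
    · have hwr : r ≤ w ξ := le_of_not_ge h
      rw [max_eq_right hwr, Real.rpow_neg (hw0 ξ).le]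
      have ha : 0 < κ * w ξ ^ α := mul_pos hκ (Real.rpow_pos_of_pos (hw0 ξ) α)
      calc ‖a ξ‖⁻¹ ≤ (κ * w ξ ^ α)⁻¹ := inv_anti₀ ha (hell ξ hwr)
        _ = κ⁻¹ * (w ξ ^ α)⁻¹ := mul_inv _ _
  refine ⟨hne, ?_, ?_⟩
  · intro γ hγ ξ
    have h1 : w ξ ^ (-γ) ≤ 1 :=
      Real.rpow_le_one_of_one_le_of_nonpos (hw ξ) (neg_nonpos.mpr hγ)
    have h2 : (max r (w ξ)) ^ (-α) ≤ r ^ (-α) :=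
      Real.rpow_le_rpow_of_nonpos hr0 (le_max_left _ _) (neg_nonpos.mpr hα.le)
    calc w ξ ^ (-γ) * ‖(atil ξ)⁻¹‖
        ≤ 1 * (κ⁻¹ * (max r (w ξ)) ^ (-α)) := by
          apply mul_le_mul h1 (hinv ξ) (norm_nonneg _)
          exact zero_le_one
      _ = κ⁻¹ * (max r (w ξ)) ^ (-α) := one_mul _
      _ ≤ κ⁻¹ * r ^ (-α) := by
          exact mul_le_mul_of_nonneg_left h2 (inv_nonneg.mpr hκ.le)
  · intro γ hγ hγ0 ξ
    have key : w ξ ^ (-γ) * (κ⁻¹ * (max r (w ξ)) ^ (-α)) ≤ κ⁻¹ * r ^ (-α - γ) := by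
      rcases le_or_gt (w ξ) r with h | h
      · rw [max_eq_left h]
        have h1 : w ξ ^ (-γ) ≤ r ^ (-γ) :=
          Real.rpow_le_rpow (hw0 ξ).le h (neg_nonneg.mpr hγ0.le)
        calc w ξ ^ (-γ) * (κ⁻¹ * r ^ (-α))
            ≤ r ^ (-γ) * (κ⁻¹ * r ^ (-α)) := by
              apply mul_le_mul_of_nonneg_right h1
              positivity
          _ = κ⁻¹ * r ^ (-α - γ) := by
              rw [show (-α - γ) = -α + -γ by ring, Real.rpow_add hr0]
              ring
      · rw [max_eq_right h.le]
        have h1 : w ξ ^ (-γ) * (w ξ) ^ (-α) = w ξ ^ (-α - γ) := by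
          rw [show (-α - γ) = -γ + -α by ring, Real.rpow_add (hw0 ξ)]
        have h2 : w ξ ^ (-α - γ) ≤ r ^ (-α - γ) := by
          apply Real.rpow_le_rpow_of_nonpos hr0 h.le
          linarith
        calc w ξ ^ (-γ) * (κ⁻¹ * w ξ ^ (-α))
            = κ⁻¹ * (w ξ ^ (-γ) * w ξ ^ (-α)) := by ring
          _ = κ⁻¹ * w ξ ^ (-α - γ) := by rw [h1]
          _ ≤ κ⁻¹ * r ^ (-α - γ) := by
              exact mul_le_mul_of_nonneg_left h2 (inv_nonneg.mpr hκ.le)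
    calc w ξ ^ (-γ) * ‖(atil ξ)⁻¹‖
        ≤ w ξ ^ (-γ) * (κ⁻¹ * (max r (w ξ)) ^ (-α)) := by
          exact mul_le_mul_of_nonneg_left (hinv ξ) (Real.rpow_nonneg (hw0 ξ).le _)
      _ ≤ κ⁻¹ * r ^ (-α - γ) := key
end

section
/- Let Ψ be a bounded symmetric almost periodic operator of order 0. Then the exponential series exp(iΨ) = Σ_{k≥0} (iΨ)^k / k! converges in the symbol norms ⦀·⦀_l^{(0)} for every l ≥ 0, defines a unitary operator on ℓ²(Ξ), and for any operator A of order α the gauge transform satisfies the absolutely convergent expansion exp(−iΨ) A exp(iΨ) = Σ_{k≥0} (1/k!) ad^k(A; Ψ), where ad(A;Ψ) = i(AΨ − ΨA) and ad^k is the k-fold iterated commutator. -/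
noncomputable section

open scoped Classical

variable {G Ξ : Type*}

/-- Powers of a symbol under composition (with the identity symbol as `0`th power). -/
def powSymb [Group G] [MulAction G Ξ] (ψ : G → Ξ → ℂ) : ℕ → G → Ξ → ℂ
  | 0 => fun θ _ => if θ = 1 then 1 else 0
  | n + 1 => compSymb ψ (powSymb ψ n)

/-- The symbol of `exp(zΨ)`, given by the exponential series `Σ_k z^k Ψ^k / k!`. -/
def expSymb [Group G] [MulAction G Ξ] (z : ℂ) (ψ : G → Ξ → ℂ) : G → Ξ → ℂ :=
  fun θ ξ => ∑' k : ℕ, z ^ k / (Nat.factorial k : ℂ) * powSymb ψ k θ ξ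


section Stmt12Aux
variable [Nonempty Ξ]
namespace Stmt12


/-- weight package -/
structure GoodW [Group G] [MulAction G Ξ] (w : Ξ → ℝ) (wG : G → ℝ) : Prop where
  hw : ∀ ξ, 1 ≤ w ξ
  hG : ∀ g : G, 1 ≤ wG g
  hG1 : wG (1 : G) = 1
  hsub : ∀ g h : G, wG (g * h) ≤ wG g * wG h
  hup : ∀ (h : G) (ξ : Ξ), w (h • ξ) ≤ w ξ * wG h
  hdown : ∀ (h : G) (ξ : Ξ), w ξ ≤ w (h • ξ) * wG h

variable [Group G] [MulAction G Ξ] {w : Ξ → ℝ} {wG : G → ℝ}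

theorem GoodW.wpos (hg : GoodW w wG) (ξ : Ξ) : (0:ℝ) < w ξ := lt_of_lt_of_le one_pos (hg.hw ξ)
theorem GoodW.Gpos (hg : GoodW w wG) (g : G) : (0:ℝ) < wG g := lt_of_lt_of_le one_pos (hg.hG g)

theorem GoodW.rpow_smul (hg : GoodW w wG) (γ : ℝ) (h : G) (ξ : Ξ) :
    w (h • ξ) ^ γ ≤ w ξ ^ γ * wG h ^ |γ| := by
  rcases le_or_gt 0 γ with hγ | hγ
  · rw [abs_of_nonneg hγ, ← Real.mul_rpow (le_of_lt (hg.wpos ξ)) (le_of_lt (hg.Gpos h))]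
    exact Real.rpow_le_rpow (le_of_lt (hg.wpos _)) (hg.hup h ξ) hγ
  · rw [abs_of_neg hγ]
    have h1 : w ξ / wG h ≤ w (h • ξ) := by
      rw [div_le_iff₀ (hg.Gpos h)]; exact hg.hdown h ξ
    have h2 : w (h • ξ) ^ γ ≤ (w ξ / wG h) ^ γ :=
      Real.rpow_le_rpow_of_nonpos (div_pos (hg.wpos ξ) (hg.Gpos h)) h1 (le_of_lt hγ)
    calc w (h • ξ) ^ γ ≤ (w ξ / wG h) ^ γ := h2
      _ = w ξ ^ γ * wG h ^ (-γ) := by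
          rw [Real.div_rpow (le_of_lt (hg.wpos ξ)) (le_of_lt (hg.Gpos h)),
            Real.rpow_neg (le_of_lt (hg.Gpos h)), div_eq_mul_inv]

theorem GoodW.rpow_sub (hg : GoodW w wG) {l : ℝ} (hl : 0 ≤ l) (g h : G) :
    wG (g * h) ^ l ≤ wG g ^ l * wG h ^ l := by
  rw [← Real.mul_rpow (le_of_lt (hg.Gpos g)) (le_of_lt (hg.Gpos h))]
  exact Real.rpow_le_rpow (le_of_lt (hg.Gpos _)) (hg.hsub g h) hl

theorem GoodW.rpow_G_nonneg (hg : GoodW w wG) (l : ℝ) (g : G) : 0 ≤ wG g ^ l :=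
  Real.rpow_nonneg (le_of_lt (hg.Gpos g)) l

theorem GoodW.one_le_rpow_G (hg : GoodW w wG) {l : ℝ} (hl : 0 ≤ l) (g : G) : 1 ≤ wG g ^ l :=
  Real.one_le_rpow (hg.hG g) hl

/-- majorant of a symbol of order `γ` -/
def IsMaj [Group G] [MulAction G Ξ] (w : Ξ → ℝ) (wG : G → ℝ) (b : G → Ξ → ℂ) (γ : ℝ)
    (m : G → ℝ) : Prop :=
  (∀ θ, 0 ≤ m θ) ∧ (∀ θ ξ, ‖b θ ξ‖ ≤ w ξ ^ γ * m θ) ∧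
    ∀ l : ℝ, 0 ≤ l → Summable fun θ => wG θ ^ l * m θ

theorem IsMaj.summ0 {b : G → Ξ → ℂ} {γ : ℝ} {m : G → ℝ}
    (hm : IsMaj w wG b γ m) : Summable m := by
  have := hm.2.2 0 le_rfl
  simpa [Real.rpow_zero] using this

theorem IsMaj.le_tsum {b : G → Ξ → ℂ} {γ : ℝ} {m : G → ℝ}
    (hm : IsMaj w wG b γ m) (θ : G) : m θ ≤ ∑' x, m x :=
  Summable.le_tsum hm.summ0 θ (fun _ _ => hm.1 _)
theorem IsMaj.order_congr {b : G → Ξ → ℂ} {γ γ' : ℝ} {m : G → ℝ}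
    (h : IsMaj w wG b γ m) (hγ : γ = γ') : IsMaj w wG b γ' m := hγ ▸ h

/-- convolution package -/
theorem conv_pack {f g : G → ℝ} (hf0 : ∀ x, 0 ≤ f x) (hg0 : ∀ x, 0 ≤ g x)
    (hf : Summable f) (hgs : Summable g) :
    Summable (fun p : G × G => f (p.1 * p.2⁻¹) * g p.2) ∧
      (∀ θ : G, Summable fun h => f (θ * h⁻¹) * g h) ∧
      Summable (fun θ : G => ∑' h, f (θ * h⁻¹) * g h) ∧
      ∑' θ : G, ∑' h, f (θ * h⁻¹) * g h = (∑' x, f x) * (∑' x, g x) := by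
  have base : Summable fun p : G × G => f p.1 * g p.2 :=
    hf.mul_of_nonneg hgs (fun x => hf0 x) (fun x => hg0 x)
  let e : G × G ≃ G × G :=
    ⟨fun p => (p.1 * p.2, p.2), fun p => (p.1 * p.2⁻¹, p.2),
      fun p => by simp, fun p => by simp⟩
  have hFs : Summable fun p : G × G => f (p.1 * p.2⁻¹) * g p.2 := by
    have : Summable ((fun p : G × G => f p.1 * g p.2) ∘ e.symm) :=
      e.symm.summable_iff.mpr base
    simpa [e, Function.comp_def] using this
  have hfiber : ∀ θ : G, Summable fun h => f (θ * h⁻¹) * g h := fun θ => hFs.prod_factor θ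
  have hmarg : HasSum (fun θ : G => ∑' h, f (θ * h⁻¹) * g h)
      (∑' p : G × G, f (p.1 * p.2⁻¹) * g p.2) :=
    hFs.hasSum.prod_fiberwise fun θ => (hfiber θ).hasSum
  refine ⟨hFs, hfiber, hmarg.summable, ?_⟩
  rw [hmarg.tsum_eq]
  have : ∑' p : G × G, f (p.1 * p.2⁻¹) * g p.2 = ∑' p : G × G, f p.1 * g p.2 := by
    rw [← e.symm.tsum_eq (fun p : G × G => f p.1 * g p.2)]
    simp [e, Function.comp]
  rw [this, Summable.tsum_mul_tsum hf hgs base]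



theorem maj_comp (hg : GoodW w wG) {a b : G → Ξ → ℂ} {γa γb : ℝ} {A B : G → ℝ}
    (ha : IsMaj w wG a γa A) (hb : IsMaj w wG b γb B) :
    (∀ (θ : G) (ξ : Ξ), Summable fun h => a (θ * h⁻¹) (h • ξ) * b h ξ) ∧
      IsMaj w wG (compSymb a b) (γa + γb)
        (fun θ => ∑' h, A (θ * h⁻¹) * (wG h ^ |γa| * B h)) ∧
      ∀ l : ℝ, 0 ≤ l →
        ∑' θ, wG θ ^ l * ∑' h, A (θ * h⁻¹) * (wG h ^ |γa| * B h) ≤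
          (∑' θ, wG θ ^ l * A θ) * (∑' θ, wG θ ^ (l + |γa|) * B θ) := by
  have hB'0 : ∀ h : G, 0 ≤ wG h ^ |γa| * B h := fun h =>
    mul_nonneg (Real.rpow_nonneg (le_of_lt (hg.Gpos h)) _) (hb.1 h)
  have hB's : Summable fun h => wG h ^ |γa| * B h := hb.2.2 _ (abs_nonneg _)
  have hAs : Summable A := ha.summ0
  obtain ⟨cpF, cpfib, cpmarg, cptsum⟩ := conv_pack ha.1 hB'0 hAs hB's
  -- pointwise norm bound
  have bound : ∀ (θ : G) (ξ : Ξ) (h : G),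
      ‖a (θ * h⁻¹) (h • ξ) * b h ξ‖ ≤
        (w ξ ^ γa * w ξ ^ γb) * (A (θ * h⁻¹) * (wG h ^ |γa| * B h)) := by
    intro θ ξ h
    have h1 : ‖a (θ * h⁻¹) (h • ξ)‖ ≤ (w ξ ^ γa * wG h ^ |γa|) * A (θ * h⁻¹) := by
      refine (ha.2.1 _ _).trans ?_
      exact mul_le_mul_of_nonneg_right (hg.rpow_smul γa h ξ) (ha.1 _)
    have h2 : ‖b h ξ‖ ≤ w ξ ^ γb * B h := hb.2.1 _ _
    calc ‖a (θ * h⁻¹) (h • ξ) * b h ξ‖ = ‖a (θ * h⁻¹) (h • ξ)‖ * ‖b h ξ‖ := norm_mul _ _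
      _ ≤ ((w ξ ^ γa * wG h ^ |γa|) * A (θ * h⁻¹)) * (w ξ ^ γb * B h) := by
          refine mul_le_mul h1 h2 (norm_nonneg _) ?_
          exact mul_nonneg (mul_nonneg (Real.rpow_nonneg (le_of_lt (hg.wpos ξ)) _)
            (Real.rpow_nonneg (le_of_lt (hg.Gpos h)) _)) (ha.1 _)
      _ = (w ξ ^ γa * w ξ ^ γb) * (A (θ * h⁻¹) * (wG h ^ |γa| * B h)) := by ring
  have hptsum : ∀ (θ : G) (ξ : Ξ), Summable fun h => a (θ * h⁻¹) (h • ξ) * b h ξ := by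
    intro θ ξ
    exact Summable.of_norm_bounded ((cpfib θ).mul_left _) (bound θ ξ)
  -- the step inequality for weighted sums
  have hWB : ∀ l : ℝ, 0 ≤ l → Summable fun x => wG x ^ l * (wG x ^ |γa| * B x) := by
    intro l hl
    refine (hb.2.2 (l + |γa|) (add_nonneg hl (abs_nonneg _))).congr fun x => ?_
    rw [Real.rpow_add (hg.Gpos x), mul_assoc]
  have cpl : ∀ l : ℝ, 0 ≤ l → _ := fun l hl =>
    conv_pack (f := fun x => wG x ^ l * A x) (g := fun x => wG x ^ l * (wG x ^ |γa| * B x))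
      (fun x => mul_nonneg (Real.rpow_nonneg (le_of_lt (hg.Gpos x)) _) (ha.1 x))
      (fun x => mul_nonneg (Real.rpow_nonneg (le_of_lt (hg.Gpos x)) _) (hB'0 x))
      (ha.2.2 l hl) (hWB l hl)
  have hWB' : ∀ l : ℝ, 0 ≤ l → ∀ θ : G,
      Summable fun h => (wG (θ * h⁻¹) ^ l * A (θ * h⁻¹)) * (wG h ^ l * (wG h ^ |γa| * B h)) :=
    fun l hl θ => (cpl l hl).2.1 θ
  have step : ∀ (l : ℝ), 0 ≤ l → ∀ θ : G,
      wG θ ^ l * ∑' h, A (θ * h⁻¹) * (wG h ^ |γa| * B h) ≤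
        ∑' h, (wG (θ * h⁻¹) ^ l * A (θ * h⁻¹)) * (wG h ^ l * (wG h ^ |γa| * B h)) := by
    intro l hl θ
    rw [← tsum_mul_left]
    refine Summable.tsum_le_tsum ?_ ((cpfib θ).mul_left _) ?_
    · intro h
      have hθ : wG θ ^ l ≤ wG (θ * h⁻¹) ^ l * wG h ^ l := by
        have : θ = (θ * h⁻¹) * h := by group
        calc wG θ ^ l = wG ((θ * h⁻¹) * h) ^ l := by rw [← this]
          _ ≤ wG (θ * h⁻¹) ^ l * wG h ^ l := hg.rpow_sub hl _ _
      calc wG θ ^ l * (A (θ * h⁻¹) * (wG h ^ |γa| * B h))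
          ≤ (wG (θ * h⁻¹) ^ l * wG h ^ l) * (A (θ * h⁻¹) * (wG h ^ |γa| * B h)) :=
            mul_le_mul_of_nonneg_right hθ (mul_nonneg (ha.1 _) (hB'0 h))
        _ = (wG (θ * h⁻¹) ^ l * A (θ * h⁻¹)) * (wG h ^ l * (wG h ^ |γa| * B h)) := by ring
    · exact hWB' l hl θ
  -- summable of weighted majorant and final bound
  refine ⟨hptsum, ⟨?_, ?_, ?_⟩, ?_⟩
  · intro θ
    exact tsum_nonneg fun h => mul_nonneg (ha.1 _) (hB'0 h)
  · intro θ ξ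
    have hns : Summable fun h => ‖a (θ * h⁻¹) (h • ξ) * b h ξ‖ :=
      Summable.of_nonneg_of_le (fun h => norm_nonneg _) (bound θ ξ) ((cpfib θ).mul_left _)
    calc ‖compSymb a b θ ξ‖ ≤ ∑' h, ‖a (θ * h⁻¹) (h • ξ) * b h ξ‖ :=
          norm_tsum_le_tsum_norm hns
      _ ≤ ∑' h, (w ξ ^ γa * w ξ ^ γb) * (A (θ * h⁻¹) * (wG h ^ |γa| * B h)) :=
          Summable.tsum_le_tsum (bound θ ξ) hns ((cpfib θ).mul_left _)
      _ = (w ξ ^ γa * w ξ ^ γb) * ∑' h, A (θ * h⁻¹) * (wG h ^ |γa| * B h) := tsum_mul_left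
      _ = w ξ ^ (γa + γb) * ∑' h, A (θ * h⁻¹) * (wG h ^ |γa| * B h) := by
          rw [← Real.rpow_add (hg.wpos ξ)]
  · intro l hl
    exact Summable.of_nonneg_of_le
      (fun θ => mul_nonneg (Real.rpow_nonneg (le_of_lt (hg.Gpos θ)) _)
        (tsum_nonneg fun h => mul_nonneg (ha.1 _) (hB'0 h)))
      (step l hl) (cpl l hl).2.2.1
  · intro l hl
    calc ∑' θ, wG θ ^ l * ∑' h, A (θ * h⁻¹) * (wG h ^ |γa| * B h)
        ≤ ∑' θ, ∑' h, (wG (θ * h⁻¹) ^ l * A (θ * h⁻¹)) * (wG h ^ l * (wG h ^ |γa| * B h)) := by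
          refine Summable.tsum_le_tsum (step l hl) ?_ (cpl l hl).2.2.1
          exact Summable.of_nonneg_of_le
            (fun θ => mul_nonneg (Real.rpow_nonneg (le_of_lt (hg.Gpos θ)) _)
              (tsum_nonneg fun h => mul_nonneg (ha.1 _) (hB'0 h)))
            (step l hl) (cpl l hl).2.2.1
      _ = (∑' x, wG x ^ l * A x) * (∑' x, wG x ^ l * (wG x ^ |γa| * B x)) := (cpl l hl).2.2.2
      _ = (∑' θ, wG θ ^ l * A θ) * (∑' θ, wG θ ^ (l + |γa|) * B θ) := by
          congr 1
          exact tsum_congr fun x => by rw [Real.rpow_add (hg.Gpos x), mul_assoc]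


theorem maj_of_hasOrder [Nonempty Ξ] (hg : GoodW w wG) {b : G → Ξ → ℂ} {γ : ℝ}
    (hb : HasOrder w wG b γ) :
    IsMaj w wG b γ (fun θ => ⨆ ξ : Ξ, w ξ ^ (-γ) * ‖b θ ξ‖) := by
  refine ⟨fun θ => Real.iSup_nonneg fun ξ =>
    mul_nonneg (Real.rpow_nonneg (le_of_lt (hg.wpos ξ)) _) (norm_nonneg _), ?_, hb.2⟩
  intro θ ξ
  have h1 : w ξ ^ (-γ) * ‖b θ ξ‖ ≤ ⨆ ξ : Ξ, w ξ ^ (-γ) * ‖b θ ξ‖ := le_ciSup (hb.1 θ) ξ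
  calc ‖b θ ξ‖ = w ξ ^ γ * (w ξ ^ (-γ) * ‖b θ ξ‖) := by
        rw [← mul_assoc, ← Real.rpow_add (hg.wpos ξ), add_neg_cancel, Real.rpow_zero, one_mul]
    _ ≤ w ξ ^ γ * ⨆ ξ : Ξ, w ξ ^ (-γ) * ‖b θ ξ‖ :=
        mul_le_mul_of_nonneg_left h1 (Real.rpow_nonneg (le_of_lt (hg.wpos ξ)) _)

theorem snorm_le_of_maj [Nonempty Ξ] (hg : GoodW w wG) {b : G → Ξ → ℂ} {γ : ℝ} {m : G → ℝ}
    (hm : IsMaj w wG b γ m) {l : ℝ} (hl : 0 ≤ l) :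
    0 ≤ snorm w wG b γ l ∧ snorm w wG b γ l ≤ ∑' θ, wG θ ^ l * m θ := by
  have hsup : ∀ θ : G, (⨆ ξ : Ξ, w ξ ^ (-γ) * ‖b θ ξ‖) ≤ m θ := by
    intro θ
    refine ciSup_le fun ξ => ?_
    calc w ξ ^ (-γ) * ‖b θ ξ‖ ≤ w ξ ^ (-γ) * (w ξ ^ γ * m θ) :=
          mul_le_mul_of_nonneg_left (hm.2.1 θ ξ) (Real.rpow_nonneg (le_of_lt (hg.wpos ξ)) _)
      _ = m θ := by
          rw [← mul_assoc, ← Real.rpow_add (hg.wpos ξ), neg_add_cancel, Real.rpow_zero, one_mul]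
  have hterm0 : ∀ θ : G, 0 ≤ wG θ ^ l * ⨆ ξ : Ξ, w ξ ^ (-γ) * ‖b θ ξ‖ := fun θ =>
    mul_nonneg (Real.rpow_nonneg (le_of_lt (hg.Gpos θ)) _)
      (Real.iSup_nonneg fun ξ =>
        mul_nonneg (Real.rpow_nonneg (le_of_lt (hg.wpos ξ)) _) (norm_nonneg _))
  have hle : ∀ θ : G, wG θ ^ l * (⨆ ξ : Ξ, w ξ ^ (-γ) * ‖b θ ξ‖) ≤ wG θ ^ l * m θ := fun θ =>
    mul_le_mul_of_nonneg_left (hsup θ) (Real.rpow_nonneg (le_of_lt (hg.Gpos θ)) _)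
  have hs : Summable fun θ : G => wG θ ^ l * ⨆ ξ : Ξ, w ξ ^ (-γ) * ‖b θ ξ‖ :=
    Summable.of_nonneg_of_le hterm0 hle (hm.2.2 l hl)
  exact ⟨tsum_nonneg hterm0, Summable.tsum_le_tsum hle hs (hm.2.2 l hl)⟩

theorem maj_delta (hg : GoodW w wG) :
    IsMaj w wG (fun (θ : G) (_ : Ξ) => if θ = 1 then (1:ℂ) else 0) 0
      (fun θ => if θ = 1 then (1:ℝ) else 0) ∧
      ∀ l : ℝ, (∑' θ : G, wG θ ^ l * (if θ = 1 then (1:ℝ) else 0)) = 1 := by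
  constructor
  · refine ⟨fun θ => by dsimp only; split <;> norm_num, fun θ ξ => ?_, fun l hl => ?_⟩
    · dsimp only
      rw [Real.rpow_zero, one_mul]
      split <;> simp
    · refine summable_of_ne_finset_zero (s := {1}) fun θ hθ => ?_
      simp only [Finset.mem_singleton] at hθ
      simp [hθ]
  · intro l
    rw [tsum_eq_single (1 : G) (fun θ hθ => by simp [hθ])]
    simp [hg.hG1]

theorem maj_pow (hg : GoodW w wG) {ψ : G → Ξ → ℂ} {P : G → ℝ} (hP : IsMaj w wG ψ 0 P) (k : ℕ) :
    ∃ Pk : G → ℝ, IsMaj w wG (powSymb ψ k) 0 Pk ∧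
      ∀ l : ℝ, 0 ≤ l → ∑' θ, wG θ ^ l * Pk θ ≤ (∑' θ, wG θ ^ l * P θ) ^ k := by
  induction k with
  | zero =>
    exact ⟨_, (maj_delta hg).1, fun l hl => le_of_eq (by rw [(maj_delta hg).2 l, pow_zero])⟩
  | succ k ih =>
    obtain ⟨Pk, hPk, hbd⟩ := ih
    obtain ⟨_, hM, hTB⟩ := maj_comp hg hP hPk
    refine ⟨_, hM.order_congr (by norm_num), fun l hl => ?_⟩
    refine (hTB l hl).trans ?_
    rw [pow_succ']
    have h1 : (0:ℝ) ≤ ∑' θ, wG θ ^ l * P θ :=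
      tsum_nonneg fun θ => mul_nonneg (Real.rpow_nonneg (le_of_lt (hg.Gpos θ)) _) (hP.1 θ)
    have h2 : ∑' θ, wG θ ^ (l + |(0:ℝ)|) * Pk θ ≤ (∑' θ, wG θ ^ l * P θ) ^ k := by
      simpa using hbd l hl
    exact mul_le_mul_of_nonneg_left h2 h1

theorem maj_I_sub {x y : G → Ξ → ℂ} {γ : ℝ} {mx my : G → ℝ}
    (hx : IsMaj w wG x γ mx) (hy : IsMaj w wG y γ my) :
    IsMaj w wG (fun θ ξ => Complex.I * (x θ ξ - y θ ξ)) γ (fun θ => mx θ + my θ) := by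
  refine ⟨fun θ => add_nonneg (hx.1 θ) (hy.1 θ), fun θ ξ => ?_, fun l hl => ?_⟩
  · rw [norm_mul, Complex.norm_I, one_mul, mul_add]
    exact (norm_sub_le _ _).trans (add_le_add (hx.2.1 θ ξ) (hy.2.1 θ ξ))
  · exact ((hx.2.2 l hl).add (hy.2.2 l hl)).congr fun θ => (mul_add _ _ _).symm

theorem maj_ad (hg : GoodW w wG) {ψ a : G → Ξ → ℂ} {α : ℝ} {P A : G → ℝ}
    (hP : IsMaj w wG ψ 0 P) (hA : IsMaj w wG a α A) (k : ℕ) :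
    ∃ Mk : G → ℝ, IsMaj w wG ((fun s => adSymb s ψ)^[k] a) α Mk ∧
      ∀ l : ℝ, 0 ≤ l → ∑' θ, wG θ ^ l * Mk θ ≤
        ((∑' θ, wG θ ^ (l + |α|) * P θ) + ∑' θ, wG θ ^ l * P θ) ^ k * ∑' θ, wG θ ^ l * A θ := by
  induction k with
  | zero => exact ⟨A, by simpa using hA, fun l hl => le_of_eq (by rw [pow_zero, one_mul])⟩
  | succ k ih =>
    obtain ⟨Mk, hMk, hbd⟩ := ih
    obtain ⟨_, hm1, hTB1⟩ := maj_comp hg hMk hP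
    obtain ⟨_, hm2, hTB2⟩ := maj_comp hg hP hMk
    have hm1' := hm1.order_congr (add_zero α)
    have hm2' := hm2.order_congr (zero_add α)
    refine ⟨fun θ => (∑' h, Mk (θ * h⁻¹) * (wG h ^ |α| * P h)) +
        ∑' h, P (θ * h⁻¹) * (wG h ^ |(0:ℝ)| * Mk h), ?_, fun l hl => ?_⟩
    · rw [Function.iterate_succ_apply']
      exact maj_I_sub hm1' hm2'
    · have hsum1 := hm1'.2.2 l hl
      have hsum2 := hm2'.2.2 l hl
      have htsum : (∑' θ, wG θ ^ l * ((fun θ => ∑' h, Mk (θ * h⁻¹) * (wG h ^ |α| * P h)) θ +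
          (fun θ => ∑' h, P (θ * h⁻¹) * (wG h ^ |(0:ℝ)| * Mk h)) θ)) =
          (∑' θ, wG θ ^ l * ∑' h, Mk (θ * h⁻¹) * (wG h ^ |α| * P h)) +
          ∑' θ, wG θ ^ l * ∑' h, P (θ * h⁻¹) * (wG h ^ |(0:ℝ)| * Mk h) := by
        rw [← Summable.tsum_add hsum1 hsum2]
        exact tsum_congr fun θ => mul_add _ _ _
      rw [htsum]
      set SP := ∑' θ, wG θ ^ l * P θ with hSP
      set SP' := ∑' θ, wG θ ^ (l + |α|) * P θ with hSP'
      set SA := ∑' θ, wG θ ^ l * A θ with hSA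
      set SM := ∑' θ, wG θ ^ l * Mk θ with hSM
      have hSMnn : 0 ≤ SM := tsum_nonneg fun θ =>
        mul_nonneg (Real.rpow_nonneg (le_of_lt (hg.Gpos θ)) _) (hMk.1 θ)
      have hSPnn : 0 ≤ SP := tsum_nonneg fun θ =>
        mul_nonneg (Real.rpow_nonneg (le_of_lt (hg.Gpos θ)) _) (hP.1 θ)
      have hSP'nn : 0 ≤ SP' := tsum_nonneg fun θ =>
        mul_nonneg (Real.rpow_nonneg (le_of_lt (hg.Gpos θ)) _) (hP.1 θ)
      have hSAnn : 0 ≤ SA := tsum_nonneg fun θ =>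
        mul_nonneg (Real.rpow_nonneg (le_of_lt (hg.Gpos θ)) _) (hA.1 θ)
      have h1 : ∑' θ, wG θ ^ l * ∑' h, Mk (θ * h⁻¹) * (wG h ^ |α| * P h) ≤ SM * SP' :=
        hTB1 l hl
      have h2 : ∑' θ, wG θ ^ l * ∑' h, P (θ * h⁻¹) * (wG h ^ |(0:ℝ)| * Mk h) ≤ SP * SM := by
        refine (hTB2 l hl).trans ?_
        have : ∑' θ, wG θ ^ (l + |(0:ℝ)|) * Mk θ = SM := by simp [hSM]
        rw [this]
      calc _ ≤ SM * SP' + SP * SM := add_le_add h1 h2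
        _ = SM * (SP' + SP) := by ring
        _ ≤ ((SP' + SP) ^ k * SA) * (SP' + SP) :=
            mul_le_mul_of_nonneg_right (hbd l hl) (add_nonneg hSP'nn hSPnn)
        _ = (SP' + SP) ^ (k + 1) * SA := by ring


theorem comp_delta_right (b : G → Ξ → ℂ) (θ : G) (ξ : Ξ) :
    compSymb b (fun θ _ => if θ = 1 then (1:ℂ) else 0) θ ξ = b θ ξ := by
  unfold compSymb
  rw [tsum_eq_single (1 : G) (fun h hh => by simp [hh])]
  simp

theorem comp_delta_left (b : G → Ξ → ℂ) (θ : G) (ξ : Ξ) :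
    compSymb (fun θ _ => if θ = 1 then (1:ℂ) else 0) b θ ξ = b θ ξ := by
  unfold compSymb
  rw [tsum_eq_single θ (fun h hh => by
    dsimp only
    rw [if_neg (fun e => hh (mul_inv_eq_one.mp e).symm), zero_mul])]
  simp

theorem comp_assoc (hg : GoodW w wG) {a b c : G → Ξ → ℂ} {γa γb γc : ℝ} {A B C : G → ℝ}
    (ha : IsMaj w wG a γa A) (hb : IsMaj w wG b γb B) (hc : IsMaj w wG c γc C)
    (θ : G) (ξ : Ξ) :
    compSymb a (compSymb b c) θ ξ = compSymb (compSymb a b) c θ ξ := by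
  set F : G × G → ℂ := fun p =>
    a (θ * p.1⁻¹) (p.1 • ξ) * (b (p.1 * p.2⁻¹) (p.2 • ξ) * c p.2 ξ) with hF
  -- summability of F
  have hf10 : ∀ x : G, 0 ≤ wG x ^ |γa| * B x := fun x =>
    mul_nonneg (Real.rpow_nonneg (le_of_lt (hg.Gpos x)) _) (hb.1 x)
  have hg10 : ∀ x : G, 0 ≤ wG x ^ (|γa| + |γb|) * C x := fun x =>
    mul_nonneg (Real.rpow_nonneg (le_of_lt (hg.Gpos x)) _) (hc.1 x)
  have hf1s : Summable fun x => wG x ^ |γa| * B x := hb.2.2 _ (abs_nonneg _)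
  have hg1s : Summable fun x => wG x ^ (|γa| + |γb|) * C x :=
    hc.2.2 _ (add_nonneg (abs_nonneg _) (abs_nonneg _))
  obtain ⟨base, -, -, -⟩ := conv_pack hf10 hg10 hf1s hg1s
  set K : ℝ := ((w ξ ^ γa * w ξ ^ γb) * w ξ ^ γc) * ∑' x, A x with hK
  have wnn : ∀ γ : ℝ, (0:ℝ) ≤ w ξ ^ γ := fun γ => Real.rpow_nonneg (le_of_lt (hg.wpos ξ)) _
  have Gnn : ∀ (x : G) (γ : ℝ), (0:ℝ) ≤ wG x ^ γ := fun x γ =>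
    Real.rpow_nonneg (le_of_lt (hg.Gpos x)) _
  have TAnn : (0:ℝ) ≤ ∑' x, A x := tsum_nonneg ha.1
  have Knn : (0:ℝ) ≤ K := by
    rw [hK]
    exact mul_nonneg (mul_nonneg (mul_nonneg (wnn _) (wnn _)) (wnn _)) TAnn
  have boundF : ∀ p : G × G,
      ‖F p‖ ≤ K * ((wG (p.1 * p.2⁻¹) ^ |γa| * B (p.1 * p.2⁻¹)) *
        (wG p.2 ^ (|γa| + |γb|) * C p.2)) := by
    rintro ⟨h, g⟩
    have hA1 : ‖a (θ * h⁻¹) (h • ξ)‖ ≤ (w ξ ^ γa * wG h ^ |γa|) * ∑' x, A x := by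
      refine (ha.2.1 _ _).trans ?_
      refine (mul_le_mul_of_nonneg_right (hg.rpow_smul γa h ξ) (ha.1 _)).trans ?_
      exact mul_le_mul_of_nonneg_left (ha.le_tsum _)
        (mul_nonneg (wnn _) (Gnn _ _))
    have hB1 : ‖b (h * g⁻¹) (g • ξ)‖ ≤ (w ξ ^ γb * wG g ^ |γb|) * B (h * g⁻¹) := by
      refine (hb.2.1 _ _).trans ?_
      exact mul_le_mul_of_nonneg_right (hg.rpow_smul γb g ξ) (hb.1 _)
    have hC1 : ‖c g ξ‖ ≤ w ξ ^ γc * C g := hc.2.1 _ _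
    have hGsplit : wG h ^ |γa| ≤ wG (h * g⁻¹) ^ |γa| * wG g ^ |γa| := by
      have e : h = (h * g⁻¹) * g := by group
      calc wG h ^ |γa| = wG ((h * g⁻¹) * g) ^ |γa| := by rw [← e]
        _ ≤ wG (h * g⁻¹) ^ |γa| * wG g ^ |γa| := hg.rpow_sub (abs_nonneg _) _ _
    have hBnn : (0:ℝ) ≤ B (h * g⁻¹) := hb.1 _
    have hCnn : (0:ℝ) ≤ C g := hc.1 _
    calc ‖F (h, g)‖ = ‖a (θ * h⁻¹) (h • ξ)‖ * (‖b (h * g⁻¹) (g • ξ)‖ * ‖c g ξ‖) := by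
          simp [hF, norm_mul]
      _ ≤ ((w ξ ^ γa * wG h ^ |γa|) * ∑' x, A x) *
            (((w ξ ^ γb * wG g ^ |γb|) * B (h * g⁻¹)) * (w ξ ^ γc * C g)) := by
          refine mul_le_mul hA1 ?_ (mul_nonneg (norm_nonneg _) (norm_nonneg _))
            (mul_nonneg (mul_nonneg (wnn _) (Gnn _ _)) TAnn)
          exact mul_le_mul hB1 hC1 (norm_nonneg _)
            (mul_nonneg (mul_nonneg (wnn _) (Gnn _ _)) hBnn)
      _ = K * (wG h ^ |γa| * (B (h * g⁻¹) * (wG g ^ |γb| * C g))) := by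
          rw [hK]; ring
      _ ≤ K * ((wG (h * g⁻¹) ^ |γa| * wG g ^ |γa|) * (B (h * g⁻¹) * (wG g ^ |γb| * C g))) := by
          refine mul_le_mul_of_nonneg_left ?_ Knn
          exact mul_le_mul_of_nonneg_right hGsplit
            (mul_nonneg hBnn (mul_nonneg (Gnn _ _) hCnn))
      _ = K * ((wG (h * g⁻¹) ^ |γa| * B (h * g⁻¹)) * (wG g ^ (|γa| + |γb|) * C g)) := by
          rw [Real.rpow_add (hg.Gpos g)]; ring
  have hFs : Summable F := Summable.of_norm_bounded (base.mul_left K) boundF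
  have hfib : ∀ h : G, Summable fun g => F (h, g) := fun h => hFs.prod_factor h
  have lhs1 : compSymb a (compSymb b c) θ ξ = ∑' h, ∑' g, F (h, g) := by
    refine tsum_congr fun h => ?_
    exact (tsum_mul_left).symm
  have swap : ∑' h, ∑' g, F (h, g) = ∑' g, ∑' h, F (h, g) := by
    have h2 : Summable (Function.uncurry fun h g => F (h, g)) := by
      refine hFs.congr fun p => ?_
      rfl
    exact (Summable.tsum_comm' h2 (fun h => hFs.prod_factor h)
      (fun g => hFs.prod_symm.prod_factor g)).symm
  have inner : ∀ g : G, ∑' h, F (h, g) = compSymb a b (θ * g⁻¹) (g • ξ) * c g ξ := by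
    intro g
    have reix : ∀ h : G,
        a ((θ * g⁻¹) * (h * g⁻¹)⁻¹) ((h * g⁻¹) • (g • ξ)) * b (h * g⁻¹) (g • ξ) =
          a (θ * h⁻¹) (h • ξ) * b (h * g⁻¹) (g • ξ) := by
      intro h
      have e1 : (θ * g⁻¹) * (h * g⁻¹)⁻¹ = θ * h⁻¹ := by group
      have e2 : (h * g⁻¹) • (g • ξ) = h • ξ := by rw [smul_smul]; congr 1; group
      rw [e1, e2]
    calc ∑' h, F (h, g) = ∑' h, (a (θ * h⁻¹) (h • ξ) * b (h * g⁻¹) (g • ξ)) * c g ξ :=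
          tsum_congr fun h => by rw [hF]; ring
      _ = (∑' h, a (θ * h⁻¹) (h • ξ) * b (h * g⁻¹) (g • ξ)) * c g ξ := tsum_mul_right
      _ = compSymb a b (θ * g⁻¹) (g • ξ) * c g ξ := by
          congr 1
          have := (Equiv.mulRight g⁻¹).tsum_eq
            (fun h' => a ((θ * g⁻¹) * h'⁻¹) (h' • (g • ξ)) * b h' (g • ξ))
          simp only [Equiv.coe_mulRight] at this
          rw [show compSymb a b (θ * g⁻¹) (g • ξ) =
            ∑' h', a ((θ * g⁻¹) * h'⁻¹) (h' • (g • ξ)) * b h' (g • ξ) from rfl, ← this]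
          exact tsum_congr fun h => (reix h).symm
  rw [lhs1, swap]
  exact tsum_congr fun g => inner g


theorem pow_succ_right (hg : GoodW w wG) {ψ : G → Ξ → ℂ} {P : G → ℝ}
    (hP : IsMaj w wG ψ 0 P) (k : ℕ) :
    powSymb ψ (k + 1) = compSymb (powSymb ψ k) ψ := by
  induction k with
  | zero =>
    funext θ ξ
    show compSymb ψ (powSymb ψ 0) θ ξ = compSymb (powSymb ψ 0) ψ θ ξ
    rw [show powSymb ψ 0 = (fun (θ : G) (_ : Ξ) => if θ = 1 then (1:ℂ) else 0) from rfl,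
      comp_delta_right, comp_delta_left]
  | succ k ih =>
    obtain ⟨Pk, hPk, -⟩ := maj_pow hg hP k
    funext θ ξ
    show compSymb ψ (powSymb ψ (k + 1)) θ ξ = compSymb (powSymb ψ (k + 1)) ψ θ ξ
    conv_lhs => rw [ih]
    rw [comp_assoc hg hP hPk hP θ ξ]
    rfl

theorem pow_add (hg : GoodW w wG) {ψ : G → Ξ → ℂ} {P : G → ℝ}
    (hP : IsMaj w wG ψ 0 P) (j m : ℕ) :
    powSymb ψ (j + m) = compSymb (powSymb ψ j) (powSymb ψ m) := by
  induction j with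
  | zero =>
    funext θ ξ
    rw [Nat.zero_add]
    exact (comp_delta_left (powSymb ψ m) θ ξ).symm
  | succ j ih =>
    obtain ⟨Pj, hPj, -⟩ := maj_pow hg hP j
    obtain ⟨Pm, hPm, -⟩ := maj_pow hg hP m
    funext θ ξ
    have e : j + 1 + m = (j + m) + 1 := by omega
    rw [e]
    show compSymb ψ (powSymb ψ (j + m)) θ ξ = compSymb (powSymb ψ (j + 1)) (powSymb ψ m) θ ξ
    rw [ih]
    show compSymb ψ (compSymb (powSymb ψ j) (powSymb ψ m)) θ ξ
      = compSymb (compSymb ψ (powSymb ψ j)) (powSymb ψ m) θ ξ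
    exact comp_assoc hg hP hPj hPm θ ξ

theorem comp_sum_left (hg : GoodW w wG) {ι : Type*} {s : Finset ι} {f : ι → G → Ξ → ℂ}
    {γ : ℝ} {mf : ι → G → ℝ} (hf : ∀ i ∈ s, IsMaj w wG (f i) γ (mf i))
    {b : G → Ξ → ℂ} {γb : ℝ} {mb : G → ℝ} (hb : IsMaj w wG b γb mb) (θ : G) (ξ : Ξ) :
    compSymb (fun θ ξ => ∑ i ∈ s, f i θ ξ) b θ ξ = ∑ i ∈ s, compSymb (f i) b θ ξ := by
  unfold compSymb
  calc (∑' h : G, (∑ i ∈ s, f i (θ * h⁻¹) (h • ξ)) * b h ξ)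
      = ∑' h : G, ∑ i ∈ s, f i (θ * h⁻¹) (h • ξ) * b h ξ :=
        tsum_congr fun h => Finset.sum_mul _ _ _
    _ = ∑ i ∈ s, ∑' h : G, f i (θ * h⁻¹) (h • ξ) * b h ξ :=
        Summable.tsum_finsetSum fun i hi => (maj_comp hg (hf i hi) hb).1 θ ξ

theorem comp_sum_right (hg : GoodW w wG) {ι : Type*} {s : Finset ι} {f : ι → G → Ξ → ℂ}
    {γ : ℝ} {mf : ι → G → ℝ} (hf : ∀ i ∈ s, IsMaj w wG (f i) γ (mf i))
    {b : G → Ξ → ℂ} {γb : ℝ} {mb : G → ℝ} (hb : IsMaj w wG b γb mb) (θ : G) (ξ : Ξ) :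
    compSymb b (fun θ ξ => ∑ i ∈ s, f i θ ξ) θ ξ = ∑ i ∈ s, compSymb b (f i) θ ξ := by
  unfold compSymb
  calc (∑' h : G, b (θ * h⁻¹) (h • ξ) * ∑ i ∈ s, f i h ξ)
      = ∑' h : G, ∑ i ∈ s, b (θ * h⁻¹) (h • ξ) * f i h ξ :=
        tsum_congr fun h => Finset.mul_sum _ _ _
    _ = ∑ i ∈ s, ∑' h : G, b (θ * h⁻¹) (h • ξ) * f i h ξ :=
        Summable.tsum_finsetSum fun i hi => (maj_comp hg hb (hf i hi)).1 θ ξ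


theorem tsum_antidiag {F : ℕ × ℕ → ℂ} (h : Summable F) :
    ∑' p : ℕ × ℕ, F p = ∑' n : ℕ, ∑ p ∈ Finset.HasAntidiagonal.antidiagonal n, F p := by
  have hs : Summable (F ∘ Finset.HasAntidiagonal.sigmaAntidiagonalEquivProd) :=
    Finset.HasAntidiagonal.sigmaAntidiagonalEquivProd.summable_iff.mpr h
  calc ∑' p : ℕ × ℕ, F p
      = ∑' x : Σ n : ℕ, {p : ℕ × ℕ // p ∈ Finset.HasAntidiagonal.antidiagonal n},
          F (Finset.HasAntidiagonal.sigmaAntidiagonalEquivProd x) :=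
        (Finset.HasAntidiagonal.sigmaAntidiagonalEquivProd.tsum_eq F).symm
    _ = ∑' (n : ℕ) (p : {p : ℕ × ℕ // p ∈ Finset.HasAntidiagonal.antidiagonal n}),
          F (Finset.HasAntidiagonal.sigmaAntidiagonalEquivProd ⟨n, p⟩) :=
        Summable.tsum_sigma' (fun n => (hasSum_fintype _).summable) (hs.congr fun _ => rfl)
    _ = ∑' n : ℕ, ∑ p ∈ Finset.HasAntidiagonal.antidiagonal n, F p := by
        refine tsum_congr fun n => ?_
        rw [← Finset.sum_finset_coe]
        exact tsum_fintype _

theorem master (hg : GoodW w wG) {ψ : G → Ξ → ℂ} {P : G → ℝ} (hP : IsMaj w wG ψ 0 P)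
    (z : ℂ) {c : ℕ → ℂ} {r : ℕ → G → Ξ → ℂ} {γ : ℝ} {R : ℕ → G → ℝ}
    (hr : ∀ m, IsMaj w wG (r m) γ (R m))
    (hcR : Summable fun p : ℕ × G => ‖c p.1‖ * R p.1 p.2)
    {B : G → Ξ → ℂ} (hB : ∀ θ ξ, B θ ξ = ∑' m, c m * r m θ ξ) (θ : G) (ξ : Ξ) :
    Summable (fun q : ℕ × ℕ => (z ^ q.1 / (Nat.factorial q.1 : ℂ) * c q.2) *
        compSymb (powSymb ψ q.1) (r q.2) θ ξ) ∧
      compSymb (expSymb z ψ) B θ ξ =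
        ∑' q : ℕ × ℕ, (z ^ q.1 / (Nat.factorial q.1 : ℂ) * c q.2) *
          compSymb (powSymb ψ q.1) (r q.2) θ ξ := by
  choose Pk hPk hPkb using maj_pow hg hP
  set Q : ℝ := ∑' x, P x with hQ
  have hQnn : 0 ≤ Q := tsum_nonneg hP.1
  have hT : ∀ k, ∑' x, Pk k x ≤ Q ^ k := by
    intro k
    have := hPkb k 0 le_rfl
    simpa [Real.rpow_zero] using this
  set F : G × (ℕ × ℕ) → ℂ := fun p =>
    (z ^ p.2.1 / (Nat.factorial p.2.1 : ℂ) * powSymb ψ p.2.1 (θ * p.1⁻¹) (p.1 • ξ)) *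
      (c p.2.2 * r p.2.2 p.1 ξ) with hF
  -- majorant for F
  have hu : Summable fun j : ℕ => ‖z‖ ^ j / (Nat.factorial j : ℝ) * Q ^ j := by
    refine (Real.summable_pow_div_factorial (‖z‖ * Q)).congr fun j => ?_
    rw [mul_pow]; ring
  have hu0 : ∀ j : ℕ, 0 ≤ ‖z‖ ^ j / (Nat.factorial j : ℝ) * Q ^ j := fun j =>
    mul_nonneg (div_nonneg (pow_nonneg (norm_nonneg _) _) (Nat.cast_nonneg _))
      (pow_nonneg hQnn _)
  have hv : Summable fun p : ℕ × G => w ξ ^ γ * (‖c p.1‖ * R p.1 p.2) := hcR.mul_left _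
  have hv0 : ∀ p : ℕ × G, 0 ≤ w ξ ^ γ * (‖c p.1‖ * R p.1 p.2) := fun p =>
    mul_nonneg (Real.rpow_nonneg (le_of_lt (hg.wpos ξ)) _)
      (mul_nonneg (norm_nonneg _) ((hr p.1).1 p.2))
  have hprod : Summable fun q : ℕ × (ℕ × G) =>
      (‖z‖ ^ q.1 / (Nat.factorial q.1 : ℝ) * Q ^ q.1) *
        (w ξ ^ γ * (‖c q.2.1‖ * R q.2.1 q.2.2)) :=
    hu.mul_of_nonneg hv (fun j => hu0 j) (fun p => hv0 p)
  let e : (G × (ℕ × ℕ)) ≃ (ℕ × (ℕ × G)) :=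
    ⟨fun p => (p.2.1, (p.2.2, p.1)), fun q => (q.2.2, (q.1, q.2.1)),
      fun p => rfl, fun q => rfl⟩
  have hmaj : Summable fun p : G × (ℕ × ℕ) =>
      (‖z‖ ^ p.2.1 / (Nat.factorial p.2.1 : ℝ) * Q ^ p.2.1) *
        (w ξ ^ γ * (‖c p.2.2‖ * R p.2.2 p.1)) := by
    refine (e.summable_iff.mpr hprod).congr fun p => ?_
    rfl
  -- norm bounds
  have npow : ∀ (j : ℕ) (x : G) (η : Ξ), ‖powSymb ψ j x η‖ ≤ Q ^ j := by
    intro j x η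
    calc ‖powSymb ψ j x η‖ ≤ w η ^ (0:ℝ) * Pk j x := (hPk j).2.1 x η
      _ = Pk j x := by rw [Real.rpow_zero, one_mul]
      _ ≤ ∑' x, Pk j x := (hPk j).le_tsum x
      _ ≤ Q ^ j := hT j
  have n1 : ∀ (j : ℕ) (x : G) (η : Ξ),
      ‖z ^ j / (Nat.factorial j : ℂ) * powSymb ψ j x η‖ ≤
        ‖z‖ ^ j / (Nat.factorial j : ℝ) * Q ^ j := by
    intro j x η
    rw [norm_mul, norm_div, norm_pow]
    have : ‖(Nat.factorial j : ℂ)‖ = (Nat.factorial j : ℝ) := by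
      simp
    rw [this]
    exact mul_le_mul_of_nonneg_left (npow j x η)
      (div_nonneg (pow_nonneg (norm_nonneg _) _) (Nat.cast_nonneg _))
  have n2 : ∀ (m : ℕ) (h : G), ‖c m * r m h ξ‖ ≤ w ξ ^ γ * (‖c m‖ * R m h) := by
    intro m h
    rw [norm_mul]
    calc ‖c m‖ * ‖r m h ξ‖ ≤ ‖c m‖ * (w ξ ^ γ * R m h) :=
          mul_le_mul_of_nonneg_left ((hr m).2.1 h ξ) (norm_nonneg _)
      _ = w ξ ^ γ * (‖c m‖ * R m h) := by ring
  have hFnorm : ∀ p : G × (ℕ × ℕ), ‖F p‖ ≤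
      (‖z‖ ^ p.2.1 / (Nat.factorial p.2.1 : ℝ) * Q ^ p.2.1) *
        (w ξ ^ γ * (‖c p.2.2‖ * R p.2.2 p.1)) := by
    rintro ⟨h, j, m⟩
    rw [hF]
    dsimp only
    rw [norm_mul]
    exact mul_le_mul (n1 j _ _) (n2 m h) (norm_nonneg _) (hu0 j)
  have hFs : Summable F := Summable.of_norm_bounded hmaj hFnorm
  -- step 1 : expand the product of the two series
  have step1 : compSymb (expSymb z ψ) B θ ξ = ∑' h, ∑' q : ℕ × ℕ, F (h, q) := by
    refine tsum_congr fun h => ?_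
    rw [hB h ξ]
    have hn1 : Summable fun j : ℕ =>
        ‖z ^ j / (Nat.factorial j : ℂ) * powSymb ψ j (θ * h⁻¹) (h • ξ)‖ :=
      Summable.of_nonneg_of_le (fun j => norm_nonneg _) (fun j => n1 j _ _) hu
    have hn2 : Summable fun m : ℕ => ‖c m * r m h ξ‖ :=
      Summable.of_nonneg_of_le (fun m => norm_nonneg _) (fun m => n2 m h)
        ((hcR.prod_symm.prod_factor h).mul_left _)
    exact tsum_mul_tsum_of_summable_norm hn1 hn2
  -- step 2 : swap the order of summation
  have step2 : ∑' h, ∑' q : ℕ × ℕ, F (h, q) = ∑' q : ℕ × ℕ, ∑' h, F (h, q) := by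
    have hunc : Summable (Function.uncurry fun (h : G) (q : ℕ × ℕ) => F (h, q)) :=
      hFs.congr fun p => rfl
    exact (Summable.tsum_comm' hunc (fun h => hFs.prod_factor h)
      (fun q => hFs.prod_symm.prod_factor q)).symm
  -- step 3 : evaluate the inner sums
  have step3 : ∀ q : ℕ × ℕ, ∑' h, F (h, q) =
      (z ^ q.1 / (Nat.factorial q.1 : ℂ) * c q.2) *
        compSymb (powSymb ψ q.1) (r q.2) θ ξ := by
    rintro ⟨j, m⟩
    calc ∑' h, F (h, (j, m))
        = ∑' h, (z ^ j / (Nat.factorial j : ℂ) * c m) *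
            (powSymb ψ j (θ * h⁻¹) (h • ξ) * r m h ξ) := tsum_congr fun h => by rw [hF]; ring
      _ = (z ^ j / (Nat.factorial j : ℂ) * c m) *
            ∑' h, powSymb ψ j (θ * h⁻¹) (h • ξ) * r m h ξ := tsum_mul_left
      _ = (z ^ j / (Nat.factorial j : ℂ) * c m) * compSymb (powSymb ψ j) (r m) θ ξ := rfl
  have hgsum : Summable fun q : ℕ × ℕ => ∑' h, F (h, q) :=
    (hFs.prod_symm.hasSum.prod_fiberwise fun q => (hFs.prod_symm.prod_factor q).hasSum).summable
  refine ⟨hgsum.congr fun q => step3 q, ?_⟩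
  rw [step1, step2]
  exact tsum_congr fun q => step3 q


theorem antidiag_coeff (z z' : ℂ) (n : ℕ) :
    ∑ p ∈ Finset.HasAntidiagonal.antidiagonal n,
        z ^ p.1 / (Nat.factorial p.1 : ℂ) * (z' ^ p.2 / (Nat.factorial p.2 : ℂ)) =
      (z + z') ^ n / (Nat.factorial n : ℂ) := by
  rw [add_pow, Finset.Nat.sum_antidiagonal_eq_sum_range_succ_mk, Finset.sum_div]
  refine Finset.sum_congr rfl fun k hk => ?_
  have hkn : k ≤ n := Nat.lt_succ_iff.mp (Finset.mem_range.mp hk)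
  rw [Nat.cast_choose ℂ hkn]
  have h1 : (Nat.factorial k : ℂ) ≠ 0 := Nat.cast_ne_zero.mpr (Nat.factorial_ne_zero k)
  have h2 : (Nat.factorial (n - k) : ℂ) ≠ 0 := Nat.cast_ne_zero.mpr (Nat.factorial_ne_zero _)
  have h3 : (Nat.factorial n : ℂ) ≠ 0 := Nat.cast_ne_zero.mpr (Nat.factorial_ne_zero n)
  field_simp

/-- summability hypothesis for the master lemma with `r m = ψ^m` -/
theorem hcR_pow (hg : GoodW w wG) {ψ : G → Ξ → ℂ} {P : G → ℝ} (hP : IsMaj w wG ψ 0 P)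
    {Pk : ℕ → G → ℝ} (hPk : ∀ k, IsMaj w wG (powSymb ψ k) 0 (Pk k))
    (hT : ∀ k, ∑' x, Pk k x ≤ (∑' x, P x) ^ k) (z' : ℂ) :
    Summable fun p : ℕ × G => ‖z' ^ p.1 / (Nat.factorial p.1 : ℂ)‖ * Pk p.1 p.2 := by
  have hQnn : (0:ℝ) ≤ ∑' x, P x := tsum_nonneg hP.1
  have hfib : ∀ m : ℕ, Summable fun h : G => ‖z' ^ m / (Nat.factorial m : ℂ)‖ * Pk m h :=
    fun m => ((hPk m).summ0).mul_left _
  refine (summable_prod_of_nonneg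
    (fun p => mul_nonneg (norm_nonneg _) ((hPk p.1).1 p.2))).mpr ⟨hfib, ?_⟩
  · refine Summable.of_nonneg_of_le
      (fun m => tsum_nonneg fun h => mul_nonneg (norm_nonneg _) ((hPk m).1 h)) (fun m => ?_)
      (((Real.summable_pow_div_factorial (‖z'‖ * ∑' x, P x)).congr fun j => by
        rw [mul_pow]; ring) : Summable fun m : ℕ =>
          ‖z'‖ ^ m / (Nat.factorial m : ℝ) * (∑' x, P x) ^ m)
    calc ∑' h, ‖z' ^ m / (Nat.factorial m : ℂ)‖ * Pk m h
        = ‖z' ^ m / (Nat.factorial m : ℂ)‖ * ∑' h, Pk m h := tsum_mul_left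
      _ ≤ (‖z'‖ ^ m / (Nat.factorial m : ℝ)) * (∑' x, P x) ^ m := by
          have e1 : ‖z' ^ m / (Nat.factorial m : ℂ)‖ = ‖z'‖ ^ m / (Nat.factorial m : ℝ) := by
            rw [norm_div, norm_pow]; simp
          rw [e1]
          exact mul_le_mul_of_nonneg_left (hT m)
            (div_nonneg (pow_nonneg (norm_nonneg _) _) (Nat.cast_nonneg _))

theorem exp_comp_exp (hg : GoodW w wG) {ψ : G → Ξ → ℂ} {P : G → ℝ} (hP : IsMaj w wG ψ 0 P)
    (z z' : ℂ) (θ : G) (ξ : Ξ) :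
    compSymb (expSymb z ψ) (expSymb z' ψ) θ ξ =
      ∑' n : ℕ, (z + z') ^ n / (Nat.factorial n : ℂ) * powSymb ψ n θ ξ := by
  choose Pk hPk hPkb using maj_pow hg hP
  have hT : ∀ k, ∑' x, Pk k x ≤ (∑' x, P x) ^ k := by
    intro k
    have := hPkb k 0 le_rfl
    simpa [Real.rpow_zero] using this
  obtain ⟨hsumq, heq⟩ := master hg hP z (c := fun m => z' ^ m / (Nat.factorial m : ℂ))
    (r := fun m => powSymb ψ m) (γ := 0) (R := Pk) hPk (hcR_pow hg hP hPk hT z')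
    (B := expSymb z' ψ) (fun θ ξ => rfl) θ ξ
  have hrw : ∀ q : ℕ × ℕ,
      (z ^ q.1 / (Nat.factorial q.1 : ℂ) * (z' ^ q.2 / (Nat.factorial q.2 : ℂ))) *
          compSymb (powSymb ψ q.1) (powSymb ψ q.2) θ ξ =
        (z ^ q.1 / (Nat.factorial q.1 : ℂ) * (z' ^ q.2 / (Nat.factorial q.2 : ℂ))) *
          powSymb ψ (q.1 + q.2) θ ξ := by
    intro q
    rw [pow_add hg hP q.1 q.2]
  rw [heq, tsum_congr hrw, tsum_antidiag (hsumq.congr hrw)]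
  refine tsum_congr fun n => ?_
  calc ∑ p ∈ Finset.HasAntidiagonal.antidiagonal n,
        z ^ p.1 / (Nat.factorial p.1 : ℂ) * (z' ^ p.2 / (Nat.factorial p.2 : ℂ)) *
          powSymb ψ (p.1 + p.2) θ ξ
      = ∑ p ∈ Finset.HasAntidiagonal.antidiagonal n,
          z ^ p.1 / (Nat.factorial p.1 : ℂ) * (z' ^ p.2 / (Nat.factorial p.2 : ℂ)) *
            powSymb ψ n θ ξ := by
        refine Finset.sum_congr rfl fun p hp => ?_
        rw [Finset.HasAntidiagonal.mem_antidiagonal.mp hp]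
    _ = (∑ p ∈ Finset.HasAntidiagonal.antidiagonal n,
          z ^ p.1 / (Nat.factorial p.1 : ℂ) * (z' ^ p.2 / (Nat.factorial p.2 : ℂ))) *
            powSymb ψ n θ ξ := by rw [← Finset.sum_mul]
    _ = (z + z') ^ n / (Nat.factorial n : ℂ) * powSymb ψ n θ ξ := by
        rw [antidiag_coeff]

theorem exp_unitary (hg : GoodW w wG) {ψ : G → Ξ → ℂ} {P : G → ℝ} (hP : IsMaj w wG ψ 0 P)
    (z : ℂ) (θ : G) (ξ : Ξ) :
    compSymb (expSymb z ψ) (expSymb (-z) ψ) θ ξ = if θ = 1 then 1 else 0 := by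
  rw [exp_comp_exp hg hP z (-z) θ ξ]
  have hz : z + -z = 0 := by ring
  rw [hz]
  rw [tsum_eq_single 0 (fun n hn => by simp [zero_pow hn])]
  simp [powSymb]



private def T (ψ a : G → Ξ → ℂ) (j m : ℕ) : G → Ξ → ℂ :=
  compSymb (powSymb ψ j) (compSymb a (powSymb ψ m))

section AD
variable (hg : GoodW w wG) {ψ a : G → Ξ → ℂ} {α : ℝ} {P A : G → ℝ}
  (hP : IsMaj w wG ψ 0 P) (hA : IsMaj w wG a α A)

include hg hP hA

theorem maj_T (j m : ℕ) : ∃ M : G → ℝ, IsMaj w wG (T ψ a j m) α M := by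
  obtain ⟨Pj, hPj, -⟩ := maj_pow hg hP j
  obtain ⟨Pm, hPm, -⟩ := maj_pow hg hP m
  exact ⟨_, ((maj_comp hg hPj ((maj_comp hg hA hPm).2.1.order_congr
    (add_zero α))).2.1).order_congr (zero_add α)⟩

theorem T_comp_psi (j m : ℕ) : compSymb (T ψ a j m) ψ = T ψ a j (m + 1) := by
  obtain ⟨Pj, hPj, -⟩ := maj_pow hg hP j
  obtain ⟨Pm, hPm, -⟩ := maj_pow hg hP m
  have hAm := (maj_comp hg hA hPm).2.1
  funext θ ξ
  calc compSymb (compSymb (powSymb ψ j) (compSymb a (powSymb ψ m))) ψ θ ξ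
      = compSymb (powSymb ψ j) (compSymb (compSymb a (powSymb ψ m)) ψ) θ ξ :=
        (comp_assoc hg hPj hAm hP θ ξ).symm
    _ = compSymb (powSymb ψ j) (compSymb a (powSymb ψ (m + 1))) θ ξ := by
        have e : compSymb (compSymb a (powSymb ψ m)) ψ = compSymb a (powSymb ψ (m + 1)) := by
          rw [pow_succ_right hg hP m]
          funext θ' ξ'
          exact (comp_assoc hg hA hPm hP θ' ξ').symm
        rw [e]

theorem psi_comp_T (j m : ℕ) : compSymb ψ (T ψ a j m) = T ψ a (j + 1) m := by
  obtain ⟨Pj, hPj, -⟩ := maj_pow hg hP j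
  obtain ⟨Pm, hPm, -⟩ := maj_pow hg hP m
  have hAm := (maj_comp hg hA hPm).2.1
  funext θ ξ
  exact comp_assoc hg hP hPj hAm θ ξ

theorem ad_expand (k : ℕ) :
    (fun s => adSymb s ψ)^[k] a = fun θ ξ => ∑ p ∈ Finset.HasAntidiagonal.antidiagonal k,
      ((Nat.choose k p.1 : ℂ) * ((-Complex.I) ^ p.1 * Complex.I ^ p.2)) * T ψ a p.1 p.2 θ ξ := by
  induction k with
  | zero =>
    funext θ ξ
    rw [Function.iterate_zero_apply, Finset.Nat.antidiagonal_zero, Finset.sum_singleton]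
    simp only [Nat.choose_self, Nat.cast_one, pow_zero, one_mul, mul_one]
    show a θ ξ = T ψ a 0 0 θ ξ
    unfold T
    rw [show powSymb ψ 0 = (fun (θ : G) (_ : Ξ) => if θ = 1 then (1:ℂ) else 0) from rfl,
      comp_delta_left, comp_delta_right]
  | succ k ih =>
    -- majorants for each T p
    choose MT hMT using maj_T hg hP hA
    rw [Function.iterate_succ_apply', ih]
    funext θ ξ
    set coef : ℕ × ℕ → ℂ := fun p =>
      (Nat.choose k p.1 : ℂ) * ((-Complex.I) ^ p.1 * Complex.I ^ p.2) with hcoef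
    have lin1 : compSymb (fun θ ξ => ∑ p ∈ Finset.HasAntidiagonal.antidiagonal k, coef p * T ψ a p.1 p.2 θ ξ)
        ψ θ ξ = ∑ p ∈ Finset.HasAntidiagonal.antidiagonal k, coef p * compSymb (T ψ a p.1 p.2) ψ θ ξ := by
      unfold compSymb
      calc ∑' h : G, (∑ p ∈ Finset.HasAntidiagonal.antidiagonal k, coef p * T ψ a p.1 p.2 (θ * h⁻¹) (h • ξ)) *
            ψ h ξ
          = ∑' h : G, ∑ p ∈ Finset.HasAntidiagonal.antidiagonal k,
              coef p * (T ψ a p.1 p.2 (θ * h⁻¹) (h • ξ) * ψ h ξ) := by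
            refine tsum_congr fun h => ?_
            rw [Finset.sum_mul]
            exact Finset.sum_congr rfl fun p _ => by ring
        _ = ∑ p ∈ Finset.HasAntidiagonal.antidiagonal k, ∑' h : G,
              coef p * (T ψ a p.1 p.2 (θ * h⁻¹) (h • ξ) * ψ h ξ) :=
            Summable.tsum_finsetSum fun p _ => ((maj_comp hg (hMT p.1 p.2) hP).1 θ ξ).mul_left _
        _ = ∑ p ∈ Finset.HasAntidiagonal.antidiagonal k, coef p * ∑' h : G,
              T ψ a p.1 p.2 (θ * h⁻¹) (h • ξ) * ψ h ξ :=
            Finset.sum_congr rfl fun p _ => tsum_mul_left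
    have lin2 : compSymb ψ (fun θ ξ => ∑ p ∈ Finset.HasAntidiagonal.antidiagonal k, coef p * T ψ a p.1 p.2 θ ξ)
        θ ξ = ∑ p ∈ Finset.HasAntidiagonal.antidiagonal k, coef p * compSymb ψ (T ψ a p.1 p.2) θ ξ := by
      unfold compSymb
      calc ∑' h : G, ψ (θ * h⁻¹) (h • ξ) *
            ∑ p ∈ Finset.HasAntidiagonal.antidiagonal k, coef p * T ψ a p.1 p.2 h ξ
          = ∑' h : G, ∑ p ∈ Finset.HasAntidiagonal.antidiagonal k,
              coef p * (ψ (θ * h⁻¹) (h • ξ) * T ψ a p.1 p.2 h ξ) := by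
            refine tsum_congr fun h => ?_
            rw [Finset.mul_sum]
            exact Finset.sum_congr rfl fun p _ => by ring
        _ = ∑ p ∈ Finset.HasAntidiagonal.antidiagonal k, ∑' h : G,
              coef p * (ψ (θ * h⁻¹) (h • ξ) * T ψ a p.1 p.2 h ξ) :=
            Summable.tsum_finsetSum fun p _ => ((maj_comp hg hP (hMT p.1 p.2)).1 θ ξ).mul_left _
        _ = ∑ p ∈ Finset.HasAntidiagonal.antidiagonal k, coef p * ∑' h : G,
              ψ (θ * h⁻¹) (h • ξ) * T ψ a p.1 p.2 h ξ :=
            Finset.sum_congr rfl fun p _ => tsum_mul_left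
    show Complex.I * (_ - _) = _
    rw [lin1, lin2]
    have e1 : ∀ p : ℕ × ℕ, compSymb (T ψ a p.1 p.2) ψ θ ξ = T ψ a p.1 (p.2 + 1) θ ξ := by
      intro p; rw [T_comp_psi hg hP hA]
    have e2 : ∀ p : ℕ × ℕ, compSymb ψ (T ψ a p.1 p.2) θ ξ = T ψ a (p.1 + 1) p.2 θ ξ := by
      intro p; rw [psi_comp_T hg hP hA]
    -- now pure algebra with finite sums
    have lhs_eq : Complex.I *
        ((∑ p ∈ Finset.HasAntidiagonal.antidiagonal k, coef p * compSymb (T ψ a p.1 p.2) ψ θ ξ) -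
          ∑ p ∈ Finset.HasAntidiagonal.antidiagonal k, coef p * compSymb ψ (T ψ a p.1 p.2) θ ξ) =
        (∑ p ∈ Finset.HasAntidiagonal.antidiagonal k,
          (Nat.choose k p.1 : ℂ) * ((-Complex.I) ^ p.1 * Complex.I ^ (p.2 + 1)) *
            T ψ a p.1 (p.2 + 1) θ ξ) +
        ∑ p ∈ Finset.HasAntidiagonal.antidiagonal k,
          (Nat.choose k p.1 : ℂ) * ((-Complex.I) ^ (p.1 + 1) * Complex.I ^ p.2) *
            T ψ a (p.1 + 1) p.2 θ ξ := by
      rw [mul_sub, Finset.mul_sum, Finset.mul_sum, sub_eq_add_neg, ← Finset.sum_neg_distrib]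
      congr 1
      · refine Finset.sum_congr rfl fun p _ => ?_
        rw [e1 p, hcoef]
        ring
      · refine Finset.sum_congr rfl fun p _ => ?_
        rw [e2 p, hcoef]
        ring
    rw [lhs_eq]
    -- Pascal recombination
    set Tv : ℕ × ℕ → ℂ := fun p => T ψ a p.1 p.2 θ ξ with hTv
    have claim1 : ∑ p ∈ Finset.HasAntidiagonal.antidiagonal (k + 1),
        (Nat.choose k p.1 : ℂ) * ((-Complex.I) ^ p.1 * Complex.I ^ p.2) * Tv p =
        ∑ p ∈ Finset.HasAntidiagonal.antidiagonal k,
          (Nat.choose k p.1 : ℂ) * ((-Complex.I) ^ p.1 * Complex.I ^ (p.2 + 1)) *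
            Tv (p.1, p.2 + 1) := by
      rw [Finset.Nat.sum_antidiagonal_succ'
        (f := fun p => (Nat.choose k p.1 : ℂ) * ((-Complex.I) ^ p.1 * Complex.I ^ p.2) * Tv p)]
      rw [Nat.choose_eq_zero_of_lt (Nat.lt_succ_self k)]
      simp
    have claim2 : ∑ p ∈ Finset.HasAntidiagonal.antidiagonal (k + 1),
        (((Nat.choose (k + 1) p.1 : ℂ) - (Nat.choose k p.1 : ℂ)) *
          ((-Complex.I) ^ p.1 * Complex.I ^ p.2)) * Tv p =
        ∑ p ∈ Finset.HasAntidiagonal.antidiagonal k,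
          (Nat.choose k p.1 : ℂ) * ((-Complex.I) ^ (p.1 + 1) * Complex.I ^ p.2) *
            Tv (p.1 + 1, p.2) := by
      rw [Finset.Nat.sum_antidiagonal_succ
        (f := fun p => (((Nat.choose (k + 1) p.1 : ℂ) - (Nat.choose k p.1 : ℂ)) *
          ((-Complex.I) ^ p.1 * Complex.I ^ p.2)) * Tv p)]
      have h0 : (((Nat.choose (k + 1) 0 : ℂ) - (Nat.choose k 0 : ℂ)) *
          ((-Complex.I) ^ 0 * Complex.I ^ (k + 1))) * Tv (0, k + 1) = 0 := by
        simp
      rw [h0, zero_add]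
      refine Finset.sum_congr rfl fun p _ => ?_
      have hp : ((Nat.choose (k + 1) (p.1 + 1) : ℂ) - (Nat.choose k (p.1 + 1) : ℂ)) =
          (Nat.choose k p.1 : ℂ) := by
        rw [Nat.choose_succ_succ]
        push_cast
        ring
      rw [hp]
    calc (∑ p ∈ Finset.HasAntidiagonal.antidiagonal k,
          (Nat.choose k p.1 : ℂ) * ((-Complex.I) ^ p.1 * Complex.I ^ (p.2 + 1)) *
            Tv (p.1, p.2 + 1)) +
        ∑ p ∈ Finset.HasAntidiagonal.antidiagonal k,
          (Nat.choose k p.1 : ℂ) * ((-Complex.I) ^ (p.1 + 1) * Complex.I ^ p.2) *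
            Tv (p.1 + 1, p.2)
        = (∑ p ∈ Finset.HasAntidiagonal.antidiagonal (k + 1),
            (Nat.choose k p.1 : ℂ) * ((-Complex.I) ^ p.1 * Complex.I ^ p.2) * Tv p) +
          ∑ p ∈ Finset.HasAntidiagonal.antidiagonal (k + 1),
            (((Nat.choose (k + 1) p.1 : ℂ) - (Nat.choose k p.1 : ℂ)) *
              ((-Complex.I) ^ p.1 * Complex.I ^ p.2)) * Tv p := by rw [claim1, claim2]
      _ = ∑ p ∈ Finset.HasAntidiagonal.antidiagonal (k + 1),
            (Nat.choose (k + 1) p.1 : ℂ) * ((-Complex.I) ^ p.1 * Complex.I ^ p.2) * Tv p := by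
          rw [← Finset.sum_add_distrib]
          refine Finset.sum_congr rfl fun p _ => ?_
          ring

end AD


theorem norm_coeff (z : ℂ) (m : ℕ) :
    ‖z ^ m / (Nat.factorial m : ℂ)‖ = ‖z‖ ^ m / (Nat.factorial m : ℝ) := by
  rw [norm_div, norm_pow]; simp

theorem comp_a_exp (hg : GoodW w wG) {ψ a : G → Ξ → ℂ} {α : ℝ} {P A : G → ℝ}
    (hP : IsMaj w wG ψ 0 P) (hA : IsMaj w wG a α A)
    {Pk : ℕ → G → ℝ} (hPk : ∀ k, IsMaj w wG (powSymb ψ k) 0 (Pk k))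
    (hTα : ∀ k, ∑' x, wG x ^ |α| * Pk k x ≤ (∑' x, wG x ^ |α| * P x) ^ k)
    (z : ℂ) (θ : G) (ξ : Ξ) :
    compSymb a (expSymb z ψ) θ ξ =
      ∑' m : ℕ, z ^ m / (Nat.factorial m : ℂ) * compSymb a (powSymb ψ m) θ ξ := by
  set Qα : ℝ := ∑' x, wG x ^ |α| * P x with hQα
  have hQαnn : 0 ≤ Qα := tsum_nonneg fun x =>
    mul_nonneg (Real.rpow_nonneg (le_of_lt (hg.Gpos x)) _) (hP.1 x)
  set F2 : G × ℕ → ℂ := fun p =>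
    a (θ * p.1⁻¹) (p.1 • ξ) * (z ^ p.2 / (Nat.factorial p.2 : ℂ) * powSymb ψ p.2 p.1 ξ) with hF2
  -- majorant on ℕ × G
  have hg3 : Summable fun q : ℕ × G =>
      ‖z‖ ^ q.1 / (Nat.factorial q.1 : ℝ) * (wG q.2 ^ |α| * Pk q.1 q.2) := by
    have hfib : ∀ m : ℕ, Summable fun h : G =>
        ‖z‖ ^ m / (Nat.factorial m : ℝ) * (wG h ^ |α| * Pk m h) :=
      fun m => ((hPk m).2.2 |α| (abs_nonneg _)).mul_left _
    refine (summable_prod_of_nonneg (fun q => mul_nonneg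
      (div_nonneg (pow_nonneg (norm_nonneg _) _) (Nat.cast_nonneg _))
      (mul_nonneg (Real.rpow_nonneg (le_of_lt (hg.Gpos _)) _) ((hPk q.1).1 _)))).mpr
      ⟨hfib, ?_⟩
    refine Summable.of_nonneg_of_le
      (fun m => tsum_nonneg fun h => mul_nonneg
        (div_nonneg (pow_nonneg (norm_nonneg _) _) (Nat.cast_nonneg _))
        (mul_nonneg (Real.rpow_nonneg (le_of_lt (hg.Gpos _)) _) ((hPk m).1 _)))
      (fun m => ?_)
      (((Real.summable_pow_div_factorial (‖z‖ * Qα)).congr fun j => by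
        rw [mul_pow]; ring) : Summable fun m : ℕ =>
          ‖z‖ ^ m / (Nat.factorial m : ℝ) * Qα ^ m)
    calc ∑' h, ‖z‖ ^ m / (Nat.factorial m : ℝ) * (wG h ^ |α| * Pk m h)
        = ‖z‖ ^ m / (Nat.factorial m : ℝ) * ∑' h, wG h ^ |α| * Pk m h := tsum_mul_left
      _ ≤ ‖z‖ ^ m / (Nat.factorial m : ℝ) * Qα ^ m :=
          mul_le_mul_of_nonneg_left (hTα m)
            (div_nonneg (pow_nonneg (norm_nonneg _) _) (Nat.cast_nonneg _))
  have hmaj : Summable fun p : G × ℕ =>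
      (w ξ ^ α * ∑' x, A x) *
        (‖z‖ ^ p.2 / (Nat.factorial p.2 : ℝ) * (wG p.1 ^ |α| * Pk p.2 p.1)) := by
    have hbase : Summable fun p : G × ℕ =>
        ‖z‖ ^ p.2 / (Nat.factorial p.2 : ℝ) * (wG p.1 ^ |α| * Pk p.2 p.1) := by
      refine ((Equiv.prodComm G ℕ).summable_iff.mpr hg3).congr fun p => ?_
      rfl
    exact hbase.mul_left _
  have hbound : ∀ p : G × ℕ, ‖F2 p‖ ≤
      (w ξ ^ α * ∑' x, A x) *
        (‖z‖ ^ p.2 / (Nat.factorial p.2 : ℝ) * (wG p.1 ^ |α| * Pk p.2 p.1)) := by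
    rintro ⟨h, m⟩
    have ha1 : ‖a (θ * h⁻¹) (h • ξ)‖ ≤ (w ξ ^ α * wG h ^ |α|) * ∑' x, A x := by
      refine (hA.2.1 _ _).trans ?_
      refine (mul_le_mul_of_nonneg_right (hg.rpow_smul α h ξ) (hA.1 _)).trans ?_
      exact mul_le_mul_of_nonneg_left (hA.le_tsum _)
        (mul_nonneg (Real.rpow_nonneg (le_of_lt (hg.wpos ξ)) _)
          (Real.rpow_nonneg (le_of_lt (hg.Gpos h)) _))
    have hp1 : ‖z ^ m / (Nat.factorial m : ℂ) * powSymb ψ m h ξ‖ ≤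
        ‖z‖ ^ m / (Nat.factorial m : ℝ) * Pk m h := by
      rw [norm_mul, norm_coeff]
      refine mul_le_mul_of_nonneg_left ?_
        (div_nonneg (pow_nonneg (norm_nonneg _) _) (Nat.cast_nonneg _))
      calc ‖powSymb ψ m h ξ‖ ≤ w ξ ^ (0:ℝ) * Pk m h := (hPk m).2.1 h ξ
        _ = Pk m h := by rw [Real.rpow_zero, one_mul]
    calc ‖F2 (h, m)‖ = ‖a (θ * h⁻¹) (h • ξ)‖ * ‖z ^ m / (Nat.factorial m : ℂ) *
          powSymb ψ m h ξ‖ := by rw [hF2]; exact norm_mul _ _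
      _ ≤ ((w ξ ^ α * wG h ^ |α|) * ∑' x, A x) *
          (‖z‖ ^ m / (Nat.factorial m : ℝ) * Pk m h) := by
          refine mul_le_mul ha1 hp1 (norm_nonneg _) ?_
          exact mul_nonneg (mul_nonneg (Real.rpow_nonneg (le_of_lt (hg.wpos ξ)) _)
            (Real.rpow_nonneg (le_of_lt (hg.Gpos h)) _)) (tsum_nonneg hA.1)
      _ = (w ξ ^ α * ∑' x, A x) *
          (‖z‖ ^ m / (Nat.factorial m : ℝ) * (wG h ^ |α| * Pk m h)) := by ring
  have hF2s : Summable F2 := Summable.of_norm_bounded hmaj hbound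
  calc compSymb a (expSymb z ψ) θ ξ = ∑' h, ∑' m, F2 (h, m) := by
        refine tsum_congr fun h => ?_
        exact (tsum_mul_left).symm
    _ = ∑' m, ∑' h, F2 (h, m) := by
        have hunc : Summable (Function.uncurry fun (h : G) (m : ℕ) => F2 (h, m)) :=
          hF2s.congr fun p => rfl
        exact (Summable.tsum_comm' hunc (fun h => hF2s.prod_factor h)
          (fun m => hF2s.prod_symm.prod_factor m)).symm
    _ = ∑' m, z ^ m / (Nat.factorial m : ℂ) * compSymb a (powSymb ψ m) θ ξ := by
        refine tsum_congr fun m => ?_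
        calc ∑' h, F2 (h, m)
            = ∑' h, z ^ m / (Nat.factorial m : ℂ) *
                (a (θ * h⁻¹) (h • ξ) * powSymb ψ m h ξ) :=
              tsum_congr fun h => by rw [hF2]; ring
          _ = z ^ m / (Nat.factorial m : ℂ) *
                ∑' h, a (θ * h⁻¹) (h • ξ) * powSymb ψ m h ξ := tsum_mul_left
          _ = _ := rfl

theorem gauge (hg : GoodW w wG) {ψ a : G → Ξ → ℂ} {α : ℝ} {P A : G → ℝ}
    (hP : IsMaj w wG ψ 0 P) (hA : IsMaj w wG a α A) (θ : G) (ξ : Ξ) :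
    compSymb (expSymb (-Complex.I) ψ) (compSymb a (expSymb Complex.I ψ)) θ ξ =
      ∑' k : ℕ, (Nat.factorial k : ℂ)⁻¹ * (fun s => adSymb s ψ)^[k] a θ ξ := by
  choose Pk hPk hPkb using maj_pow hg hP
  have hTα : ∀ k, ∑' x, wG x ^ |α| * Pk k x ≤ (∑' x, wG x ^ |α| * P x) ^ k :=
    fun k => hPkb k |α| (abs_nonneg _)
  -- majorants for a ∘ ψ^m
  have hRA : ∀ m : ℕ, IsMaj w wG (compSymb a (powSymb ψ m)) α
      (fun θ => ∑' h, A (θ * h⁻¹) * (wG h ^ |α| * Pk m h)) :=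
    fun m => (maj_comp hg hA (hPk m)).2.1.order_congr (add_zero α)
  have hB : ∀ (θ : G) (ξ : Ξ), compSymb a (expSymb Complex.I ψ) θ ξ =
      ∑' m : ℕ, Complex.I ^ m / (Nat.factorial m : ℂ) *
        compSymb a (powSymb ψ m) θ ξ :=
    fun θ ξ => comp_a_exp hg hP hA hPk hTα Complex.I θ ξ
  -- summability hypothesis for the master lemma
  have hcRA : Summable fun p : ℕ × G =>
      ‖Complex.I ^ p.1 / (Nat.factorial p.1 : ℂ)‖ *
        ∑' h, A (p.2 * h⁻¹) * (wG h ^ |α| * Pk p.1 h) := by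
    have hRA0 : ∀ (m : ℕ) (x : G), 0 ≤ ∑' h, A (x * h⁻¹) * (wG h ^ |α| * Pk m h) :=
      fun m x => tsum_nonneg fun h => mul_nonneg (hA.1 _)
        (mul_nonneg (Real.rpow_nonneg (le_of_lt (hg.Gpos h)) _) ((hPk m).1 h))
    have hfib : ∀ m : ℕ, Summable fun x : G =>
        ‖Complex.I ^ m / (Nat.factorial m : ℂ)‖ *
          ∑' h, A (x * h⁻¹) * (wG h ^ |α| * Pk m h) :=
      fun m => ((hRA m).summ0).mul_left _
    refine (summable_prod_of_nonneg (fun p => mul_nonneg (norm_nonneg _)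
      (hRA0 p.1 p.2))).mpr ⟨hfib, ?_⟩
    set TA : ℝ := ∑' x, A x with hTA
    have hTAnn : 0 ≤ TA := tsum_nonneg hA.1
    set Qα : ℝ := ∑' x, wG x ^ |α| * P x with hQα
    have hQαnn : 0 ≤ Qα := tsum_nonneg fun x =>
      mul_nonneg (Real.rpow_nonneg (le_of_lt (hg.Gpos x)) _) (hP.1 x)
    refine Summable.of_nonneg_of_le
      (fun m => tsum_nonneg fun x => mul_nonneg (norm_nonneg _) (hRA0 m x)) (fun m => ?_)
      ((((Real.summable_pow_div_factorial (‖Complex.I‖ * Qα)).congr fun j => by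
        rw [mul_pow]; ring).mul_right TA) : Summable fun m : ℕ =>
          ‖Complex.I‖ ^ m / (Nat.factorial m : ℝ) * Qα ^ m * TA)
    have hmarg : ∑' x : G, ∑' h, A (x * h⁻¹) * (wG h ^ |α| * Pk m h) ≤ TA * Qα ^ m := by
      have h3 := (maj_comp hg hA (hPk m)).2.2 0 le_rfl
      have e0 : ∀ f : G → ℝ, (∑' x : G, wG x ^ (0:ℝ) * f x) = ∑' x, f x := fun f =>
        tsum_congr fun x => by rw [Real.rpow_zero, one_mul]
      rw [e0] at h3
      have e1 : (∑' x : G, wG x ^ ((0:ℝ) + |α|) * Pk m x) = ∑' x, wG x ^ |α| * Pk m x :=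
        tsum_congr fun x => by rw [zero_add]
      rw [e0, e1] at h3
      exact h3.trans (mul_le_mul_of_nonneg_left (hTα m) hTAnn)
    calc ∑' x : G, ‖Complex.I ^ m / (Nat.factorial m : ℂ)‖ *
          ∑' h, A (x * h⁻¹) * (wG h ^ |α| * Pk m h)
        = ‖Complex.I ^ m / (Nat.factorial m : ℂ)‖ *
            ∑' x : G, ∑' h, A (x * h⁻¹) * (wG h ^ |α| * Pk m h) := tsum_mul_left
      _ ≤ ‖Complex.I‖ ^ m / (Nat.factorial m : ℝ) * (TA * Qα ^ m) := by
          rw [norm_coeff]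
          exact mul_le_mul_of_nonneg_left hmarg
            (div_nonneg (pow_nonneg (norm_nonneg _) _) (Nat.cast_nonneg _))
      _ = ‖Complex.I‖ ^ m / (Nat.factorial m : ℝ) * Qα ^ m * TA := by ring
  obtain ⟨hsumq, heq⟩ := master hg hP (-Complex.I)
    (c := fun m => Complex.I ^ m / (Nat.factorial m : ℂ))
    (r := fun m => compSymb a (powSymb ψ m)) (γ := α)
    (R := fun m θ => ∑' h, A (θ * h⁻¹) * (wG h ^ |α| * Pk m h)) hRA hcRA hB θ ξ
  rw [heq, tsum_antidiag hsumq]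
  refine tsum_congr fun k => ?_
  rw [ad_expand hg hP hA k]
  rw [Finset.mul_sum]
  refine Finset.sum_congr rfl fun p hp => ?_
  have hpk : p.1 + p.2 = k := Finset.HasAntidiagonal.mem_antidiagonal.mp hp
  have hp1k : p.1 ≤ k := le_of_add_le_left (le_of_eq hpk)
  have hchoose : (Nat.choose k p.1 : ℂ) =
      (Nat.factorial k : ℂ) / ((Nat.factorial p.1 : ℂ) * (Nat.factorial (k - p.1) : ℂ)) :=
    Nat.cast_choose ℂ hp1k
  have hp2 : k - p.1 = p.2 := by omega
  rw [hp2] at hchoose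
  have h1 : (Nat.factorial p.1 : ℂ) ≠ 0 := Nat.cast_ne_zero.mpr (Nat.factorial_ne_zero _)
  have h2 : (Nat.factorial p.2 : ℂ) ≠ 0 := Nat.cast_ne_zero.mpr (Nat.factorial_ne_zero _)
  have h3 : (Nat.factorial k : ℂ) ≠ 0 := Nat.cast_ne_zero.mpr (Nat.factorial_ne_zero _)
  show (-Complex.I) ^ p.1 / (Nat.factorial p.1 : ℂ) *
      (Complex.I ^ p.2 / (Nat.factorial p.2 : ℂ)) * T ψ a p.1 p.2 θ ξ =
    (Nat.factorial k : ℂ)⁻¹ *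
      ((Nat.choose k p.1 : ℂ) * ((-Complex.I) ^ p.1 * Complex.I ^ p.2) * T ψ a p.1 p.2 θ ξ)
  rw [hchoose]
  field_simp


theorem goodW [Nonempty Ξ] (hw : ∀ ξ, 1 ≤ w ξ)
    (hwG : ∀ g : G, wG g = 1 + ⨆ ξ : Ξ, |w (g • ξ) - w ξ|)
    (hbdd : ∀ g : G, BddAbove (Set.range fun ξ : Ξ => |w (g • ξ) - w ξ|)) :
    GoodW w wG := by
  have hsup0 : ∀ g : G, 0 ≤ ⨆ ξ : Ξ, |w (g • ξ) - w ξ| := fun g =>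
    Real.iSup_nonneg fun ξ => abs_nonneg _
  have hG : ∀ g : G, 1 ≤ wG g := fun g => by rw [hwG g]; linarith [hsup0 g]
  have hkey : ∀ (g : G) (ξ : Ξ), |w (g • ξ) - w ξ| ≤ wG g - 1 := by
    intro g ξ
    rw [hwG g]
    have := le_ciSup (hbdd g) ξ
    linarith [this]
  refine ⟨hw, hG, ?_, ?_, ?_, ?_⟩
  · rw [hwG 1]
    have : ∀ ξ : Ξ, |w ((1:G) • ξ) - w ξ| = 0 := fun ξ => by rw [one_smul]; simp
    rw [show (⨆ ξ : Ξ, |w ((1:G) • ξ) - w ξ|) = ⨆ _ : Ξ, (0:ℝ) from iSup_congr this]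
    rw [ciSup_const]
    norm_num
  · intro g h
    rw [hwG (g * h)]
    have hb : (⨆ ξ : Ξ, |w ((g * h) • ξ) - w ξ|) ≤ (wG g - 1) + (wG h - 1) := by
      refine ciSup_le fun ξ => ?_
      have e : (g * h) • ξ = g • (h • ξ) := mul_smul g h ξ
      calc |w ((g * h) • ξ) - w ξ| = |(w (g • (h • ξ)) - w (h • ξ)) + (w (h • ξ) - w ξ)| := by
            rw [e]; ring_nf
        _ ≤ |w (g • (h • ξ)) - w (h • ξ)| + |w (h • ξ) - w ξ| := abs_add_le _ _
        _ ≤ (wG g - 1) + (wG h - 1) := add_le_add (hkey g (h • ξ)) (hkey h ξ)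
    nlinarith [hG g, hG h]
  · intro h ξ
    have h1 : w (h • ξ) - w ξ ≤ |w (h • ξ) - w ξ| := le_abs_self _
    have h2 := hkey h ξ
    nlinarith [hw ξ, hG h]
  · intro h ξ
    have h1 : w ξ - w (h • ξ) ≤ |w (h • ξ) - w ξ| := by
      rw [abs_sub_comm]; exact le_abs_self _
    have h2 := hkey h ξ
    nlinarith [hw (h • ξ), hG h]

theorem summ_pow [Nonempty Ξ] (hg : GoodW w wG) {ψ : G → Ξ → ℂ} {P : G → ℝ}
    (hP : IsMaj w wG ψ 0 P) {l : ℝ} (hl : 0 ≤ l) :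
    Summable fun k : ℕ => (Nat.factorial k : ℝ)⁻¹ * snorm w wG (powSymb ψ k) 0 l := by
  choose Pk hPk hPkb using maj_pow hg hP
  set Ql : ℝ := ∑' θ, wG θ ^ l * P θ with hQl
  refine Summable.of_nonneg_of_le (fun k => ?_) (fun k => ?_)
    (Real.summable_pow_div_factorial Ql)
  · exact mul_nonneg (inv_nonneg.mpr (Nat.cast_nonneg _))
      (snorm_le_of_maj hg (hPk k) hl).1
  · calc (Nat.factorial k : ℝ)⁻¹ * snorm w wG (powSymb ψ k) 0 l
        ≤ (Nat.factorial k : ℝ)⁻¹ * (∑' θ, wG θ ^ l * Pk k θ) :=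
          mul_le_mul_of_nonneg_left (snorm_le_of_maj hg (hPk k) hl).2
            (inv_nonneg.mpr (Nat.cast_nonneg _))
      _ ≤ (Nat.factorial k : ℝ)⁻¹ * Ql ^ k :=
          mul_le_mul_of_nonneg_left (hPkb k l hl) (inv_nonneg.mpr (Nat.cast_nonneg _))
      _ = Ql ^ k / (Nat.factorial k : ℝ) := by rw [div_eq_inv_mul]

theorem summ_ad [Nonempty Ξ] (hg : GoodW w wG) {ψ a : G → Ξ → ℂ} {α : ℝ} {P A : G → ℝ}
    (hP : IsMaj w wG ψ 0 P) (hA : IsMaj w wG a α A) {l : ℝ} (hl : 0 ≤ l) :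
    Summable fun k : ℕ =>
      (Nat.factorial k : ℝ)⁻¹ * snorm w wG ((fun s => adSymb s ψ)^[k] a) α l := by
  choose Mk hMk hMkb using maj_ad hg hP hA
  set K : ℝ := (∑' θ, wG θ ^ (l + |α|) * P θ) + ∑' θ, wG θ ^ l * P θ with hK
  set SA : ℝ := ∑' θ, wG θ ^ l * A θ with hSA
  have hSAnn : 0 ≤ SA := tsum_nonneg fun θ =>
    mul_nonneg (Real.rpow_nonneg (le_of_lt (hg.Gpos θ)) _) (hA.1 θ)
  refine Summable.of_nonneg_of_le (fun k => ?_) (fun k => ?_)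
    (((Real.summable_pow_div_factorial K).mul_right SA).congr fun k => rfl)
  · exact mul_nonneg (inv_nonneg.mpr (Nat.cast_nonneg _))
      (snorm_le_of_maj hg (hMk k) hl).1
  · calc (Nat.factorial k : ℝ)⁻¹ * snorm w wG ((fun s => adSymb s ψ)^[k] a) α l
        ≤ (Nat.factorial k : ℝ)⁻¹ * (∑' θ, wG θ ^ l * Mk k θ) :=
          mul_le_mul_of_nonneg_left (snorm_le_of_maj hg (hMk k) hl).2
            (inv_nonneg.mpr (Nat.cast_nonneg _))
      _ ≤ (Nat.factorial k : ℝ)⁻¹ * (K ^ k * SA) :=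
          mul_le_mul_of_nonneg_left (hMkb k l hl) (inv_nonneg.mpr (Nat.cast_nonneg _))
      _ = K ^ k / (Nat.factorial k : ℝ) * SA := by rw [div_eq_inv_mul]; ring

end Stmt12
end Stmt12Aux

/-- for a bounded symmetric `Ψ` of order `0`, the exponential series for
`exp(iΨ)` converges absolutely in every symbol norm `⦀·⦀_l^{(0)}`, `exp(iΨ)` is unitary
(its composition with `exp(−iΨ) = exp(iΨ)†` on either side is the identity symbol), and
for any `A` of order `α` the gauge transform has the absolutely convergent expansion
`exp(−iΨ) A exp(iΨ) = Σ_k ad^k(A;Ψ)/k!` with `ad(A;Ψ) = i(AΨ − ΨA)`. -/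
theorem stmt12 [Nonempty Ξ] [Group G] [MulAction G Ξ]
    (w : Ξ → ℝ) (hw : ∀ ξ, 1 ≤ w ξ)
    (wG : G → ℝ) (hwG : ∀ g : G, wG g = 1 + ⨆ ξ : Ξ, |w (g • ξ) - w ξ|)
    (hbdd : ∀ g : G, BddAbove (Set.range fun ξ : Ξ => |w (g • ξ) - w ξ|))
    (hfree : ∀ (g : G) (ξ : Ξ), g • ξ = ξ → g = 1)
    (ψ : G → Ξ → ℂ) (Θψ : Set G) (hΘψ : IsAPSymbol ψ Θψ)
    (hsym : ∀ (g : G) (ξ : Ξ), ψ g ξ = (starRingEnd ℂ) (ψ g⁻¹ (g • ξ)))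
    (hordψ : HasOrder w wG ψ 0)
    (a : G → Ξ → ℂ) (Θa : Set G) (hΘa : IsAPSymbol a Θa)
    (α : ℝ) (horda : HasOrder w wG a α) :
    (∀ l : ℝ, 0 ≤ l →
        Summable fun k : ℕ =>
          (Nat.factorial k : ℝ)⁻¹ * snorm w wG (powSymb ψ k) 0 l) ∧
      (∀ (θ : G) (ξ : Ξ),
        compSymb (expSymb (-Complex.I) ψ) (expSymb Complex.I ψ) θ ξ =
          if θ = 1 then 1 else 0) ∧
      (∀ (θ : G) (ξ : Ξ),
        compSymb (expSymb Complex.I ψ) (expSymb (-Complex.I) ψ) θ ξ =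
          if θ = 1 then 1 else 0) ∧
      (∀ l : ℝ, 0 ≤ l →
        Summable fun k : ℕ =>
          (Nat.factorial k : ℝ)⁻¹ * snorm w wG ((fun s => adSymb s ψ)^[k] a) α l) ∧
      ∀ (θ : G) (ξ : Ξ),
        compSymb (expSymb (-Complex.I) ψ) (compSymb a (expSymb Complex.I ψ)) θ ξ =
          ∑' k : ℕ, (Nat.factorial k : ℂ)⁻¹ * (fun s => adSymb s ψ)^[k] a θ ξ := by
  have hgw : Stmt12.GoodW w wG := Stmt12.goodW hw hwG hbdd
  have hPmaj := Stmt12.maj_of_hasOrder hgw hordψ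
  have hAmaj := Stmt12.maj_of_hasOrder hgw horda
  refine ⟨fun l hl => Stmt12.summ_pow hgw hPmaj hl, fun θ ξ => ?_,
    fun θ ξ => Stmt12.exp_unitary hgw hPmaj Complex.I θ ξ,
    fun l hl => Stmt12.summ_ad hgw hPmaj hAmaj hl,
    fun θ ξ => Stmt12.gauge hgw hPmaj hAmaj θ ξ⟩
  have h2 := Stmt12.exp_unitary hgw hPmaj (-Complex.I) θ ξ
  rw [neg_neg] at h2
  exact h2
end
end

section
/- Suppose the commutator equation ad(A^D; Ψ) + A^{NR} = 0 holds, where A^{NR} is the non-resonant part of A with A^{NR} of order γ and Ψ of order γ − δ with δ > γ. Then for all k ≥ 2, ⦀ad^k(A^D; Ψ)⦀_l^{(β+γ−δ)} ≤ ((2/s) ⦀A^{NR}⦀_{l+|β|+|γ−δ|}^{(γ)})^{k−1} · ⦀A^{NR}⦀_{l+|γ−δ|}^{(β)}, given that ⦀Ψ⦀_l^{(γ−δ)} ≤ (1/s) ⦀A^{NR}⦀_l^{(γ)} for all l ≥ 0. -/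
noncomputable section

open scoped Classical

variable {G Ξ : Type*}

set_option linter.unusedSectionVars false

namespace Stmt13Aux

lemma rpow_ratio {x y c : ℝ} (hx : 0 < x) (hy : 0 < y) (hc : 1 ≤ c)
    (h1 : x ≤ y * c) (h2 : y ≤ x * c) (κ : ℝ) : x ^ κ ≤ y ^ κ * c ^ |κ| := by
  have hc0 : (0:ℝ) < c := lt_of_lt_of_le one_pos hc
  rcases le_or_gt 0 κ with hκ | hκ
  · rw [abs_of_nonneg hκ]
    calc x ^ κ ≤ (y * c) ^ κ := Real.rpow_le_rpow hx.le h1 hκ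
      _ = y ^ κ * c ^ κ := Real.mul_rpow hy.le hc0.le
  · rw [abs_of_neg hκ]
    have hp : (0:ℝ) ≤ -κ := by linarith
    have H : y ^ (-κ) ≤ x ^ (-κ) * c ^ (-κ) := by
      rw [← Real.mul_rpow hx.le hc0.le]
      exact Real.rpow_le_rpow hy.le h2 hp
    have hxp : (0:ℝ) < x ^ (-κ) := Real.rpow_pos_of_pos hx _
    have hyp : (0:ℝ) < y ^ (-κ) := Real.rpow_pos_of_pos hy _
    have ex : x ^ κ = (x ^ (-κ))⁻¹ := by
      rw [← Real.rpow_neg hx.le, neg_neg]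
    have ey : y ^ κ = (y ^ (-κ))⁻¹ := by
      rw [← Real.rpow_neg hy.le, neg_neg]
    rw [ex, ey, inv_eq_one_div, inv_eq_one_div, div_mul_eq_mul_div, div_le_div_iff₀ hxp hyp]
    nlinarith [H]

variable [Nonempty Ξ] [Group G] [MulAction G Ξ]

/-- inner sup appearing in `snorm` -/
def sS (w : Ξ → ℝ) (b : G → Ξ → ℂ) (o : ℝ) (g : G) : ℝ := ⨆ ξ : Ξ, w ξ ^ (-o) * ‖b g ξ‖

lemma snorm_def (w : Ξ → ℝ) (wG : G → ℝ) (b : G → Ξ → ℂ) (o l : ℝ) :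
    snorm w wG b o l = ∑' θ : G, wG θ ^ l * sS w b o θ := rfl

lemma sS_nonneg (w : Ξ → ℝ) (hw : ∀ ξ, 0 ≤ w ξ) (b : G → Ξ → ℂ) (o : ℝ) (g : G) :
    0 ≤ sS w b o g :=
  Real.iSup_nonneg fun ξ => mul_nonneg (Real.rpow_nonneg (hw ξ) _) (norm_nonneg _)

lemma snorm_nonneg (w : Ξ → ℝ) (hw : ∀ ξ, 0 ≤ w ξ) (wG : G → ℝ) (hG : ∀ g, 0 ≤ wG g)
    (b : G → Ξ → ℂ) (o l : ℝ) : 0 ≤ snorm w wG b o l :=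
  tsum_nonneg fun g => mul_nonneg (Real.rpow_nonneg (hG g) _) (sS_nonneg w hw b o g)

lemma sS_congr {w : Ξ → ℝ} {b₁ b₂ : G → Ξ → ℂ} (h : ∀ g ξ, ‖b₁ g ξ‖ = ‖b₂ g ξ‖) (o : ℝ)
    (g : G) : sS w b₁ o g = sS w b₂ o g := by
  unfold sS
  congr 1
  funext ξ
  rw [h]

lemma hasOrder_congr {w : Ξ → ℝ} {wG : G → ℝ} {b₁ b₂ : G → Ξ → ℂ}
    (h : ∀ g ξ, ‖b₁ g ξ‖ = ‖b₂ g ξ‖) {o : ℝ} (hb : HasOrder w wG b₁ o) :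
    HasOrder w wG b₂ o := by
  have e : ∀ g : G, (fun ξ : Ξ => w ξ ^ (-o) * ‖b₂ g ξ‖) = fun ξ : Ξ => w ξ ^ (-o) * ‖b₁ g ξ‖ :=
    fun g => funext fun ξ => by rw [h]
  constructor
  · intro g; rw [e g]; exact hb.1 g
  · intro l hl
    have := hb.2 l hl
    have e2 : (fun θ : G => wG θ ^ l * ⨆ ξ : Ξ, w ξ ^ (-o) * ‖b₂ θ ξ‖)
        = fun θ : G => wG θ ^ l * ⨆ ξ : Ξ, w ξ ^ (-o) * ‖b₁ θ ξ‖ := by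
      funext θ; rw [e θ]
    rw [e2]; exact this

lemma snorm_congr {w : Ξ → ℝ} {wG : G → ℝ} {b₁ b₂ : G → Ξ → ℂ}
    (h : ∀ g ξ, ‖b₁ g ξ‖ = ‖b₂ g ξ‖) (o l : ℝ) :
    snorm w wG b₁ o l = snorm w wG b₂ o l := by
  rw [snorm_def, snorm_def]
  exact tsum_congr fun g => by rw [sS_congr h]

lemma snorm_mono_l (w : Ξ → ℝ) (hw : ∀ ξ, 0 ≤ w ξ) (wG : G → ℝ) (hG1 : ∀ g : G, 1 ≤ wG g)
    (b : G → Ξ → ℂ) (o : ℝ) {l₁ l₂ : ℝ} (h : l₁ ≤ l₂)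
    (hsum : Summable fun θ : G => wG θ ^ l₂ * ⨆ ξ : Ξ, w ξ ^ (-o) * ‖b θ ξ‖) :
    snorm w wG b o l₁ ≤ snorm w wG b o l₂ := by
  have hle : ∀ g : G, wG g ^ l₁ * sS w b o g ≤ wG g ^ l₂ * sS w b o g := fun g =>
    mul_le_mul_of_nonneg_right (Real.rpow_le_rpow_of_exponent_le (hG1 g) h)
      (sS_nonneg w hw b o g)
  have h1 : Summable fun g : G => wG g ^ l₁ * sS w b o g :=
    Summable.of_nonneg_of_le
      (fun g => mul_nonneg (Real.rpow_nonneg (le_trans zero_le_one (hG1 g)) _)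
        (sS_nonneg w hw b o g)) hle hsum
  exact Summable.tsum_le_tsum hle h1 hsum

lemma hasOrder_mono (w : Ξ → ℝ) (hw : ∀ ξ, 1 ≤ w ξ) (wG : G → ℝ) (hG1 : ∀ g : G, 1 ≤ wG g)
    (b : G → Ξ → ℂ) {o₁ o₂ : ℝ} (h : o₁ ≤ o₂) (hb : HasOrder w wG b o₁) :
    HasOrder w wG b o₂ ∧ ∀ l, 0 ≤ l → snorm w wG b o₂ l ≤ snorm w wG b o₁ l := by
  have hw0 : ∀ ξ, (0:ℝ) ≤ w ξ := fun ξ => le_trans zero_le_one (hw ξ)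
  have hptS : ∀ (g : G) (ξ : Ξ), w ξ ^ (-o₂) * ‖b g ξ‖ ≤ sS w b o₁ g := by
    intro g ξ
    have h1 : w ξ ^ (-o₂) * ‖b g ξ‖ ≤ w ξ ^ (-o₁) * ‖b g ξ‖ :=
      mul_le_mul_of_nonneg_right
        (Real.rpow_le_rpow_of_exponent_le (hw ξ) (neg_le_neg h)) (norm_nonneg _)
    exact h1.trans (le_ciSup (hb.1 g) ξ)
  have hbdd2 : ∀ g : G, BddAbove (Set.range fun ξ : Ξ => w ξ ^ (-o₂) * ‖b g ξ‖) := by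
    intro g
    refine ⟨sS w b o₁ g, ?_⟩
    rintro _ ⟨ξ, rfl⟩
    exact hptS g ξ
  have hS : ∀ g : G, sS w b o₂ g ≤ sS w b o₁ g := fun g => ciSup_le (hptS g)
  have hsum2 : ∀ l : ℝ, 0 ≤ l → Summable fun g : G => wG g ^ l * sS w b o₂ g := by
    intro l hl
    exact Summable.of_nonneg_of_le
      (fun g => mul_nonneg (Real.rpow_nonneg (le_trans zero_le_one (hG1 g)) _)
        (sS_nonneg w hw0 b o₂ g))
      (fun g => mul_le_mul_of_nonneg_left (hS g)
        (Real.rpow_nonneg (le_trans zero_le_one (hG1 g)) _))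
      (hb.2 l hl)
  refine ⟨⟨hbdd2, hsum2⟩, ?_⟩
  intro l hl
  rw [snorm_def, snorm_def]
  exact Summable.tsum_le_tsum
    (fun g => mul_le_mul_of_nonneg_left (hS g)
      (Real.rpow_nonneg (le_trans zero_le_one (hG1 g)) _))
    (hsum2 l hl) (hb.2 l hl)

lemma snorm_dom (w : Ξ → ℝ) (hw : ∀ ξ, 1 ≤ w ξ) (wG : G → ℝ) (hG1 : ∀ g : G, 1 ≤ wG g)
    (c x y : G → Ξ → ℂ) (o o₁ o₂ : ℝ) (h1 : o₁ ≤ o) (h2 : o₂ ≤ o)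
    (hx : HasOrder w wG x o₁) (hy : HasOrder w wG y o₂)
    (hpt : ∀ θ ξ, ‖c θ ξ‖ ≤ ‖x θ ξ‖ + ‖y θ ξ‖) :
    HasOrder w wG c o ∧ ∀ l, 0 ≤ l →
      snorm w wG c o l ≤ snorm w wG x o₁ l + snorm w wG y o₂ l := by
  have hw0 : ∀ ξ, (0:ℝ) ≤ w ξ := fun ξ => le_trans zero_le_one (hw ξ)
  have hG0 : ∀ g : G, (0:ℝ) ≤ wG g := fun g => le_trans zero_le_one (hG1 g)
  have hptw : ∀ (θ : G) (ξ : Ξ), w ξ ^ (-o) * ‖c θ ξ‖ ≤ sS w x o₁ θ + sS w y o₂ θ := by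
    intro θ ξ
    have e1 : w ξ ^ (-o) * ‖c θ ξ‖ ≤ w ξ ^ (-o) * ‖x θ ξ‖ + w ξ ^ (-o) * ‖y θ ξ‖ := by
      rw [← mul_add]
      exact mul_le_mul_of_nonneg_left (hpt θ ξ) (Real.rpow_nonneg (hw0 ξ) _)
    have e2 : w ξ ^ (-o) * ‖x θ ξ‖ ≤ sS w x o₁ θ :=
      le_trans (mul_le_mul_of_nonneg_right
        (Real.rpow_le_rpow_of_exponent_le (hw ξ) (neg_le_neg h1)) (norm_nonneg _))
        (le_ciSup (hx.1 θ) ξ)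
    have e3 : w ξ ^ (-o) * ‖y θ ξ‖ ≤ sS w y o₂ θ :=
      le_trans (mul_le_mul_of_nonneg_right
        (Real.rpow_le_rpow_of_exponent_le (hw ξ) (neg_le_neg h2)) (norm_nonneg _))
        (le_ciSup (hy.1 θ) ξ)
    linarith
  have hbddc : ∀ θ : G, BddAbove (Set.range fun ξ : Ξ => w ξ ^ (-o) * ‖c θ ξ‖) := by
    intro θ
    refine ⟨sS w x o₁ θ + sS w y o₂ θ, ?_⟩
    rintro _ ⟨ξ, rfl⟩
    exact hptw θ ξ
  have hSc : ∀ θ : G, sS w c o θ ≤ sS w x o₁ θ + sS w y o₂ θ := fun θ => ciSup_le (hptw θ)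
  have hmaj : ∀ l : ℝ, 0 ≤ l → Summable fun θ : G =>
      wG θ ^ l * sS w x o₁ θ + wG θ ^ l * sS w y o₂ θ :=
    fun l hl => (hx.2 l hl).add (hy.2 l hl)
  have hsumc : ∀ l : ℝ, 0 ≤ l → Summable fun θ : G => wG θ ^ l * sS w c o θ := by
    intro l hl
    refine Summable.of_nonneg_of_le
      (fun θ => mul_nonneg (Real.rpow_nonneg (hG0 θ) _) (sS_nonneg w hw0 c o θ))
      (fun θ => ?_) (hmaj l hl)
    calc wG θ ^ l * sS w c o θ ≤ wG θ ^ l * (sS w x o₁ θ + sS w y o₂ θ) :=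
          mul_le_mul_of_nonneg_left (hSc θ) (Real.rpow_nonneg (hG0 θ) _)
      _ = wG θ ^ l * sS w x o₁ θ + wG θ ^ l * sS w y o₂ θ := by ring
  refine ⟨⟨hbddc, hsumc⟩, ?_⟩
  intro l hl
  rw [snorm_def, snorm_def, snorm_def]
  calc (∑' θ : G, wG θ ^ l * sS w c o θ)
      ≤ ∑' θ : G, (wG θ ^ l * sS w x o₁ θ + wG θ ^ l * sS w y o₂ θ) := by
        refine Summable.tsum_le_tsum (fun θ => ?_) (hsumc l hl) (hmaj l hl)
        calc wG θ ^ l * sS w c o θ ≤ wG θ ^ l * (sS w x o₁ θ + sS w y o₂ θ) :=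
              mul_le_mul_of_nonneg_left (hSc θ) (Real.rpow_nonneg (hG0 θ) _)
          _ = wG θ ^ l * sS w x o₁ θ + wG θ ^ l * sS w y o₂ θ := by ring
    _ = (∑' θ : G, wG θ ^ l * sS w x o₁ θ) + ∑' θ : G, wG θ ^ l * sS w y o₂ θ :=
        Summable.tsum_add (hx.2 l hl) (hy.2 l hl)

def shiftEquiv (G : Type*) [Group G] : G × G ≃ G × G where
  toFun p := (p.1 * p.2⁻¹, p.2)
  invFun p := (p.1 * p.2, p.2)
  left_inv p := by simp
  right_inv p := by simp

set_option maxHeartbeats 1000000 in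
lemma comp_bound (w : Ξ → ℝ) (hw : ∀ ξ, 1 ≤ w ξ) (wG : G → ℝ) (hG1 : ∀ g : G, 1 ≤ wG g)
    (hsub : ∀ g h : G, wG (g * h) ≤ wG g * wG h)
    (hkey : ∀ (h : G) (ξ : Ξ) (κ : ℝ), w ξ ^ (-κ) ≤ w (h • ξ) ^ (-κ) * wG h ^ |κ|)
    (a b : G → Ξ → ℂ) (κa κb : ℝ)
    (ha : HasOrder w wG a κa) (hb : HasOrder w wG b κb) :
    HasOrder w wG (compSymb a b) (κa + κb) ∧
      ∀ l, 0 ≤ l → snorm w wG (compSymb a b) (κa + κb) l ≤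
        snorm w wG a κa l * snorm w wG b κb (l + |κa|) := by
  have wpos : ∀ ξ, (0:ℝ) < w ξ := fun ξ => lt_of_lt_of_le one_pos (hw ξ)
  have hw0 : ∀ ξ, (0:ℝ) ≤ w ξ := fun ξ => (wpos ξ).le
  have hGpos : ∀ g : G, (0:ℝ) < wG g := fun g => lt_of_lt_of_le one_pos (hG1 g)
  have hG0 : ∀ g : G, (0:ℝ) ≤ wG g := fun g => (hGpos g).le
  -- pointwise term bound
  have hterm : ∀ (θ h : G) (ξ : Ξ),
      w ξ ^ (-(κa + κb)) * ‖a (θ * h⁻¹) (h • ξ) * b h ξ‖ ≤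
        sS w a κa (θ * h⁻¹) * (wG h ^ |κa| * sS w b κb h) := by
    intro θ h ξ
    have e : w ξ ^ (-(κa + κb)) = w ξ ^ (-κa) * w ξ ^ (-κb) := by
      rw [← Real.rpow_add (wpos ξ)]
      ring_nf
    have h1 : w (h • ξ) ^ (-κa) * ‖a (θ * h⁻¹) (h • ξ)‖ ≤ sS w a κa (θ * h⁻¹) :=
      le_ciSup (ha.1 _) _
    have h2 : w ξ ^ (-κb) * ‖b h ξ‖ ≤ sS w b κb h := le_ciSup (hb.1 _) _
    have h3 := hkey h ξ κa
    calc w ξ ^ (-(κa + κb)) * ‖a (θ * h⁻¹) (h • ξ) * b h ξ‖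
        = (w ξ ^ (-κa) * ‖a (θ * h⁻¹) (h • ξ)‖) * (w ξ ^ (-κb) * ‖b h ξ‖) := by
          rw [e, norm_mul]; ring
      _ ≤ ((w (h • ξ) ^ (-κa) * wG h ^ |κa|) * ‖a (θ * h⁻¹) (h • ξ)‖) *
            (w ξ ^ (-κb) * ‖b h ξ‖) :=
          mul_le_mul_of_nonneg_right (mul_le_mul_of_nonneg_right h3 (norm_nonneg _))
            (mul_nonneg (Real.rpow_nonneg (hw0 ξ) _) (norm_nonneg _))
      _ = ((w (h • ξ) ^ (-κa) * ‖a (θ * h⁻¹) (h • ξ)‖) * (w ξ ^ (-κb) * ‖b h ξ‖)) *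
            wG h ^ |κa| := by ring
      _ ≤ (sS w a κa (θ * h⁻¹) * sS w b κb h) * wG h ^ |κa| := by
          refine mul_le_mul_of_nonneg_right ?_ (Real.rpow_nonneg (hG0 h) _)
          exact mul_le_mul h1 h2
            (mul_nonneg (Real.rpow_nonneg (hw0 ξ) _) (norm_nonneg _))
            (sS_nonneg w hw0 a κa _)
      _ = sS w a κa (θ * h⁻¹) * (wG h ^ |κa| * sS w b κb h) := by ring
  -- summability of the sup-level majorants
  have hSa_sum : Summable fun g : G => sS w a κa g := by
    have h0 := ha.2 0 le_rfl
    exact h0.congr fun g => by rw [Real.rpow_zero, one_mul]; rfl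
  have hCA0 : ∀ g : G, sS w a κa g ≤ ∑' g' : G, sS w a κa g' := fun g =>
    Summable.le_tsum hSa_sum g fun _ _ => sS_nonneg w hw0 a κa _
  have key : ∀ l : ℝ, 0 ≤ l →
      (∀ θ : G, BddAbove (Set.range fun ξ : Ξ => w ξ ^ (-(κa + κb)) * ‖compSymb a b θ ξ‖)) ∧
      (Summable fun θ : G => wG θ ^ l * sS w (compSymb a b) (κa + κb) θ) ∧
      snorm w wG (compSymb a b) (κa + κb) l ≤
        snorm w wG a κa l * snorm w wG b κb (l + |κa|) := by
    intro l hl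
    have hlκ : (0:ℝ) ≤ l + |κa| := by positivity
    -- majorant in h, independent of θ up to the shift
    have hFb : Summable fun h : G => wG h ^ |κa| * sS w b κb h := by
      refine Summable.of_nonneg_of_le
        (fun h => mul_nonneg (Real.rpow_nonneg (hG0 h) _) (sS_nonneg w hw0 b κb _))
        (fun h => ?_) (hb.2 (l + |κa|) hlκ)
      exact mul_le_mul_of_nonneg_right
        (Real.rpow_le_rpow_of_exponent_le (hG1 h) (by linarith [abs_nonneg κa]))
        (sS_nonneg w hw0 b κb _)
    have hFθ : ∀ θ : G, Summable fun h : G =>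
        sS w a κa (θ * h⁻¹) * (wG h ^ |κa| * sS w b κb h) := by
      intro θ
      refine Summable.of_nonneg_of_le
        (fun h => mul_nonneg (sS_nonneg w hw0 a κa _)
          (mul_nonneg (Real.rpow_nonneg (hG0 h) _) (sS_nonneg w hw0 b κb _)))
        (fun h => ?_) (hFb.mul_left (∑' g' : G, sS w a κa g'))
      exact mul_le_mul_of_nonneg_right (hCA0 _)
        (mul_nonneg (Real.rpow_nonneg (hG0 h) _) (sS_nonneg w hw0 b κb _))
    -- summability of the complex series defining compSymb
    have hfsum : ∀ (θ : G) (ξ : Ξ), Summable fun h : G => ‖a (θ * h⁻¹) (h • ξ) * b h ξ‖ := by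
      intro θ ξ
      refine Summable.of_nonneg_of_le (fun h => norm_nonneg _) (fun h => ?_)
        (((hFθ θ)).mul_left (w ξ ^ (κa + κb)))
      have e : ‖a (θ * h⁻¹) (h • ξ) * b h ξ‖ =
          w ξ ^ (κa + κb) * (w ξ ^ (-(κa + κb)) * ‖a (θ * h⁻¹) (h • ξ) * b h ξ‖) := by
        rw [← mul_assoc, ← Real.rpow_add (wpos ξ),
          show κa + κb + -(κa + κb) = 0 by ring, Real.rpow_zero, one_mul]
      rw [e]
      exact mul_le_mul_of_nonneg_left (hterm θ h ξ) (Real.rpow_nonneg (hw0 ξ) _)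
    -- sup bound
    have hsup : ∀ (θ : G) (ξ : Ξ), w ξ ^ (-(κa + κb)) * ‖compSymb a b θ ξ‖ ≤
        ∑' h : G, sS w a κa (θ * h⁻¹) * (wG h ^ |κa| * sS w b κb h) := by
      intro θ ξ
      have e0 : compSymb a b θ ξ = ∑' h : G, a (θ * h⁻¹) (h • ξ) * b h ξ := rfl
      calc w ξ ^ (-(κa + κb)) * ‖compSymb a b θ ξ‖
          ≤ w ξ ^ (-(κa + κb)) * ∑' h : G, ‖a (θ * h⁻¹) (h • ξ) * b h ξ‖ := by
            rw [e0]
            exact mul_le_mul_of_nonneg_left (norm_tsum_le_tsum_norm (hfsum θ ξ))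
              (Real.rpow_nonneg (hw0 ξ) _)
        _ = ∑' h : G, w ξ ^ (-(κa + κb)) * ‖a (θ * h⁻¹) (h • ξ) * b h ξ‖ :=
            (tsum_mul_left).symm
        _ ≤ ∑' h : G, sS w a κa (θ * h⁻¹) * (wG h ^ |κa| * sS w b κb h) :=
            Summable.tsum_le_tsum (fun h => hterm θ h ξ) ((hfsum θ ξ).mul_left _) (hFθ θ)
    have hbddc : ∀ θ : G,
        BddAbove (Set.range fun ξ : Ξ => w ξ ^ (-(κa + κb)) * ‖compSymb a b θ ξ‖) := by
      intro θ
      refine ⟨∑' h : G, sS w a κa (θ * h⁻¹) * (wG h ^ |κa| * sS w b κb h), ?_⟩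
      rintro _ ⟨ξ, rfl⟩
      exact hsup θ ξ
    have hsSc : ∀ θ : G, sS w (compSymb a b) (κa + κb) θ ≤
        ∑' h : G, sS w a κa (θ * h⁻¹) * (wG h ^ |κa| * sS w b κb h) :=
      fun θ => ciSup_le (hsup θ)
    -- the product majorant on G × G
    set U : G × G → ℝ := fun p =>
      (wG p.1 ^ l * sS w a κa p.1) * (wG p.2 ^ (l + |κa|) * sS w b κb p.2) with hUdef
    have hU : Summable U := by
      refine Summable.mul_of_nonneg (ha.2 l hl) (hb.2 (l + |κa|) hlκ) ?_ ?_
      · intro g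
        exact mul_nonneg (Real.rpow_nonneg (hG0 g) _) (sS_nonneg w hw0 a κa _)
      · intro g
        exact mul_nonneg (Real.rpow_nonneg (hG0 g) _) (sS_nonneg w hw0 b κb _)
    have hUe : Summable fun p : G × G => U (shiftEquiv G p) := ((shiftEquiv G).summable_iff (f := U)).mpr hU
    have hUe' : ∀ θ : G, Summable fun h : G => U (shiftEquiv G (θ, h)) := fun θ => hUe.prod_factor θ
    have hV : Summable fun θ : G => ∑' h : G, U (shiftEquiv G (θ, h)) := hUe.prod
    -- termwise comparison
    have hTU : ∀ θ : G, wG θ ^ l *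
        (∑' h : G, sS w a κa (θ * h⁻¹) * (wG h ^ |κa| * sS w b κb h)) ≤
        ∑' h : G, U (shiftEquiv G (θ, h)) := by
      intro θ
      rw [← tsum_mul_left]
      refine Summable.tsum_le_tsum (fun h => ?_) ((hFθ θ).mul_left _) (hUe' θ)
      have h1 : wG θ ^ l ≤ wG (θ * h⁻¹) ^ l * wG h ^ l := by
        rw [← Real.mul_rpow (hG0 _) (hG0 _)]
        refine Real.rpow_le_rpow (hG0 θ) ?_ hl
        have := hsub (θ * h⁻¹) h
        rw [inv_mul_cancel_right] at this
        exact this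
      have h2 : wG h ^ l * wG h ^ |κa| = wG h ^ (l + |κa|) :=
        (Real.rpow_add (hGpos h) _ _).symm
      have hE : U (shiftEquiv G (θ, h)) =
          (wG (θ * h⁻¹) ^ l * sS w a κa (θ * h⁻¹)) *
            (wG h ^ (l + |κa|) * sS w b κb h) := rfl
      calc wG θ ^ l * (sS w a κa (θ * h⁻¹) * (wG h ^ |κa| * sS w b κb h))
          ≤ (wG (θ * h⁻¹) ^ l * wG h ^ l) *
              (sS w a κa (θ * h⁻¹) * (wG h ^ |κa| * sS w b κb h)) :=
            mul_le_mul_of_nonneg_right h1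
              (mul_nonneg (sS_nonneg w hw0 a κa _)
                (mul_nonneg (Real.rpow_nonneg (hG0 h) _) (sS_nonneg w hw0 b κb _)))
        _ = (wG (θ * h⁻¹) ^ l * sS w a κa (θ * h⁻¹)) *
              ((wG h ^ l * wG h ^ |κa|) * sS w b κb h) := by ring
        _ = U (shiftEquiv G (θ, h)) := by rw [h2, hE]
    -- summability of the snorm family for compSymb
    have hsumc : Summable fun θ : G => wG θ ^ l * sS w (compSymb a b) (κa + κb) θ := by
      refine Summable.of_nonneg_of_le
        (fun θ => mul_nonneg (Real.rpow_nonneg (hG0 θ) _)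
          (sS_nonneg w hw0 (compSymb a b) _ θ))
        (fun θ => ?_) hV
      exact le_trans (mul_le_mul_of_nonneg_left (hsSc θ) (Real.rpow_nonneg (hG0 θ) _)) (hTU θ)
    refine ⟨hbddc, hsumc, ?_⟩
    rw [snorm_def]
    calc (∑' θ : G, wG θ ^ l * sS w (compSymb a b) (κa + κb) θ)
        ≤ ∑' θ : G, ∑' h : G, U (shiftEquiv G (θ, h)) := by
          refine Summable.tsum_le_tsum (fun θ => ?_) hsumc hV
          exact le_trans (mul_le_mul_of_nonneg_left (hsSc θ)
            (Real.rpow_nonneg (hG0 θ) _)) (hTU θ)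
      _ = ∑' p : G × G, U (shiftEquiv G p) := (Summable.tsum_prod hUe).symm
      _ = ∑' p : G × G, U p := (shiftEquiv G).tsum_eq U
      _ = (∑' g : G, wG g ^ l * sS w a κa g) *
            ∑' h : G, wG h ^ (l + |κa|) * sS w b κb h := by
          rw [Summable.tsum_prod hU]
          calc (∑' g : G, ∑' h : G, U (g, h))
              = ∑' g : G, (wG g ^ l * sS w a κa g) *
                  ∑' h : G, wG h ^ (l + |κa|) * sS w b κb h :=
                tsum_congr fun g => by simp only [hUdef]; exact tsum_mul_left
            _ = _ := tsum_mul_right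
      _ = snorm w wG a κa l * snorm w wG b κb (l + |κa|) := by rw [snorm_def, snorm_def]
  exact ⟨⟨(key 0 le_rfl).1, fun l hl => (key l hl).2.1⟩, fun l hl => (key l hl).2.2⟩

end Stmt13Aux

/-- if the commutator equation `ad(A^D;Ψ) + A^{NR} = 0` holds, with
`A^{NR}` of order `γ` (and of order `β ≥ γ`), `Ψ` of order `γ − δ` with `δ > γ`, and
`⦀Ψ⦀_l^{(γ−δ)} ≤ s⁻¹ ⦀A^{NR}⦀_l^{(γ)}` for all `l ≥ 0`, then for all `k ≥ 2`,
`⦀ad^k(A^D;Ψ)⦀_l^{(β+γ−δ)} ≤ ((2/s)⦀A^{NR}⦀_{l+|β|+|γ−δ|}^{(γ)})^{k−1} ⦀A^{NR}⦀_{l+|γ−δ|}^{(β)}`. -/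
theorem stmt13 [Nonempty Ξ] [Group G] [MulAction G Ξ]
    (w : Ξ → ℝ) (hw : ∀ ξ, 1 ≤ w ξ)
    (wG : G → ℝ) (hwG : ∀ g : G, wG g = 1 + ⨆ ξ : Ξ, |w (g • ξ) - w ξ|)
    (hbdd : ∀ g : G, BddAbove (Set.range fun ξ : Ξ => |w (g • ξ) - w ξ|))
    (hfree : ∀ (g : G) (ξ : Ξ), g • ξ = ξ → g = 1)
    (aD : Ξ → ℂ) (aNR ψ : G → Ξ → ℂ)
    (β γ δ s : ℝ) (hs : 0 < s) (hγβ : γ ≤ β) (hδγ : γ < δ)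
    (dsym : G → Ξ → ℂ) (hds : ∀ (θ : G) (ξ : Ξ), dsym θ ξ = if θ = 1 then aD ξ else 0)
    (hcomm : ∀ (θ : G) (ξ : Ξ), adSymb dsym ψ θ ξ + aNR θ ξ = 0)
    (hordNRγ : HasOrder w wG aNR γ) (hordNRβ : HasOrder w wG aNR β)
    (hordψ : HasOrder w wG ψ (γ - δ))
    (hψ : ∀ l : ℝ, 0 ≤ l → snorm w wG ψ (γ - δ) l ≤ s⁻¹ * snorm w wG aNR γ l) :
    ∀ k : ℕ, 2 ≤ k → ∀ l : ℝ, 0 ≤ l →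
      snorm w wG ((fun t => adSymb t ψ)^[k] dsym) (β + γ - δ) l ≤
        (2 / s * snorm w wG aNR γ (l + |β| + |γ - δ|)) ^ (k - 1) *
          snorm w wG aNR β (l + |γ - δ|) := by
  classical
  -- weight facts
  have wpos : ∀ ξ, (0:ℝ) < w ξ := fun ξ => lt_of_lt_of_le one_pos (hw ξ)
  have hw0 : ∀ ξ, (0:ℝ) ≤ w ξ := fun ξ => (wpos ξ).le
  have hG1 : ∀ g : G, 1 ≤ wG g := by
    intro g
    rw [hwG g]
    have h0 : (0:ℝ) ≤ ⨆ ξ : Ξ, |w (g • ξ) - w ξ| := Real.iSup_nonneg fun ξ => abs_nonneg _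
    linarith
  have hG0 : ∀ g : G, (0:ℝ) ≤ wG g := fun g => le_trans zero_le_one (hG1 g)
  have habs : ∀ (g : G) (ξ : Ξ), |w (g • ξ) - w ξ| ≤ wG g - 1 := by
    intro g ξ
    have h1 := le_ciSup (hbdd g) ξ
    rw [hwG g]
    linarith
  have hsmul_le : ∀ (g : G) (ξ : Ξ), w (g • ξ) ≤ w ξ * wG g := by
    intro g ξ
    have h := abs_le.mp (habs g ξ)
    nlinarith [hw ξ, hG1 g, h.2]
  have hle_smul : ∀ (g : G) (ξ : Ξ), w ξ ≤ w (g • ξ) * wG g := by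
    intro g ξ
    have h := abs_le.mp (habs g ξ)
    nlinarith [hw (g • ξ), hG1 g, h.1]
  have hsub : ∀ g h : G, wG (g * h) ≤ wG g * wG h := by
    intro g h
    have hsup : (⨆ ξ : Ξ, |w ((g * h) • ξ) - w ξ|) ≤ (wG g - 1) + (wG h - 1) := by
      apply ciSup_le
      intro ξ
      have e : (g * h) • ξ = g • (h • ξ) := mul_smul g h ξ
      calc |w ((g * h) • ξ) - w ξ|
          ≤ |w (g • (h • ξ)) - w (h • ξ)| + |w (h • ξ) - w ξ| := by
            rw [e]; exact abs_sub_le _ _ _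
        _ ≤ (wG g - 1) + (wG h - 1) := add_le_add (habs g (h • ξ)) (habs h ξ)
    rw [hwG (g * h)]
    nlinarith [hG1 g, hG1 h]
  have hkey : ∀ (h : G) (ξ : Ξ) (κ : ℝ), w ξ ^ (-κ) ≤ w (h • ξ) ^ (-κ) * wG h ^ |κ| := by
    intro h ξ κ
    have := Stmt13Aux.rpow_ratio (wpos ξ) (wpos (h • ξ)) (hG1 h)
      (hle_smul h ξ) (hsmul_le h ξ) (-κ)
    rwa [abs_neg] at this
  -- nonnegativity of snorms
  have hnn : ∀ (b : G → Ξ → ℂ) (o l : ℝ), 0 ≤ snorm w wG b o l :=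
    fun b o l => Stmt13Aux.snorm_nonneg w hw0 wG hG0 b o l
  -- ψ at order 0
  have hζ0 : γ - δ ≤ (0:ℝ) := by linarith
  obtain ⟨hordψ0, hψ0⟩ := Stmt13Aux.hasOrder_mono w hw wG hG1 ψ hζ0 hordψ
  -- B 1 = -aNR (in norm)
  have hB1norm : ∀ (θ : G) (ξ : Ξ),
      ‖aNR θ ξ‖ = ‖((fun t => adSymb t ψ)^[1] dsym) θ ξ‖ := by
    intro θ ξ
    rw [Function.iterate_one]
    have h := hcomm θ ξ
    have e : adSymb dsym ψ θ ξ = -aNR θ ξ := by linear_combination h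
    rw [e, norm_neg]
  have hordB1 : HasOrder w wG ((fun t => adSymb t ψ)^[1] dsym) β :=
    Stmt13Aux.hasOrder_congr hB1norm hordNRβ
  have hsnB1 : ∀ o l : ℝ, snorm w wG ((fun t => adSymb t ψ)^[1] dsym) o l
      = snorm w wG aNR o l :=
    fun o l => (Stmt13Aux.snorm_congr hB1norm o l).symm
  -- pointwise triangle bound for adSymb
  have hadpt : ∀ (x : G → Ξ → ℂ) (θ : G) (ξ : Ξ),
      ‖adSymb x ψ θ ξ‖ ≤ ‖compSymb x ψ θ ξ‖ + ‖compSymb ψ x θ ξ‖ := by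
    intro x θ ξ
    have : adSymb x ψ θ ξ = Complex.I * (compSymb x ψ θ ξ - compSymb ψ x θ ξ) := rfl
    rw [this, norm_mul, Complex.norm_I, one_mul]
    exact norm_sub_le _ _
  -- main induction
  have main : ∀ n : ℕ,
      HasOrder w wG ((fun t => adSymb t ψ)^[n + 2] dsym) (β + γ - δ) ∧
      ∀ l : ℝ, 0 ≤ l →
        snorm w wG ((fun t => adSymb t ψ)^[n + 2] dsym) (β + γ - δ) l ≤
          (2 / s * snorm w wG aNR γ (l + |β| + |γ - δ|)) ^ (n + 1) *
            snorm w wG aNR β (l + |γ - δ|) := by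
    intro n
    induction n with
    | zero =>
      have hit : (fun t => adSymb t ψ)^[0 + 2] dsym
          = adSymb ((fun t => adSymb t ψ)^[1] dsym) ψ :=
        Function.iterate_succ_apply' (fun t => adSymb t ψ) 1 dsym
      obtain ⟨hc1, hb1⟩ := Stmt13Aux.comp_bound w hw wG hG1 hsub hkey
        ((fun t => adSymb t ψ)^[1] dsym) ψ β (γ - δ) hordB1 hordψ
      obtain ⟨hc2, hb2⟩ := Stmt13Aux.comp_bound w hw wG hG1 hsub hkey
        ψ ((fun t => adSymb t ψ)^[1] dsym) (γ - δ) β hordψ hordB1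
      obtain ⟨hcord, hcb⟩ := Stmt13Aux.snorm_dom w hw wG hG1
        (adSymb ((fun t => adSymb t ψ)^[1] dsym) ψ)
        (compSymb ((fun t => adSymb t ψ)^[1] dsym) ψ)
        (compSymb ψ ((fun t => adSymb t ψ)^[1] dsym))
        (β + γ - δ) (β + (γ - δ)) ((γ - δ) + β)
        (by linarith) (by linarith) hc1 hc2
        (hadpt ((fun t => adSymb t ψ)^[1] dsym))
      rw [hit]
      refine ⟨hcord, ?_⟩
      intro l hl
      have hlβ : (0:ℝ) ≤ l + |β| := by positivity
      have hlζ : (0:ℝ) ≤ l + |γ - δ| := by positivity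
      have hlL : (0:ℝ) ≤ l + |β| + |γ - δ| := by positivity
      -- abbreviations
      have n1 : snorm w wG aNR β l ≤ snorm w wG aNR β (l + |γ - δ|) :=
        Stmt13Aux.snorm_mono_l w hw0 wG hG1 aNR β (by linarith [abs_nonneg (γ - δ)])
          (hordNRβ.2 _ hlζ)
      have n3 : snorm w wG ψ (γ - δ) (l + |β|) ≤ s⁻¹ * snorm w wG aNR γ (l + |β|) :=
        hψ _ hlβ
      have n4 : snorm w wG aNR γ (l + |β|) ≤ snorm w wG aNR γ (l + |β| + |γ - δ|) :=
        Stmt13Aux.snorm_mono_l w hw0 wG hG1 aNR γ (by linarith [abs_nonneg (γ - δ)])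
          (hordNRγ.2 _ hlL)
      have n5 : snorm w wG ψ (γ - δ) l ≤ s⁻¹ * snorm w wG aNR γ (l + |β| + |γ - δ|) := by
        refine (hψ l hl).trans ?_
        have : snorm w wG aNR γ l ≤ snorm w wG aNR γ (l + |β| + |γ - δ|) :=
          Stmt13Aux.snorm_mono_l w hw0 wG hG1 aNR γ
            (by linarith [abs_nonneg (γ - δ), abs_nonneg β]) (hordNRγ.2 _ hlL)
        exact mul_le_mul_of_nonneg_left this (inv_nonneg.mpr hs.le)
      have e1 : snorm w wG (compSymb ((fun t => adSymb t ψ)^[1] dsym) ψ) (β + (γ - δ)) l ≤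
          (s⁻¹ * snorm w wG aNR γ (l + |β| + |γ - δ|)) *
            snorm w wG aNR β (l + |γ - δ|) := by
        refine (hb1 l hl).trans ?_
        rw [hsnB1]
        calc snorm w wG aNR β l * snorm w wG ψ (γ - δ) (l + |β|)
            ≤ snorm w wG aNR β (l + |γ - δ|) *
                (s⁻¹ * snorm w wG aNR γ (l + |β| + |γ - δ|)) := by
              refine mul_le_mul n1 (n3.trans ?_) (hnn _ _ _) (hnn _ _ _)
              exact mul_le_mul_of_nonneg_left n4 (inv_nonneg.mpr hs.le)
          _ = (s⁻¹ * snorm w wG aNR γ (l + |β| + |γ - δ|)) *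
                snorm w wG aNR β (l + |γ - δ|) := by ring
      have e2 : snorm w wG (compSymb ψ ((fun t => adSymb t ψ)^[1] dsym)) ((γ - δ) + β) l ≤
          (s⁻¹ * snorm w wG aNR γ (l + |β| + |γ - δ|)) *
            snorm w wG aNR β (l + |γ - δ|) := by
        refine (hb2 l hl).trans ?_
        rw [hsnB1]
        exact mul_le_mul n5 le_rfl (hnn _ _ _)
          (mul_nonneg (inv_nonneg.mpr hs.le) (hnn _ _ _))
      have hfinal := (hcb l hl).trans (add_le_add e1 e2)
      have egoal : (2 / s * snorm w wG aNR γ (l + |β| + |γ - δ|)) ^ (0 + 1) *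
          snorm w wG aNR β (l + |γ - δ|) =
          (s⁻¹ * snorm w wG aNR γ (l + |β| + |γ - δ|)) *
            snorm w wG aNR β (l + |γ - δ|) +
          (s⁻¹ * snorm w wG aNR γ (l + |β| + |γ - δ|)) *
            snorm w wG aNR β (l + |γ - δ|) := by
        rw [pow_one, div_eq_mul_inv]
        ring
      rw [egoal]
      exact hfinal
    | succ m ih =>
      obtain ⟨ihord, ihbound⟩ := ih
      have hit : (fun t => adSymb t ψ)^[m + 1 + 2] dsym
          = adSymb ((fun t => adSymb t ψ)^[m + 2] dsym) ψ :=
        Function.iterate_succ_apply' (fun t => adSymb t ψ) (m + 2) dsym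
      obtain ⟨hc1, hb1⟩ := Stmt13Aux.comp_bound w hw wG hG1 hsub hkey
        ((fun t => adSymb t ψ)^[m + 2] dsym) ψ (β + γ - δ) (γ - δ) ihord hordψ
      obtain ⟨hc2, hb2⟩ := Stmt13Aux.comp_bound w hw wG hG1 hsub hkey
        ψ ((fun t => adSymb t ψ)^[m + 2] dsym) 0 (β + γ - δ) hordψ0 ihord
      obtain ⟨hcord, hcb⟩ := Stmt13Aux.snorm_dom w hw wG hG1
        (adSymb ((fun t => adSymb t ψ)^[m + 2] dsym) ψ)
        (compSymb ((fun t => adSymb t ψ)^[m + 2] dsym) ψ)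
        (compSymb ψ ((fun t => adSymb t ψ)^[m + 2] dsym))
        (β + γ - δ) ((β + γ - δ) + (γ - δ)) (0 + (β + γ - δ))
        (by linarith) (by linarith) hc1 hc2
        (hadpt ((fun t => adSymb t ψ)^[m + 2] dsym))
      rw [hit]
      refine ⟨hcord, ?_⟩
      intro l hl
      have hlζ : (0:ℝ) ≤ l + |γ - δ| := by positivity
      have hlL : (0:ℝ) ≤ l + |β| + |γ - δ| := by positivity
      have hlκ : (0:ℝ) ≤ l + |β + γ - δ| := by positivity
      have habs2 : |β + γ - δ| ≤ |β| + |γ - δ| := by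
        calc |β + γ - δ| = |β + (γ - δ)| := by ring_nf
          _ ≤ |β| + |γ - δ| := abs_add_le _ _
      have hψ1 : snorm w wG ψ (γ - δ) (l + |β + γ - δ|) ≤
          s⁻¹ * snorm w wG aNR γ (l + |β| + |γ - δ|) := by
        refine (hψ _ hlκ).trans ?_
        refine mul_le_mul_of_nonneg_left ?_ (inv_nonneg.mpr hs.le)
        exact Stmt13Aux.snorm_mono_l w hw0 wG hG1 aNR γ (by linarith)
          (hordNRγ.2 _ hlL)
      have hψ2 : snorm w wG ψ 0 l ≤
          s⁻¹ * snorm w wG aNR γ (l + |β| + |γ - δ|) := by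
        refine ((hψ0 l hl).trans (hψ l hl)).trans ?_
        refine mul_le_mul_of_nonneg_left ?_ (inv_nonneg.mpr hs.le)
        exact Stmt13Aux.snorm_mono_l w hw0 wG hG1 aNR γ
          (by linarith [abs_nonneg (γ - δ), abs_nonneg β]) (hordNRγ.2 _ hlL)
      have hD := ihbound l hl
      have hDnn : (0:ℝ) ≤ snorm w wG ((fun t => adSymb t ψ)^[m + 2] dsym) (β + γ - δ) l :=
        hnn _ _ _
      have hRnn : (0:ℝ) ≤ (2 / s * snorm w wG aNR γ (l + |β| + |γ - δ|)) ^ (m + 1) *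
          snorm w wG aNR β (l + |γ - δ|) :=
        mul_nonneg (pow_nonneg (mul_nonneg (by positivity) (hnn _ _ _)) _) (hnn _ _ _)
      have e1 : snorm w wG (compSymb ((fun t => adSymb t ψ)^[m + 2] dsym) ψ)
          ((β + γ - δ) + (γ - δ)) l ≤
          ((2 / s * snorm w wG aNR γ (l + |β| + |γ - δ|)) ^ (m + 1) *
            snorm w wG aNR β (l + |γ - δ|)) *
          (s⁻¹ * snorm w wG aNR γ (l + |β| + |γ - δ|)) := by
        refine (hb1 l hl).trans ?_
        exact mul_le_mul hD hψ1 (hnn _ _ _) hRnn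
      have e2 : snorm w wG (compSymb ψ ((fun t => adSymb t ψ)^[m + 2] dsym))
          (0 + (β + γ - δ)) l ≤
          (s⁻¹ * snorm w wG aNR γ (l + |β| + |γ - δ|)) *
          ((2 / s * snorm w wG aNR γ (l + |β| + |γ - δ|)) ^ (m + 1) *
            snorm w wG aNR β (l + |γ - δ|)) := by
        refine (hb2 l hl).trans ?_
        have e0 : l + |(0:ℝ)| = l := by simp
        rw [e0]
        exact mul_le_mul hψ2 hD hDnn
          (mul_nonneg (inv_nonneg.mpr hs.le) (hnn _ _ _))
      have hfinal := (hcb l hl).trans (add_le_add e1 e2)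
      have egoal : (2 / s * snorm w wG aNR γ (l + |β| + |γ - δ|)) ^ (m + 1 + 1) *
          snorm w wG aNR β (l + |γ - δ|) =
          ((2 / s * snorm w wG aNR γ (l + |β| + |γ - δ|)) ^ (m + 1) *
            snorm w wG aNR β (l + |γ - δ|)) *
          (s⁻¹ * snorm w wG aNR γ (l + |β| + |γ - δ|)) +
          (s⁻¹ * snorm w wG aNR γ (l + |β| + |γ - δ|)) *
          ((2 / s * snorm w wG aNR γ (l + |β| + |γ - δ|)) ^ (m + 1) *
            snorm w wG aNR β (l + |γ - δ|)) := by
        rw [pow_succ, div_eq_mul_inv]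
        ring
      rw [egoal]
      exact hfinal
  intro k hk l hl
  obtain ⟨n, rfl⟩ : ∃ n, k = n + 2 := ⟨k - 2, by omega⟩
  have h := (main n).2 l hl
  have : n + 2 - 1 = n + 1 := rfl
  rw [this]
  exact h
end
end
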